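/- arXiv:1403.1224 — 8 statements merged into one kernel-verified Lean document; each statement's English description precedes it below -/
import Mathlib

section
/- The family {ψ^{A,B}_{(n,m)} : n,m ∈ ℤ} is a tight frame for L²(ℝ) with frame constant 2Lχ; that is, for every f ∈ L²(ℝ) one has ∑_{n∈ℤ} ∑_{m∈ℤ} |⟨ψ^{A,B}_{(n,m)}, f⟩|² = 2·L·χ·‖f‖²_{L²(ℝ)}. -/
open MeasureTheory Complex Set

lemma parseval_interval (T a : ℝ) (hT : 0 < T) (g : ℝ → ℂ)
    (hg : MemLp g 2 (volume : Measure ℝ))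
    (h0 : ∀ᵐ x : ℝ ∂volume, x ∉ Set.Ioc a (a + T) → g x = 0) :
    ∑' m : ℤ, ‖∫ x : ℝ, (fourier (T := T) (-m) x : ℂ) * g x‖ ^ 2
      = T * ∫ x : ℝ, ‖g x‖ ^ 2 := by
  haveI : Fact (0 < T) := ⟨hT⟩
  -- replace `g` by a measurable representative vanishing outside the interval
  set g₁ : ℝ → ℂ := (Set.Ioc a (a + T)).indicator (hg.1.mk g) with hg₁def
  have hmeas₁ : Measurable g₁ := hg.1.stronglyMeasurable_mk.measurable.indicator measurableSet_Ioc
  have haeeq : g =ᵐ[volume] g₁ := by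
    filter_upwards [h0, hg.1.ae_eq_mk] with x hx hx2
    by_cases h : x ∈ Set.Ioc a (a + T)
    · simp [hg₁def, Set.indicator_of_mem h, ← hx2]
    · simp [hg₁def, Set.indicator_of_notMem h, hx h]
  have hmem₁ : MemLp g₁ 2 (volume : Measure ℝ) := hg.ae_eq haeeq
  have h0₁ : ∀ x ∉ Set.Ioc a (a + T), g₁ x = 0 := fun x hx =>
    Set.indicator_of_notMem hx _
  -- reduce to `g₁`
  have hint : (∫ x : ℝ, ‖g x‖ ^ 2) = ∫ x : ℝ, ‖g₁ x‖ ^ 2 :=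
    integral_congr_ae (haeeq.mono fun x hx => by simp only [hx])
  have hcoe : ∀ m : ℤ, (∫ x : ℝ, (fourier (T := T) (-m) x : ℂ) * g x)
      = ∫ x : ℝ, (fourier (T := T) (-m) x : ℂ) * g₁ x := fun m =>
    integral_congr_ae (haeeq.mono fun x hx => by simp only [hx])
  simp_rw [hcoe, hint]


  -- now the core argument
  set G : AddCircle T → ℂ := AddCircle.liftIoc T a g₁ with hGdef
  have hGmeas : Measurable G := by
    have : G = (g₁ ∘ (Subtype.val : Set.Ioc a (a + T) → ℝ)) ∘
        (AddCircle.measurableEquivIoc T a) := rfl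
    rw [this]
    exact (hmeas₁.comp measurable_subtype_coe).comp
      (AddCircle.measurableEquivIoc T a).measurable
  have hGg : ∀ x ∈ Set.Ioc a (a + T), G ↑x = g₁ x := fun x hx =>
    AddCircle.liftIoc_coe_apply hx
  have hmp := AddCircle.measurePreserving_mk T a
  have hsq_int : Integrable (fun x => ‖g₁ x‖ ^ 2) volume :=
    (memLp_two_iff_integrable_sq_norm hmem₁.1).mp hmem₁
  have hGsq_int : Integrable (fun b : AddCircle T => ‖G b‖ ^ 2) volume := by
    rw [← hmp.integrable_comp (hGmeas.norm.pow_const 2).aestronglyMeasurable]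
    refine (hsq_int.restrict (s := Set.Ioc a (a + T))).congr ?_
    refine (ae_restrict_iff' measurableSet_Ioc).mpr (Filter.Eventually.of_forall fun x hx => ?_)
    simp only [Function.comp_apply, hGg x hx]
  have hGmem : MemLp G 2 (volume : Measure (AddCircle T)) :=
    (memLp_two_iff_integrable_sq_norm hGmeas.aestronglyMeasurable).mpr hGsq_int
  have hTne : ENNReal.ofReal T ≠ 0 := by simp [hT, hT.le]
  have hGmemHaar : MemLp G 2 (AddCircle.haarAddCircle : Measure (AddCircle T)) := by
    have h := hGmem.smul_measure (c := (ENNReal.ofReal T)⁻¹) (by simp [hTne])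
    rwa [AddCircle.volume_eq_smul_haarAddCircle, smul_smul,
      ENNReal.inv_mul_cancel hTne ENNReal.ofReal_ne_top, one_smul] at h
  set Glp : Lp ℂ 2 (AddCircle.haarAddCircle : Measure (AddCircle T)) :=
    hGmemHaar.toLp G with hGlpdef
  have hcoeff : ∀ m : ℤ, fourierCoeff (⇑Glp) m = fourierCoeff G m := fun m =>
    integral_congr_ae (by
      filter_upwards [hGmemHaar.coeFn_toLp] with t ht
      rw [ht])
  -- Parseval
  have hParseval := tsum_sq_fourierCoeff Glp
  have hRhs : ∫ t : AddCircle T, ‖Glp t‖ ^ 2 ∂AddCircle.haarAddCircle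
      = (1 / T) * ∫ x : ℝ, ‖g₁ x‖ ^ 2 := by
    have h1 : ∫ t : AddCircle T, ‖Glp t‖ ^ 2 ∂AddCircle.haarAddCircle
        = ∫ t : AddCircle T, ‖G t‖ ^ 2 ∂AddCircle.haarAddCircle :=
      integral_congr_ae (by
        filter_upwards [hGmemHaar.coeFn_toLp] with t ht
        rw [ht])
    have h2 : ∫ t : AddCircle T, ‖G t‖ ^ 2 ∂(volume : Measure (AddCircle T))
        = T * ∫ t : AddCircle T, ‖G t‖ ^ 2 ∂AddCircle.haarAddCircle := by
      rw [AddCircle.volume_eq_smul_haarAddCircle, integral_smul_measure,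
        ENNReal.toReal_ofReal hT.le, smul_eq_mul]
    have h3 : ∫ t : AddCircle T, ‖G t‖ ^ 2 ∂(volume : Measure (AddCircle T))
        = ∫ x in Set.Ioc a (a + T), ‖g₁ x‖ ^ 2 := by
      rw [← AddCircle.integral_preimage T a (fun t => ‖G t‖ ^ 2)]
      exact setIntegral_congr_fun measurableSet_Ioc fun x hx => by rw [hGg x hx]
    have h4 : ∫ x in Set.Ioc a (a + T), ‖g₁ x‖ ^ 2 = ∫ x : ℝ, ‖g₁ x‖ ^ 2 :=
      setIntegral_eq_integral_of_forall_compl_eq_zero fun x hx => by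
        rw [h0₁ x hx]; simp
    have h5 : ∫ t : AddCircle T, ‖G t‖ ^ 2 ∂AddCircle.haarAddCircle
        = (1 / T) * ∫ t : AddCircle T, ‖G t‖ ^ 2 ∂(volume : Measure (AddCircle T)) := by
      rw [h2]; field_simp
    rw [h1, h5, h3, h4]
  have hC : ∀ m : ℤ, (∫ x : ℝ, (fourier (T := T) (-m) x : ℂ) * g₁ x)
      = T • fourierCoeff G m := by
    intro m
    rw [fourierCoeff_eq_intervalIntegral G m a, ← smul_assoc, smul_eq_mul,
      mul_one_div_cancel hT.ne', one_smul]
    rw [intervalIntegral.integral_of_le (by linarith : a ≤ a + T)]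
    rw [← setIntegral_eq_integral_of_forall_compl_eq_zero
      (fun x (hx : x ∉ Set.Ioc a (a + T)) => by rw [h0₁ x hx, mul_zero])]
    refine setIntegral_congr_fun measurableSet_Ioc fun x hx => ?_
    rw [hGg x hx, smul_eq_mul]
  calc ∑' m : ℤ, ‖∫ x : ℝ, (fourier (T := T) (-m) x : ℂ) * g₁ x‖ ^ 2
      = ∑' m : ℤ, T ^ 2 * ‖fourierCoeff (⇑Glp) m‖ ^ 2 := by
        congr 1; funext m
        rw [hC m, hcoeff m, norm_smul, mul_pow, Real.norm_eq_abs, abs_of_pos hT]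
    _ = T ^ 2 * ((1 / T) * ∫ x : ℝ, ‖g₁ x‖ ^ 2) := by
        rw [tsum_mul_left, hParseval, hRhs]
    _ = T * ∫ x : ℝ, ‖g₁ x‖ ^ 2 := by
        field_simp

theorem frames_heisenberg_tight
    (A B L q₀ p₀ χ : ℝ)
    (hA : A ≠ 0) (hL : 0 < L) (hq₀ : q₀ ≠ 0) (hχ : 0 < χ)
    (hp₀ : p₀ = Real.pi / (A * L))
    (hq₀p₀ : |q₀ * p₀| < 2 * Real.pi)
    (ψ : Lp ℂ 2 (volume : Measure ℝ)) (hψ : ψ ≠ 0)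
    (hsupp : ∀ᵐ x : ℝ ∂volume, L < |x| → ψ x = 0)
    (hχsum : ∀ᵐ x : ℝ ∂volume, ∑' n : ℤ, ‖ψ (x + n * q₀)‖ ^ 2 = χ)
    (ψAB : ℤ → ℤ → Lp ℂ 2 (volume : Measure ℝ))
    (hψAB : ∀ n m : ℤ, ⇑(ψAB n m) =ᵐ[volume] fun x : ℝ =>
      Complex.exp (Complex.I * Complex.ofReal (A * m * n * q₀ * p₀ / 2)) *
      Complex.exp (Complex.I * Complex.ofReal (B * m * p₀)) *
      Complex.exp (Complex.I * Complex.ofReal (Real.pi * m * x / L)) *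
      ψ (x + n * q₀))
    (f : Lp ℂ 2 (volume : Measure ℝ)) :
    ∑' n : ℤ, ∑' m : ℤ, ‖(inner ℂ (ψAB n m) f : ℂ)‖ ^ 2 = 2 * L * χ * ‖f‖ ^ 2 := by
  have hπ := Real.pi_pos
  set T : ℝ := 2 * L with hTdef
  have hT : 0 < T := by positivity
  haveI : Fact (0 < T) := ⟨hT⟩
  -- a.e. bound on ψ
  have hψb : ∀ᵐ x : ℝ ∂volume, ‖(ψ : ℝ → ℂ) x‖ ≤ Real.sqrt χ := by
    filter_upwards [hχsum] with x hx
    have hs : Summable fun n : ℤ => ‖(ψ : ℝ → ℂ) (x + n * q₀)‖ ^ 2 := by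
      by_contra hns
      rw [tsum_eq_zero_of_not_summable hns] at hx
      exact hχ.ne hx
    have h0 : ‖(ψ : ℝ → ℂ) (x + (0 : ℤ) * q₀)‖ ^ 2 ≤ χ := hx ▸ hs.le_tsum 0 fun n _ => sq_nonneg _
    simp only [Int.cast_zero, zero_mul, add_zero] at h0
    exact (Real.le_sqrt (norm_nonneg _) hχ.le).mpr h0
  have hfmem : Integrable (fun x : ℝ => ‖(f : ℝ → ℂ) x‖ ^ 2) volume :=
    (memLp_two_iff_integrable_sq_norm (Lp.aestronglyMeasurable f)).mp (Lp.memLp f)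
  -- the per-`n` computation
  have key : ∀ n : ℤ, (∑' m : ℤ, ‖(inner ℂ (ψAB n m) f : ℂ)‖ ^ 2)
      = T * ∫ x : ℝ, ‖(ψ : ℝ → ℂ) (x + (n : ℝ) * q₀)‖ ^ 2 * ‖(f : ℝ → ℂ) x‖ ^ 2 := by
    intro n
    set c : ℝ := (n : ℝ) * q₀ with hcdef
    set g : ℝ → ℂ := fun x => (starRingEnd ℂ) ((ψ : ℝ → ℂ) (x + c)) * (f : ℝ → ℂ) x with hgdef
    have hmpa : MeasurePreserving (fun x : ℝ => x + c) volume volume :=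
      measurePreserving_add_right volume c
    have hψn : AEStronglyMeasurable (fun x : ℝ => (ψ : ℝ → ℂ) (x + c)) volume :=
      (Lp.aestronglyMeasurable ψ).comp_quasiMeasurePreserving hmpa.quasiMeasurePreserving
    have hgmeas : AEStronglyMeasurable g volume :=
      (Complex.continuous_conj.comp_aestronglyMeasurable hψn).mul (Lp.aestronglyMeasurable f)
    have hbn : ∀ᵐ x : ℝ ∂volume, ‖(ψ : ℝ → ℂ) (x + c)‖ ≤ Real.sqrt χ :=
      hmpa.quasiMeasurePreserving.ae hψb
    have hgmem : MemLp g 2 (volume : Measure ℝ) := by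
      refine MemLp.of_le_mul (c := Real.sqrt χ) (Lp.memLp f) hgmeas ?_
      filter_upwards [hbn] with x hx
      simp only [hgdef, norm_mul, RCLike.norm_conj]
      exact mul_le_mul_of_nonneg_right hx (norm_nonneg _)
    set a : ℝ := -c - L with hadef
    have hsupp' : ∀ᵐ x : ℝ ∂volume, x ∉ Set.Ioc a (a + T) → g x = 0 := by
      have h1 : ∀ᵐ x : ℝ ∂volume, L < |x + c| → (ψ : ℝ → ℂ) (x + c) = 0 :=
        hmpa.quasiMeasurePreserving.ae hsupp
      have h2 : ∀ᵐ x : ℝ ∂volume, x ≠ a := by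
        rw [ae_iff]
        simp only [ne_eq, not_not, Set.setOf_eq_eq_singleton]
        exact measure_singleton a
      filter_upwards [h1, h2] with x h1x h2x hx
      have hlt : L < |x + c| := by
        simp only [Set.mem_Ioc, not_and, not_le] at hx
        rcases lt_or_ge a x with h | h
        · have := hx h
          rw [abs_of_pos (by simp only [hadef, hTdef] at this ⊢; linarith)]
          simp only [hadef, hTdef] at this; linarith
        · have hxa : x < a := lt_of_le_of_ne h h2x
          rw [abs_of_neg (by simp only [hadef] at hxa ⊢; linarith)]
          simp only [hadef] at hxa; linarith
      simp only [hgdef, h1x hlt, map_zero, zero_mul]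
    -- the characters
    have hfour : ∀ (m : ℤ) (x : ℝ), (fourier (T := T) (-m) (x : AddCircle T) : ℂ)
        = Complex.exp (-(Complex.I * Complex.ofReal (Real.pi * (m : ℝ) * x / L))) := by
      intro m x
      have hTc : (T : ℂ) = 2 * (L : ℂ) := by rw [hTdef]; push_cast; ring
      rw [fourier_coe_apply, hTc]
      congr 1
      have hL0 : (L : ℂ) ≠ 0 := by exact_mod_cast hL.ne'
      push_cast
      field_simp
    have hinner : ∀ m : ℤ, ‖(inner ℂ (ψAB n m) f : ℂ)‖
        = ‖∫ x : ℝ, (fourier (T := T) (-m) (x : AddCircle T) : ℂ) * g x‖ := by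
      intro m
      set C : ℂ := Complex.exp (-(Complex.I * Complex.ofReal (A * m * n * q₀ * p₀ / 2))) *
        Complex.exp (-(Complex.I * Complex.ofReal (B * m * p₀))) with hCdef
      have hCnorm : ‖C‖ = 1 := by
        simp [hCdef, Complex.norm_exp]
      have hid : (inner ℂ (ψAB n m) f : ℂ)
          = C * ∫ x : ℝ, (fourier (T := T) (-m) (x : AddCircle T) : ℂ) * g x := by
        rw [MeasureTheory.L2.inner_def, ← integral_const_mul]
        refine integral_congr_ae ?_
        filter_upwards [hψAB n m] with x hx
        rw [RCLike.inner_apply, hx, hfour m x]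
        simp only [hgdef, hCdef, map_mul, ← Complex.exp_conj, Complex.conj_I, Complex.conj_ofReal,
          neg_mul]
        ring
      rw [hid, norm_mul, hCnorm, one_mul]
    calc (∑' m : ℤ, ‖(inner ℂ (ψAB n m) f : ℂ)‖ ^ 2)
        = ∑' m : ℤ, ‖∫ x : ℝ, (fourier (T := T) (-m) (x : AddCircle T) : ℂ) * g x‖ ^ 2 := by
          congr 1; funext m; rw [hinner m]
      _ = T * ∫ x : ℝ, ‖g x‖ ^ 2 := parseval_interval T a hT g hgmem hsupp'
      _ = T * ∫ x : ℝ, ‖(ψ : ℝ → ℂ) (x + c)‖ ^ 2 * ‖(f : ℝ → ℂ) x‖ ^ 2 := by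
          congr 1
          refine integral_congr_ae (Filter.Eventually.of_forall fun x => ?_)
          simp [hgdef, norm_mul, mul_pow, RCLike.norm_conj]
  -- norm of f
  have hnormf : ‖f‖ ^ 2 = ∫ x : ℝ, ‖(f : ℝ → ℂ) x‖ ^ 2 := by
    have H₃ := congr_arg RCLike.re (@MeasureTheory.L2.inner_def ℝ ℂ ℂ _ _ _ _ _ f f)
    rw [← integral_re (L2.integrable_inner f f)] at H₃
    simp only [← norm_sq_eq_re_inner] at H₃
    exact H₃
  -- measurability of the integrands
  have hψn : ∀ n : ℤ, AEStronglyMeasurable (fun x : ℝ => (ψ : ℝ → ℂ) (x + (n : ℝ) * q₀)) volume :=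
    fun n => (Lp.aestronglyMeasurable ψ).comp_quasiMeasurePreserving
      (measurePreserving_add_right volume ((n : ℝ) * q₀)).quasiMeasurePreserving
  have hvmeas : ∀ n : ℤ, AEMeasurable
      (fun x : ℝ => ‖(ψ : ℝ → ℂ) (x + (n : ℝ) * q₀)‖ ^ 2 * ‖(f : ℝ → ℂ) x‖ ^ 2) volume := fun n =>
    (((hψn n).norm.aemeasurable.pow_const 2).mul
      ((Lp.aestronglyMeasurable f).norm.aemeasurable.pow_const 2))
  -- rewrite each integral as a lower integral
  set FE : ℤ → ℝ → ENNReal := fun n x =>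
    ENNReal.ofReal (‖(ψ : ℝ → ℂ) (x + (n : ℝ) * q₀)‖ ^ 2 * ‖(f : ℝ → ℂ) x‖ ^ 2) with hFEdef
  have hJ : ∀ n : ℤ, (∫ x : ℝ, ‖(ψ : ℝ → ℂ) (x + (n : ℝ) * q₀)‖ ^ 2 * ‖(f : ℝ → ℂ) x‖ ^ 2)
      = (∫⁻ x : ℝ, FE n x).toReal := fun n =>
    integral_eq_lintegral_of_nonneg_ae (Filter.Eventually.of_forall fun x => by positivity)
      (hvmeas n).aestronglyMeasurable
  have hswap : (∑' n : ℤ, ∫⁻ x : ℝ, FE n x) = ∫⁻ x : ℝ, ∑' n : ℤ, FE n x :=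
    (lintegral_tsum fun n => (hvmeas n).ennreal_ofReal).symm
  have hae_eq : ∀ᵐ x : ℝ ∂volume, (∑' n : ℤ, FE n x)
      = ENNReal.ofReal (χ * ‖(f : ℝ → ℂ) x‖ ^ 2) := by
    filter_upwards [hχsum] with x hx
    have hs : Summable fun n : ℤ => ‖(ψ : ℝ → ℂ) (x + n * q₀)‖ ^ 2 := by
      by_contra hns
      rw [tsum_eq_zero_of_not_summable hns] at hx
      exact hχ.ne hx
    have hs2 : Summable fun n : ℤ =>
        ‖(ψ : ℝ → ℂ) (x + (n : ℝ) * q₀)‖ ^ 2 * ‖(f : ℝ → ℂ) x‖ ^ 2 :=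
      hs.mul_right _
    rw [hFEdef, ← ENNReal.ofReal_tsum_of_nonneg (fun n => by positivity) hs2]
    congr 1
    rw [tsum_mul_right, hx, mul_comm]
  have hLf : (∫⁻ x : ℝ, ENNReal.ofReal (‖(f : ℝ → ℂ) x‖ ^ 2)) ≠ ⊤ := by
    have h := hfmem.hasFiniteIntegral
    rw [hasFiniteIntegral_iff_ofReal (Filter.Eventually.of_forall fun x => by positivity)] at h
    exact h.ne
  have htot : (∑' n : ℤ, ∫⁻ x : ℝ, FE n x)
      = ENNReal.ofReal χ * ∫⁻ x : ℝ, ENNReal.ofReal (‖(f : ℝ → ℂ) x‖ ^ 2) := by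
    rw [hswap, lintegral_congr_ae hae_eq]
    simp_rw [fun x : ℝ => ENNReal.ofReal_mul (p := χ) (q := ‖(f : ℝ → ℂ) x‖ ^ 2) hχ.le]
    rw [lintegral_const_mul' _ _ ENNReal.ofReal_ne_top]
  have htotne : (∑' n : ℤ, ∫⁻ x : ℝ, FE n x) ≠ ⊤ := by
    rw [htot]
    exact ENNReal.mul_ne_top ENNReal.ofReal_ne_top hLf
  have hterm_ne : ∀ n : ℤ, (∫⁻ x : ℝ, FE n x) ≠ ⊤ := fun n =>
    ne_top_of_le_ne_top htotne (ENNReal.le_tsum n)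
  have hfint : (∫ x : ℝ, ‖(f : ℝ → ℂ) x‖ ^ 2)
      = (∫⁻ x : ℝ, ENNReal.ofReal (‖(f : ℝ → ℂ) x‖ ^ 2)).toReal :=
    integral_eq_lintegral_of_nonneg_ae (Filter.Eventually.of_forall fun x => by positivity)
      ((Lp.aestronglyMeasurable f).norm.aemeasurable.pow_const 2).aestronglyMeasurable
  calc ∑' n : ℤ, ∑' m : ℤ, ‖(inner ℂ (ψAB n m) f : ℂ)‖ ^ 2
      = ∑' n : ℤ, T * ((∫⁻ x : ℝ, FE n x).toReal) := by
        congr 1; funext n; rw [key n, hJ n]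
    _ = T * ∑' n : ℤ, ((∫⁻ x : ℝ, FE n x).toReal) := tsum_mul_left
    _ = T * ((∑' n : ℤ, ∫⁻ x : ℝ, FE n x).toReal) := by
        rw [ENNReal.tsum_toReal_eq hterm_ne]
    _ = T * (χ * ∫ x : ℝ, ‖(f : ℝ → ℂ) x‖ ^ 2) := by
        rw [htot, ENNReal.toReal_mul, ENNReal.toReal_ofReal hχ.le, hfint]
    _ = 2 * L * χ * ‖f‖ ^ 2 := by
        rw [hnormf, hTdef]; ring
end

section
/- For every f ∈ L²(ℝ), the series ∑_{n∈ℤ} ∑_{m∈ℤ} (1/(2·χ·L))·⟨ψ^{A,B}_{(n,m)}, f⟩·ψ^{A,B}_{(n,m)} converges unconditionally in L²(ℝ) and its sum equals f. -/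
open MeasureTheory Filter Topology
open Set AddCircle
open scoped ENNReal NNReal

local notation "⟪" x ", " y "⟫" => @inner ℂ _ _ x y

theorem finset_frame_bound {E : Type*} [NormedAddCommGroup E] [InnerProductSpace ℂ E]
    {ι : Type*} (v : ι → E) (K : ℝ) (hK : 0 < K)
    (hPar : ∀ f : E, HasSum (fun i => ‖⟪v i, f⟫‖ ^ 2) (K * ‖f‖ ^ 2))
    (g : E) (t : Finset ι) :
    ‖∑ i ∈ t, ⟪v i, g⟫ • v i‖ ^ 2 ≤ K * ∑ i ∈ t, ‖⟪v i, g⟫‖ ^ 2 := by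
  set u := ∑ i ∈ t, ⟪v i, g⟫ • v i with hu
  have h1 : (‖u‖ ^ 2 : ℝ) = Complex.re ⟪u, u⟫ := by
    rw [@norm_sq_eq_re_inner ℂ]; rfl
  have h2 : ⟪u, u⟫ = ∑ i ∈ t, (starRingEnd ℂ) ⟪v i, g⟫ * ⟪v i, u⟫ := by
    rw [hu, sum_inner]
    exact Finset.sum_congr rfl fun i _ => inner_smul_left _ _ _
  have h3 : ‖u‖ ^ 2 ≤ ∑ i ∈ t, ‖⟪v i, g⟫‖ * ‖⟪v i, u⟫‖ := by
    rw [h1, h2]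
    calc Complex.re (∑ i ∈ t, (starRingEnd ℂ) ⟪v i, g⟫ * ⟪v i, u⟫)
        ≤ ‖∑ i ∈ t, (starRingEnd ℂ) ⟪v i, g⟫ * ⟪v i, u⟫‖ := (RCLike.re_le_norm (K := ℂ) _)
      _ ≤ ∑ i ∈ t, ‖(starRingEnd ℂ) ⟪v i, g⟫ * ⟪v i, u⟫‖ := norm_sum_le _ _
      _ = ∑ i ∈ t, ‖⟪v i, g⟫‖ * ‖⟪v i, u⟫‖ := by
          refine Finset.sum_congr rfl fun i _ => ?_
          rw [norm_mul, RCLike.norm_conj]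
  have h4 : (∑ i ∈ t, ‖⟪v i, g⟫‖ * ‖⟪v i, u⟫‖) ^ 2 ≤
      (∑ i ∈ t, ‖⟪v i, g⟫‖ ^ 2) * (∑ i ∈ t, ‖⟪v i, u⟫‖ ^ 2) :=
    Finset.sum_mul_sq_le_sq_mul_sq t _ _
  have h5 : ∑ i ∈ t, ‖⟪v i, u⟫‖ ^ 2 ≤ K * ‖u‖ ^ 2 :=
    sum_le_hasSum t (fun i _ => by positivity) (hPar u)
  have hS : 0 ≤ ∑ i ∈ t, ‖⟪v i, g⟫‖ ^ 2 := Finset.sum_nonneg fun i _ => by positivity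
  rcases eq_or_lt_of_le (norm_nonneg u) with h0 | h0
  · rw [← h0]
    have : (0:ℝ)^2 = 0 := by norm_num
    rw [this]
    positivity
  · have h6 : (‖u‖ ^ 2) ^ 2 ≤ (∑ i ∈ t, ‖⟪v i, g⟫‖ ^ 2) * (K * ‖u‖ ^ 2) := by
      calc (‖u‖ ^ 2) ^ 2 ≤ (∑ i ∈ t, ‖⟪v i, g⟫‖ * ‖⟪v i, u⟫‖) ^ 2 := by
            have hnn : (0:ℝ) ≤ ‖u‖ ^ 2 := by positivity
            exact pow_le_pow_left₀ hnn h3 2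
        _ ≤ (∑ i ∈ t, ‖⟪v i, g⟫‖ ^ 2) * (∑ i ∈ t, ‖⟪v i, u⟫‖ ^ 2) := h4
        _ ≤ (∑ i ∈ t, ‖⟪v i, g⟫‖ ^ 2) * (K * ‖u‖ ^ 2) := by
            exact mul_le_mul_of_nonneg_left h5 hS
    have hu2 : 0 < ‖u‖ ^ 2 := by positivity
    nlinarith [h6, hu2]

theorem parseval_frame_summable {E : Type*} [NormedAddCommGroup E] [InnerProductSpace ℂ E]
    [CompleteSpace E] {ι : Type*} (v : ι → E) (K : ℝ) (hK : 0 < K)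
    (hPar : ∀ f : E, HasSum (fun i => ‖⟪v i, f⟫‖ ^ 2) (K * ‖f‖ ^ 2)) (f : E) :
    Summable (fun i => (((K⁻¹ : ℝ) : ℂ)) • (⟪v i, f⟫ • v i)) := by
  rw [summable_iff_vanishing]
  intro e he
  obtain ⟨ε, hε, hball⟩ := Metric.mem_nhds_iff.mp he
  have hs : Summable (fun i => ‖⟪v i, f⟫‖ ^ 2) := (hPar f).summable
  have hδ : (0:ℝ) < ε ^ 2 * K / 2 := by positivity
  obtain ⟨s, hsmall⟩ := summable_iff_vanishing.mp hs (Metric.ball 0 (ε ^ 2 * K / 2))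
    (Metric.ball_mem_nhds _ hδ)
  refine ⟨s, fun t ht => ?_⟩
  apply hball
  rw [Metric.mem_ball, dist_zero_right]
  have h1 : ∑ i ∈ t, ‖⟪v i, f⟫‖ ^ 2 < ε ^ 2 * K / 2 := by
    have := hsmall t ht
    rw [Metric.mem_ball, dist_zero_right, Real.norm_eq_abs] at this
    exact lt_of_le_of_lt (le_abs_self _) this
  have h2 : ‖∑ i ∈ t, ⟪v i, f⟫ • v i‖ ^ 2 ≤ K * ∑ i ∈ t, ‖⟪v i, f⟫‖ ^ 2 :=
    finset_frame_bound v K hK hPar f t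
  have h3 : ‖∑ i ∈ t, ⟪v i, f⟫ • v i‖ ^ 2 < K * (ε ^ 2 * K / 2) :=
    lt_of_le_of_lt h2 (by exact mul_lt_mul_of_pos_left h1 hK)
  have h4 : ‖∑ i ∈ t, ⟪v i, f⟫ • v i‖ < K * ε := by
    have hlt : ‖∑ i ∈ t, ⟪v i, f⟫ • v i‖ ^ 2 < (K * ε) ^ 2 := by nlinarith
    exact lt_of_pow_lt_pow_left₀ 2 (by positivity) hlt
  have h5 : ∑ i ∈ t, (((K⁻¹ : ℝ) : ℂ)) • (⟪v i, f⟫ • v i)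
      = (((K⁻¹ : ℝ) : ℂ)) • ∑ i ∈ t, ⟪v i, f⟫ • v i := (Finset.smul_sum).symm
  rw [h5, norm_smul]
  have : ‖(((K⁻¹ : ℝ) : ℂ))‖ = K⁻¹ := by
    rw [Complex.norm_real, Real.norm_eq_abs, abs_of_pos (by positivity)]
  rw [this]
  calc K⁻¹ * ‖∑ i ∈ t, ⟪v i, f⟫ • v i‖ < K⁻¹ * (K * ε) := by
        exact mul_lt_mul_of_pos_left h4 (by positivity)
    _ = ε := by field_simp

theorem parseval_frame_expansion {E : Type*} [NormedAddCommGroup E] [InnerProductSpace ℂ E]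
    [CompleteSpace E] {ι : Type*} (v : ι → E) (K : ℝ) (hK : 0 < K)
    (hPar : ∀ f : E, HasSum (fun i => ‖⟪v i, f⟫‖ ^ 2) (K * ‖f‖ ^ 2)) (f : E) :
    HasSum (fun i => (((K⁻¹ : ℝ) : ℂ)) • (⟪v i, f⟫ • v i)) f := by
  have hsum : ∀ g : E, Summable (fun i => (((K⁻¹ : ℝ) : ℂ)) • (⟪v i, g⟫ • v i)) :=
    parseval_frame_summable v K hK hPar
  -- define the frame operator as a linear map
  let S : E →ₗ[ℂ] E :=
    { toFun := fun g => ∑' i, (((K⁻¹ : ℝ) : ℂ)) • (⟪v i, g⟫ • v i)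
      map_add' := by
        intro g₁ g₂
        show (∑' i, (((K⁻¹ : ℝ) : ℂ)) • (⟪v i, g₁ + g₂⟫ • v i))
            = (∑' i, (((K⁻¹ : ℝ) : ℂ)) • (⟪v i, g₁⟫ • v i))
            + (∑' i, (((K⁻¹ : ℝ) : ℂ)) • (⟪v i, g₂⟫ • v i))
        rw [← Summable.tsum_add (hsum g₁) (hsum g₂)]
        exact tsum_congr fun i => by rw [inner_add_right, add_smul, smul_add]
      map_smul' := by
        intro a g
        show (∑' i, (((K⁻¹ : ℝ) : ℂ)) • (⟪v i, a • g⟫ • v i))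
            = a • (∑' i, (((K⁻¹ : ℝ) : ℂ)) • (⟪v i, g⟫ • v i))
        rw [← tsum_const_smul'' a]
        exact tsum_congr fun i => by
          rw [inner_smul_right, smul_smul, smul_smul, smul_smul]
          ring_nf
    }
  have hinner : ∀ g : E, ⟪g, S g⟫ = ⟪g, g⟫ := by
    intro g
    have h1 : HasSum (fun i => ⟪g, (((K⁻¹ : ℝ) : ℂ)) • (⟪v i, g⟫ • v i)⟫) ⟪g, S g⟫ :=
      (hsum g).hasSum.mapL (innerSL ℂ g)
    have h2 : ∀ i, ⟪g, (((K⁻¹ : ℝ) : ℂ)) • (⟪v i, g⟫ • v i)⟫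
        = (((K⁻¹ : ℝ) : ℂ)) * ((‖⟪v i, g⟫‖ ^ 2 : ℝ) : ℂ) := by
      intro i
      rw [inner_smul_right, inner_smul_right]
      have : ⟪g, v i⟫ = (starRingEnd ℂ) ⟪v i, g⟫ := (inner_conj_symm _ _).symm
      rw [this, mul_comm (⟪v i, g⟫) _, ← Complex.normSq_eq_conj_mul_self]
      rw [Complex.normSq_eq_norm_sq]
    have h3 : HasSum (fun i => (((K⁻¹ : ℝ) : ℂ)) * ((‖⟪v i, g⟫‖ ^ 2 : ℝ) : ℂ))
        ((((K⁻¹ : ℝ) : ℂ)) * ((K * ‖g‖ ^ 2 : ℝ) : ℂ)) := by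
      have := ((hPar g).mapL (Complex.ofRealCLM)).mul_left (((K⁻¹ : ℝ) : ℂ))
      simpa using this
    have h4 : ⟪g, S g⟫ = (((K⁻¹ : ℝ) : ℂ)) * ((K * ‖g‖ ^ 2 : ℝ) : ℂ) := by
      refine HasSum.unique ?_ h3
      convert h1 using 2 with i
      exact (h2 i).symm
    rw [h4, @inner_self_eq_norm_sq_to_K ℂ]
    have hKc : (K:ℂ) ≠ 0 := by exact_mod_cast hK.ne'
    push_cast
    rw [mul_comm ((K:ℂ))⁻¹ _, mul_assoc, mul_comm ((K:ℂ)) _, mul_assoc,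
      inv_mul_cancel₀ hKc, mul_one]
    norm_cast
  have hS : S = LinearMap.id := by
    rw [← ext_inner_map S LinearMap.id]
    intro x
    have := hinner x
    have h1 : ⟪S x, x⟫ = (starRingEnd ℂ) ⟪x, S x⟫ := (inner_conj_symm _ _).symm
    have h2 : ⟪(LinearMap.id : E →ₗ[ℂ] E) x, x⟫ = (starRingEnd ℂ) ⟪x, x⟫ := by
      simp only [LinearMap.id_apply]
      exact (inner_conj_symm _ _).symm
    rw [h1, h2, this]
  have : S f = f := by rw [hS]; rfl
  have := (hsum f).hasSum
  rwa [show (∑' i, (((K⁻¹ : ℝ) : ℂ)) • (⟪v i, f⟫ • v i)) = S f from rfl, ‹S f = f›] at this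

theorem liftIoc_stronglyMeasurable {T : ℝ} [hT : Fact (0 < T)] (a : ℝ) (g : ℝ → ℂ)
    (hg : StronglyMeasurable g) : StronglyMeasurable (liftIoc T a g) := by
  have : liftIoc T a g = (g ∘ (Subtype.val : Ioc a (a+T) → ℝ)) ∘ (measurableEquivIoc T a) := rfl
  rw [this]
  exact (hg.comp_measurable measurable_subtype_coe).comp_measurable
    (measurableEquivIoc T a).measurable

theorem slice_parseval {T : ℝ} [hT : Fact (0 < T)] (a : ℝ) (g : ℝ → ℂ)
    (hgsm : StronglyMeasurable g) (hg2 : MemLp g 2 (volume : Measure ℝ))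
    (hgs : ∀ᵐ x : ℝ ∂volume, x ∉ Set.Ioc a (a + T) → g x = 0) :
    HasSum (fun m : ℤ => ‖∫ x : ℝ, (fourier (-m) (x : AddCircle T)) * g x‖ ^ 2)
      (T * ∫ x : ℝ, ‖g x‖ ^ 2) := by
  have hab : a < a + T := lt_add_of_pos_right a hT.out
  set G : AddCircle T → ℂ := liftIoc T a g with hG
  have hGsm : StronglyMeasurable G := liftIoc_stronglyMeasurable a g hgsm
  -- lintegral facts
  have hl1 : ∫⁻ (b : AddCircle T), (‖G b‖₊ : ℝ≥0∞) ^ (2:ℝ) ∂(volume : Measure (AddCircle T))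
      = ∫⁻ x in Ioc a (a + T), (‖g x‖₊ : ℝ≥0∞) ^ (2:ℝ) ∂(volume : Measure ℝ) := by
    rw [← AddCircle.lintegral_preimage T a (fun b => (‖G b‖₊ : ℝ≥0∞) ^ (2:ℝ))]
    refine setLIntegral_congr_fun_ae measurableSet_Ioc (Filter.Eventually.of_forall ?_)
    intro x hx
    rw [hG, liftIoc_coe_apply hx]
  have hg2' : ∫⁻ (x : ℝ), (‖g x‖₊ : ℝ≥0∞) ^ (2:ℝ) ∂volume < ⊤ := by
    have := hg2.2
    rwa [eLpNorm_lt_top_iff_lintegral_rpow_enorm_lt_top (by norm_num) (by norm_num),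
      (by norm_num : ((2:ENNReal)).toReal = (2:ℝ))] at this
  have hG2 : MemLp G 2 (@haarAddCircle T hT) := by
    refine ⟨hGsm.aestronglyMeasurable, ?_⟩
    rw [eLpNorm_lt_top_iff_lintegral_rpow_enorm_lt_top (by norm_num) (by norm_num),
      (by norm_num : ((2:ENNReal)).toReal = (2:ℝ))]
    simp only [enorm_eq_nnnorm]
    have hhaar : (@haarAddCircle T hT) = (ENNReal.ofReal T)⁻¹ • (volume : Measure (AddCircle T)) := by
      rw [volume_eq_smul_haarAddCircle, ← smul_assoc, smul_eq_mul,
        ENNReal.inv_mul_cancel (by simpa using hT.out) ENNReal.ofReal_ne_top, one_smul]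
    rw [hhaar, lintegral_smul_measure, hl1]
    have hle : ∫⁻ x in Ioc a (a + T), (‖g x‖₊ : ℝ≥0∞) ^ (2:ℝ) ∂volume
        ≤ ∫⁻ (x : ℝ), (‖g x‖₊ : ℝ≥0∞) ^ (2:ℝ) ∂volume := setLIntegral_le_lintegral _ _
    exact ENNReal.mul_lt_top (by simp [hT.out]) (lt_of_le_of_lt hle hg2')
  set Glp : Lp ℂ 2 (@haarAddCircle T hT) := hG2.toLp G with hGlp
  have hcoe : ⇑Glp =ᵐ[@haarAddCircle T hT] G := hG2.coeFn_toLp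
  have hcoeff : ∀ m : ℤ, fourierCoeff (⇑Glp) m = fourierCoeffOn hab g m := by
    intro m
    rw [show fourierCoeff (⇑Glp) m = fourierCoeff G m from ?_, ← fourierCoeff_liftIoc_eq]
    · unfold fourierCoeff
      exact integral_congr_ae (hcoe.mono fun x hx => by simp only [hx])
  -- summability of squared coefficients
  have hsummable : Summable (fun m : ℤ => ‖fourierCoeff (⇑Glp) m‖ ^ 2) := by
    have hmem := lp.memℓp (fourierBasis.repr Glp)
    have h2 := (memℓp_gen_iff (p := 2) (by norm_num)).1 hmem
    refine (h2.congr ?_)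
    intro m
    rw [fourierBasis_repr]
    norm_num
  have htsum := tsum_sq_fourierCoeff Glp
  -- value of the L² integral over the circle
  have hint : ∫ t : AddCircle T, ‖Glp t‖ ^ 2 ∂(@haarAddCircle T hT)
      = (1/T) * ∫ x : ℝ, ‖g x‖ ^ 2 ∂volume := by
    have e1 : ∫ t : AddCircle T, ‖Glp t‖ ^ 2 ∂(@haarAddCircle T hT)
        = ∫ t : AddCircle T, ‖G t‖ ^ 2 ∂(@haarAddCircle T hT) :=
      integral_congr_ae (hcoe.mono fun x hx => by simp only [hx])
    have e2 : ∫ t : AddCircle T, ‖G t‖ ^ 2 ∂(volume : Measure (AddCircle T))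
        = (ENNReal.ofReal T).toReal • ∫ t : AddCircle T, ‖G t‖ ^ 2 ∂(@haarAddCircle T hT) := by
      rw [← integral_smul_measure, ← volume_eq_smul_haarAddCircle]
    have e3 : ∫ t : AddCircle T, ‖G t‖ ^ 2 ∂(volume : Measure (AddCircle T))
        = ∫ x : ℝ, ‖g x‖ ^ 2 ∂volume := by
      rw [← AddCircle.integral_preimage T a (fun b => ‖G b‖ ^ 2)]
      rw [show (∫ x in Ioc a (a+T), ‖G (x : AddCircle T)‖ ^ 2 ∂(volume : Measure ℝ))
          = ∫ x in Ioc a (a+T), ‖g x‖ ^ 2 ∂(volume : Measure ℝ) from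
        setIntegral_congr_fun measurableSet_Ioc fun x hx => by rw [hG, liftIoc_coe_apply hx]]
      exact setIntegral_eq_integral_of_ae_compl_eq_zero
        (hgs.mono fun x hx h => by rw [hx h]; simp)
    rw [e3] at e2
    rw [ENNReal.toReal_ofReal hT.out.le, smul_eq_mul] at e2
    rw [e1, e2, ← mul_assoc, one_div, inv_mul_cancel₀ hT.out.ne', one_mul]
  -- the integral over ℝ equals T • fourierCoeffOn
  have hval : ∀ m : ℤ, (∫ x : ℝ, (fourier (-m) (x : AddCircle T)) * g x ∂volume)
      = T • fourierCoeffOn hab g m := by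
    intro m
    have hba : a + T - a = T := by ring
    rw [fourierCoeffOn_eq_integral, hba, smul_smul, mul_one_div, div_self hT.out.ne', one_smul]
    rw [intervalIntegral.integral_of_le hab.le]
    simp_rw [smul_eq_mul]
    exact (setIntegral_eq_integral_of_ae_compl_eq_zero
      (hgs.mono fun x hx h => by rw [hx h]; simp)).symm
  -- assemble
  have H : HasSum (fun m : ℤ => ‖fourierCoeff (⇑Glp) m‖ ^ 2)
      ((1/T) * ∫ x : ℝ, ‖g x‖ ^ 2 ∂volume) := by
    have := hsummable.hasSum
    rwa [htsum, hint] at this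
  have H2 := H.mul_left (T^2)
  have : (T^2) * ((1/T) * ∫ x : ℝ, ‖g x‖ ^ 2 ∂volume) = T * ∫ x : ℝ, ‖g x‖ ^ 2 ∂volume := by
    field_simp [hT.out.ne']
  rw [this] at H2
  have hfun : (fun m : ℤ => ‖∫ x : ℝ, (fourier (-m) (x : AddCircle T)) * g x‖ ^ 2)
      = fun m : ℤ => (T^2) * ‖fourierCoeff (⇑Glp) m‖ ^ 2 := by
    funext m
    rw [hval m, hcoeff m, norm_smul, Real.norm_eq_abs, mul_pow, sq_abs]
  rw [hfun]
  exact H2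

theorem norm_exp_I_mul_ofReal (r : ℝ) : ‖Complex.exp (Complex.I * (r : ℂ))‖ = 1 := by
  rw [Complex.norm_exp]
  simp

theorem frames_heisenberg_expansion
    (A B L q₀ p₀ χ : ℝ)
    (hA : A ≠ 0) (hL : 0 < L) (hq₀ : q₀ ≠ 0) (hχ : 0 < χ)
    (hp₀ : p₀ = Real.pi / (A * L))
    (hq₀p₀ : |q₀ * p₀| < 2 * Real.pi)
    (ψ : Lp ℂ 2 (volume : Measure ℝ)) (hψ : ψ ≠ 0)
    (hsupp : ∀ᵐ x : ℝ ∂volume, L < |x| → ψ x = 0)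
    (hχsum : ∀ᵐ x : ℝ ∂volume, ∑' n : ℤ, ‖ψ (x + n * q₀)‖ ^ 2 = χ)
    (ψAB : ℤ → ℤ → Lp ℂ 2 (volume : Measure ℝ))
    (hψAB : ∀ n m : ℤ, ⇑(ψAB n m) =ᵐ[volume] fun x : ℝ =>
      Complex.exp (Complex.I * Complex.ofReal (A * m * n * q₀ * p₀ / 2)) *
      Complex.exp (Complex.I * Complex.ofReal (B * m * p₀)) *
      Complex.exp (Complex.I * Complex.ofReal (Real.pi * m * x / L)) *
      ψ (x + n * q₀))
    (f : Lp ℂ 2 (volume : Measure ℝ)) :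
    HasSum (fun nm : ℤ × ℤ =>
      (Complex.ofReal (1 / (2 * χ * L))) • ((inner ℂ (ψAB nm.1 nm.2) f : ℂ) • ψAB nm.1 nm.2)) f := by
  haveI hT : Fact (0 < 2 * L) := ⟨by linarith⟩
  -- a.e. bound on ψ
  have hbd : ∀ᵐ x : ℝ ∂volume, ‖ψ x‖ ^ 2 ≤ χ := by
    filter_upwards [hχsum] with x hx
    by_cases hs : Summable (fun n : ℤ => ‖ψ (x + n * q₀)‖ ^ 2)
    · have h0 := Summable.le_tsum hs 0 (fun n _ => by positivity)
      rw [hx] at h0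
      simpa using h0
    · rw [tsum_eq_zero_of_not_summable hs] at hx; linarith
  have haesum : ∀ᵐ x : ℝ ∂volume, Summable (fun n : ℤ => ‖ψ (x + n * q₀)‖ ^ 2) := by
    filter_upwards [hχsum] with x hx
    by_contra hs
    rw [tsum_eq_zero_of_not_summable hs] at hx; linarith
  -- ∫ ‖g‖² = ‖g‖²
  have norm_sq_int : ∀ g : Lp ℂ 2 (volume : Measure ℝ),
      ∫ x : ℝ, ‖g x‖ ^ 2 ∂volume = ‖g‖ ^ 2 := by
    intro g
    have h1 : (‖g‖ : ℝ) ^ 2 = RCLike.re (⟪g, g⟫) := norm_sq_eq_re_inner (𝕜 := ℂ) g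
    rw [L2.inner_def, ← integral_re (L2.integrable_inner g g)] at h1
    rw [h1]
    exact integral_congr_ae (Filter.Eventually.of_forall fun x =>
      (norm_sq_eq_re_inner (𝕜 := ℂ) (g x)))
  set K : ℝ := 2 * χ * L with hKdef
  have hK : 0 < K := by positivity
  -- Parseval frame identity
  have hPar : ∀ g : Lp ℂ 2 (volume : Measure ℝ),
      HasSum (fun nm : ℤ × ℤ => ‖(⟪ψAB nm.1 nm.2, g⟫ : ℂ)‖ ^ 2) (K * ‖g‖ ^ 2) := by
    intro g
    set gn : ℤ → ℝ → ℂ := fun n x => (starRingEnd ℂ) (ψ (x + n * q₀)) * g x with hgn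
    have hq : ∀ n : ℤ, Measure.QuasiMeasurePreserving (fun x : ℝ => x + n * q₀) volume volume :=
      fun n => (measurePreserving_add_right volume ((n : ℝ) * q₀)).quasiMeasurePreserving
    have hsm : ∀ n : ℤ, StronglyMeasurable (gn n) := by
      intro n
      apply StronglyMeasurable.mul _ (Lp.stronglyMeasurable g)
      exact continuous_star.comp_stronglyMeasurable
        ((Lp.stronglyMeasurable ψ).comp_measurable (measurable_add_const _))
    have hbd_n : ∀ n : ℤ, ∀ᵐ x : ℝ ∂volume, ‖ψ (x + n * q₀)‖ ^ 2 ≤ χ := fun n => (hq n).ae hbd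
    have hgn2 : ∀ n : ℤ, MemLp (gn n) 2 (volume : Measure ℝ) := by
      intro n
      refine MemLp.of_le_mul (c := Real.sqrt χ) (Lp.memLp g) (hsm n).aestronglyMeasurable ?_
      filter_upwards [hbd_n n] with x hx
      simp only [hgn, norm_mul, RCLike.norm_conj]
      have h1 : ‖ψ (x + n * q₀)‖ ≤ Real.sqrt χ := by
        have h2 := Real.sqrt_le_sqrt hx
        rwa [Real.sqrt_sq (norm_nonneg _)] at h2
      exact mul_le_mul_of_nonneg_right h1 (norm_nonneg _)
    have hgs_n : ∀ n : ℤ, ∀ᵐ x : ℝ ∂volume,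
        x ∉ Set.Ioc (-((n : ℝ) * q₀) - L) (-((n : ℝ) * q₀) - L + 2 * L) → gn n x = 0 := by
      intro n
      have h1 : ∀ᵐ x : ℝ ∂volume, L < |x + (n : ℝ) * q₀| → ψ (x + n * q₀) = 0 := (hq n).ae hsupp
      have h2 : ∀ᵐ x : ℝ ∂volume, x ≠ -((n : ℝ) * q₀) - L := by
        rw [ae_iff]
        have he : {x : ℝ | ¬ x ≠ -((n : ℝ) * q₀) - L} = {-((n : ℝ) * q₀) - L} := by
          ext y; simp
        rw [he]
        exact Real.volume_singleton
      filter_upwards [h1, h2] with x hx1 hx2 hmem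
      have hz : ψ (x + (n : ℝ) * q₀) = 0 := by
        apply hx1
        simp only [Set.mem_Ioc, not_and_or, not_le, not_lt] at hmem
        rcases hmem with h | h
        · have hlt : x < -((n : ℝ) * q₀) - L := lt_of_le_of_ne h hx2
          exact lt_abs.mpr (Or.inr (by linarith))
        · exact lt_abs.mpr (Or.inl (by linarith))
      simp only [hgn, hz, map_zero, zero_mul]
    -- per-n Parseval via Fourier series
    have hslice : ∀ n : ℤ, HasSum
        (fun m : ℤ => ‖∫ x : ℝ, (fourier (-m) (x : AddCircle (2 * L))) * gn n x‖ ^ 2)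
        ((2 * L) * ∫ x : ℝ, ‖gn n x‖ ^ 2) :=
      fun n => slice_parseval (-((n : ℝ) * q₀) - L) (gn n) (hsm n) (hgn2 n) (hgs_n n)
    -- inner products are Fourier coefficients
    have hinner : ∀ n m : ℤ, ‖(⟪ψAB n m, g⟫ : ℂ)‖
        = ‖∫ x : ℝ, (fourier (-m) (x : AddCircle (2 * L))) * gn n x‖ := by
      intro n m
      have hips : (⟪ψAB n m, g⟫ : ℂ) = ∫ x : ℝ, (starRingEnd ℂ) ((ψAB n m) x) * g x ∂volume := by
        rw [L2.inner_def]
        exact integral_congr_ae (Filter.Eventually.of_forall fun x => by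
          simp only [RCLike.inner_apply]; ring)
      set c1 : ℂ := Complex.exp (Complex.I * Complex.ofReal (A * m * n * q₀ * p₀ / 2)) with hc1
      set c2 : ℂ := Complex.exp (Complex.I * Complex.ofReal (B * m * p₀)) with hc2
      have heq : (fun x : ℝ => (starRingEnd ℂ) ((ψAB n m) x) * g x) =ᵐ[volume]
          (fun x : ℝ => ((starRingEnd ℂ) c1 * (starRingEnd ℂ) c2) *
            ((fourier (-m) (x : AddCircle (2 * L))) * gn n x)) := by
        filter_upwards [hψAB n m] with x hx
        rw [hx]
        have hfour : (starRingEnd ℂ) (Complex.exp (Complex.I * Complex.ofReal (Real.pi * m * x / L)))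
            = fourier (-m) (x : AddCircle (2 * L)) := by
          rw [← Complex.exp_conj, fourier_coe_apply]
          congr 1
          simp only [map_mul, Complex.conj_I, Complex.conj_ofReal]
          have hL' : (L : ℂ) ≠ 0 := by exact_mod_cast hL.ne'
          push_cast
          field_simp
        simp only [hgn, map_mul]
        rw [hfour]
        ring
      rw [hips, integral_congr_ae heq, integral_const_mul]
      rw [norm_mul, norm_mul, RCLike.norm_conj, RCLike.norm_conj, hc1, hc2,
        norm_exp_I_mul_ofReal, norm_exp_I_mul_ofReal, one_mul, one_mul]
    -- integrability facts
    have hgint : Integrable (fun x : ℝ => ‖g x‖ ^ 2) volume := by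
      have h := (Lp.memLp g).integrable_norm_rpow (by norm_num) (by norm_num)
      refine h.congr (Filter.Eventually.of_forall fun x => ?_)
      norm_num
    set F : ℤ → ℝ → ℝ := fun n x => ‖ψ (x + n * q₀)‖ ^ 2 * ‖g x‖ ^ 2 with hF
    have hFsm : ∀ n : ℤ, AEStronglyMeasurable (F n) volume := by
      intro n
      refine Measurable.aestronglyMeasurable ?_
      exact ((((Lp.stronglyMeasurable ψ).measurable.comp
        (measurable_add_const _)).norm).pow_const 2).mul
        (((Lp.stronglyMeasurable g).measurable.norm).pow_const 2)
    have hFint : ∀ n : ℤ, Integrable (F n) volume := by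
      intro n
      refine Integrable.mono' (hgint.const_mul χ) (hFsm n) ?_
      filter_upwards [hbd_n n] with x hx
      rw [hF, Real.norm_of_nonneg (by positivity)]
      exact mul_le_mul_of_nonneg_right hx (by positivity)
    have hofR : ∀ r : ℝ, 0 ≤ r → ENNReal.ofReal r = ((‖r‖₊ : ℝ≥0) : ℝ≥0∞) := fun r hr => by
      rw [← enorm_eq_nnnorm, ← ofReal_norm, Real.norm_of_nonneg hr]
    have hGfin : ∫⁻ x : ℝ, ENNReal.ofReal (‖g x‖ ^ 2) ∂volume < ⊤ := by
      refine lt_of_eq_of_lt (lintegral_congr fun x => hofR _ (by positivity)) hgint.2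
    have hptsum : ∀ᵐ x : ℝ ∂volume, (∑' n : ℤ, ((‖F n x‖₊ : ℝ≥0) : ℝ≥0∞))
        = ENNReal.ofReal χ * ENNReal.ofReal (‖g x‖ ^ 2) := by
      filter_upwards [hχsum, haesum] with x hx hxs
      have e1 : ∀ n : ℤ, ((‖F n x‖₊ : ℝ≥0) : ℝ≥0∞) = ENNReal.ofReal (F n x) := fun n =>
        (hofR _ (by positivity)).symm
      simp_rw [e1]
      rw [← ENNReal.ofReal_tsum_of_nonneg (fun n => by positivity) (hxs.mul_right _)]
      rw [show (∑' n : ℤ, F n x) = χ * ‖g x‖ ^ 2 by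
        rw [hF]; rw [tsum_mul_right, hx]]
      exact ENNReal.ofReal_mul hχ.le
    have htail : (∑' n : ℤ, ∫⁻ x : ℝ, ((‖F n x‖₊ : ℝ≥0) : ℝ≥0∞) ∂volume) ≠ ⊤ := by
      simp only [← enorm_eq_nnnorm] at hptsum ⊢
      rw [← lintegral_tsum (fun n => (hFsm n).enorm), lintegral_congr_ae hptsum,
        lintegral_const_mul' _ _ ENNReal.ofReal_ne_top]
      exact (ENNReal.mul_lt_top ENNReal.ofReal_lt_top hGfin).ne
    have hkey := integral_tsum (fun n => hFsm n) htail
    have hlhs : ∫ x : ℝ, (∑' n : ℤ, F n x) ∂volume = χ * ‖g‖ ^ 2 := by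
      rw [show ∫ x : ℝ, (∑' n : ℤ, F n x) ∂volume = ∫ x : ℝ, χ * ‖g x‖ ^ 2 ∂volume from
        integral_congr_ae (by
          filter_upwards [hχsum] with x hx
          rw [hF, tsum_mul_right, hx])]
      rw [integral_const_mul, norm_sq_int g]
    have hsumm : Summable (fun n : ℤ => ∫ x : ℝ, F n x ∂volume) := by
      have h1 := ENNReal.summable_toReal htail
      refine h1.congr fun n => ?_
      rw [integral_eq_lintegral_of_nonneg_ae (Filter.Eventually.of_forall fun x => by positivity)
        (hFsm n)]
      congr 1
      exact lintegral_congr fun x => (hofR _ (by positivity)).symm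
    have hn : HasSum (fun n : ℤ => ∫ x : ℝ, F n x ∂volume) (χ * ‖g‖ ^ 2) := by
      have := hsumm.hasSum
      rwa [← hkey, hlhs] at this
    have hn2 : HasSum (fun n : ℤ => (2 * L) * ∫ x : ℝ, F n x ∂volume) (K * ‖g‖ ^ 2) := by
      have h := hn.mul_left (2 * L)
      rwa [show (2 * L) * (χ * ‖g‖ ^ 2) = K * ‖g‖ ^ 2 by rw [hKdef]; ring] at h
    -- fiberwise sums
    have hfib : ∀ n : ℤ, HasSum (fun m : ℤ => ‖(⟪ψAB n m, g⟫ : ℂ)‖ ^ 2)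
        ((2 * L) * ∫ x : ℝ, F n x ∂volume) := by
      intro n
      have h1 := hslice n
      have h2 : ∫ x : ℝ, ‖gn n x‖ ^ 2 ∂volume = ∫ x : ℝ, F n x ∂volume :=
        integral_congr_ae (Filter.Eventually.of_forall fun x => by
          simp only [hgn, hF, norm_mul, RCLike.norm_conj, mul_pow])
      rw [h2] at h1
      have h3 : (fun m : ℤ => ‖(⟪ψAB n m, g⟫ : ℂ)‖ ^ 2)
          = fun m : ℤ => ‖∫ x : ℝ, (fourier (-m) (x : AddCircle (2 * L))) * gn n x‖ ^ 2 :=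
        funext fun m => by rw [hinner n m]
      rw [h3]
      exact h1
    have hsumP : Summable (fun nm : ℤ × ℤ => ‖(⟪ψAB nm.1 nm.2, g⟫ : ℂ)‖ ^ 2) := by
      rw [summable_prod_of_nonneg (fun nm => by positivity)]
      exact ⟨fun n => (hfib n).summable,
        (hn2.summable.congr fun n => ((hfib n).tsum_eq).symm)⟩
    have hfin := hsumP.hasSum
    rwa [Summable.tsum_prod' hsumP (fun n => (hfib n).summable),
      show (∑' (n : ℤ) (m : ℤ), ‖(⟪ψAB n m, g⟫ : ℂ)‖ ^ 2)
          = ∑' n : ℤ, ((2 * L) * ∫ x : ℝ, F n x ∂volume) from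
        tsum_congr fun n => (hfib n).tsum_eq,
      hn2.tsum_eq] at hfin
  have key := parseval_frame_expansion (fun nm : ℤ × ℤ => ψAB nm.1 nm.2) K hK hPar f
  rw [show Complex.ofReal (1 / K) = ((K⁻¹ : ℝ) : ℂ) by rw [one_div]]
  exact key
end

section
/- For every ε ∈ (0,1], the family {ψ^{ε}_{(n,m)} : n,m ∈ ℤ} is a tight frame for L²(ℝ) with frame constant 2·χ·sinh(ε·L)/ε; that is, for every f ∈ L²(ℝ) one has ∑_{n∈ℤ} ∑_{m∈ℤ} |⟨ψ^{ε}_{(n,m)}, f⟩|² = (2·χ·sinh(ε·L)/ε)·‖f‖²_{L²(ℝ)}. -/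
open MeasureTheory Filter Topology


lemma parseval_aux (T : ℝ) [hT : Fact (0 < T)] (d : ℝ) (H : ℝ → ℂ) (hm : Measurable H)
    (hi : IntegrableOn (fun t => ‖H t‖^2) (Set.Ioc d (d+T))) :
    ∑' m : ℤ, ‖∫ t in Set.Ioc d (d+T), (fourier m (t : AddCircle T)) * H t‖^2
      = T * ∫ t in Set.Ioc d (d+T), ‖H t‖^2 := by
  have hT0 := hT.out
  set G := AddCircle.liftIoc T d H with hG
  have hGmeas : Measurable G :=
    hm.comp (measurable_subtype_coe.comp (AddCircle.measurableEquivIoc (T := T) d).measurable)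
  have hmap : MeasureTheory.Measure.map (fun t : ℝ => (t : AddCircle T))
      (volume.restrict (Set.Ioc d (d+T))) = (volume : Measure (AddCircle T)) :=
    (AddCircle.measurePreserving_mk T d).map_eq
  have hcirc : ∀ (F : AddCircle T → ℝ), Measurable F →
      ∫ x, F x ∂(volume : Measure (AddCircle T)) = ∫ t in Set.Ioc d (d+T), F (t : AddCircle T) := by
    intro F hF
    rw [← hmap, integral_map AddCircle.measurable_mk'.aemeasurable hF.aestronglyMeasurable]
  have hhaar : ∀ (F : AddCircle T → ℝ), Measurable F →
      ∫ x, F x ∂(@AddCircle.haarAddCircle T _)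
        = T⁻¹ * ∫ t in Set.Ioc d (d+T), F (t : AddCircle T) := by
    intro F hF
    have h1 : ∫ x, F x ∂(volume : Measure (AddCircle T))
        = T * ∫ x, F x ∂(@AddCircle.haarAddCircle T _) := by
      rw [AddCircle.volume_eq_smul_haarAddCircle, integral_smul_measure,
        ENNReal.toReal_ofReal hT0.le, smul_eq_mul]
    rw [hcirc F hF] at h1
    field_simp
    linarith [h1]
  have h2 : IntegrableOn (fun t : ℝ => ‖G (t : AddCircle T)‖^2) (Set.Ioc d (d+T)) := by
    apply hi.congr_fun ?_ measurableSet_Ioc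
    intro t ht
    simp only [hG]
    rw [AddCircle.liftIoc_coe_apply ht]
  have h3 : Integrable (fun x => ‖G x‖^2) (volume : Measure (AddCircle T)) := by
    rw [← hmap, integrable_map_measure ((hGmeas.norm.pow measurable_const).aestronglyMeasurable)
      AddCircle.measurable_mk'.aemeasurable]
    exact h2
  have hGsq_int : Integrable (fun x => ‖G x‖^2) (@AddCircle.haarAddCircle T _) := by
    rw [AddCircle.volume_eq_smul_haarAddCircle] at h3
    exact (integrable_smul_measure (ENNReal.ofReal_pos.2 hT0).ne' (ENNReal.ofReal_ne_top)).1 h3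
  have hGL2 : MemLp G 2 (@AddCircle.haarAddCircle T _) := by
    rw [memLp_two_iff_integrable_sq_norm hGmeas.aestronglyMeasurable]
    exact hGsq_int
  have hcoeff : ∀ i : ℤ, fourierCoeff ((hGL2.toLp G : Lp ℂ 2 (@AddCircle.haarAddCircle T _)) : AddCircle T → ℂ) i = fourierCoeff G i := by
    intro i
    unfold fourierCoeff
    exact integral_congr_ae ((hGL2.coeFn_toLp).mono fun x hx => by simp only [hx])
  have hpar := tsum_sq_fourierCoeff (hGL2.toLp G)
  have hnormint : ∫ t : AddCircle T, ‖(hGL2.toLp G : Lp ℂ 2 (@AddCircle.haarAddCircle T _)) t‖^2 ∂(@AddCircle.haarAddCircle T _)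
      = ∫ t : AddCircle T, ‖G t‖^2 ∂(@AddCircle.haarAddCircle T _) :=
    integral_congr_ae ((hGL2.coeFn_toLp).mono fun x hx => by simp only [hx])
  have hco : ∀ m : ℤ, ∫ t in Set.Ioc d (d+T), (fourier m (t : AddCircle T)) * H t
      = T • fourierCoeff G (-m) := by
    intro m
    rw [fourierCoeff_eq_intervalIntegral G (-m) d, neg_neg, smul_smul,
      mul_one_div, div_self hT0.ne', one_smul,
      intervalIntegral.integral_of_le (by linarith : d ≤ d + T)]
    apply setIntegral_congr_fun measurableSet_Ioc
    intro t ht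
    simp only [hG, smul_eq_mul]
    rw [AddCircle.liftIoc_coe_apply ht]
  calc ∑' m : ℤ, ‖∫ t in Set.Ioc d (d+T), (fourier m (t : AddCircle T)) * H t‖^2
      = ∑' m : ℤ, T^2 * ‖fourierCoeff G (-m)‖^2 := by
        congr 1; funext m
        rw [hco m, norm_smul, mul_pow, Real.norm_eq_abs, abs_of_pos hT0]
    _ = T^2 * ∑' m : ℤ, ‖fourierCoeff G (-m)‖^2 := tsum_mul_left
    _ = T^2 * ∑' i : ℤ, ‖fourierCoeff G i‖^2 := by
        congr 1
        exact (Equiv.neg ℤ).tsum_eq (fun i => ‖fourierCoeff G i‖^2)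
    _ = T^2 * ∫ t : AddCircle T, ‖G t‖^2 ∂(@AddCircle.haarAddCircle T _) := by
        rw [← hnormint, ← hpar]
        congr 1
        exact tsum_congr fun i => by rw [hcoeff i]
    _ = T^2 * (T⁻¹ * ∫ t in Set.Ioc d (d+T), ‖G (t : AddCircle T)‖^2) := by
        rw [hhaar _ (hGmeas.norm.pow measurable_const)]
    _ = T * ∫ t in Set.Ioc d (d+T), ‖H t‖^2 := by
        have heq : (∫ t in Set.Ioc d (d+T), ‖G (t : AddCircle T)‖^2)
            = ∫ t in Set.Ioc d (d+T), ‖H t‖^2 :=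
          setIntegral_congr_fun measurableSet_Ioc fun t ht => by
            simp only [hG]
            rw [AddCircle.liftIoc_coe_apply ht]
        rw [heq]
        field_simp


set_option maxHeartbeats 2000000 in
theorem frames_extended_affine_tight
    (A B L q₀ p₀ χ : ℝ)
    (hA : A ≠ 0) (hL : 0 < L) (hq₀ : q₀ ≠ 0) (hχ : 0 < χ)
    (hp₀ : p₀ = Real.pi / (A * L))
    (hq₀p₀ : |q₀ * p₀| < 2 * Real.pi)
    (ψ : Lp ℂ 2 (volume : Measure ℝ)) (hψ : ψ ≠ 0)
    (hsupp : ∀ᵐ x : ℝ ∂volume, L < |x| → ψ x = 0)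
    (hχsum : ∀ᵐ x : ℝ ∂volume, ∑' n : ℤ, ‖ψ (x + n * q₀)‖ ^ 2 = χ)
    (a₀ b₀ : ℝ) (hab : a₀ + b₀ = B)
    (hb : ∀ ε ∈ Set.Ioc (0:ℝ) 1, b₀ - A / ε ≠ 0)
    (β γ : ℝ → ℤ → ℤ → ℝ)
    (hβ : ∀ (ε : ℝ) (n m : ℤ), β ε n m =
      -Real.exp (-(ε * n * q₀)) * Real.pi * m / ((b₀ - A / ε) * Real.sinh (ε * L)))
    (hγ : ∀ (ε : ℝ) (n m : ℤ), n ≠ 0 → γ ε n m =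
      β ε n m * (ε * n * q₀) / (1 - Real.exp (-(ε * n * q₀))))
    (hγ₀ : ∀ (ε : ℝ) (m : ℤ), γ ε 0 m = β ε 0 m)
    (ψe : ℝ → ℤ → ℤ → Lp ℂ 2 (volume : Measure ℝ))
    (hψe : ∀ ε ∈ Set.Ioc (0:ℝ) 1, ∀ n m : ℤ, ⇑(ψe ε n m) =ᵐ[volume] fun x : ℝ =>
      Complex.exp (Complex.I * Complex.ofReal ((a₀ + A / ε) * γ ε n m)) *
      Complex.exp (Complex.I * Complex.ofReal ((b₀ - A / ε) * β ε n m * Real.exp (-(ε * x)))) *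
      Complex.ofReal (Real.exp (-(ε * (x + n * q₀) / 2))) *
      ψ (x + n * q₀))
    (ε : ℝ) (hε : ε ∈ Set.Ioc (0:ℝ) 1)
    (f : Lp ℂ 2 (volume : Measure ℝ)) :
    ∑' n : ℤ, ∑' m : ℤ, ‖(inner ℂ (ψe ε n m) f : ℂ)‖ ^ 2
      = 2 * χ * Real.sinh (ε * L) / ε * ‖f‖ ^ 2 := by
  obtain ⟨hε0, hε1⟩ := hε
  have hb' : b₀ - A / ε ≠ 0 := hb ε ⟨hε0, hε1⟩
  set c := Real.sinh (ε * L) with hcdef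
  have hc : 0 < c := Real.sinh_pos_iff.2 (mul_pos hε0 hL)
  set T := 2 * c with hTdef
  have hT : 0 < T := by positivity
  haveI : Fact (0 < T) := ⟨hT⟩
  set d := Real.exp (-(ε * L)) with hddef
  have hdT : d + T = Real.exp (ε * L) := by
    rw [hddef, hTdef, hcdef, Real.sinh_eq]; ring
  set u : ℝ → ℝ := fun y => Real.exp (-(ε * y)) with hudef
  have hupos : ∀ y, 0 < u y := fun y => Real.exp_pos _
  -- derivative, injectivity, image of u on Ico (-L) L
  have hu_deriv : ∀ y ∈ Set.Ico (-L) L,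
      HasDerivWithinAt u (-(ε * u y)) (Set.Ico (-L) L) y := by
    intro y _
    have h1 : HasDerivAt (fun y : ℝ => -(ε * y)) (-(ε * 1)) y :=
      ((hasDerivAt_id y).const_mul ε).neg
    have h2 := h1.exp
    have h3 : Real.exp (-(ε * y)) * -(ε * 1) = -(ε * u y) := by
      simp only [hudef]; ring
    rw [h3] at h2
    exact h2.hasDerivWithinAt
  have hu_inj : Set.InjOn u (Set.Ico (-L) L) := by
    intro a _ b _ hab2
    have h1 : -(ε * a) = -(ε * b) := Real.exp_injective hab2
    have h2 : ε * a = ε * b := by linarith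
    exact mul_left_cancel₀ hε0.ne' h2
  have hu_image : u '' Set.Ico (-L) L = Set.Ioc d (d + T) := by
    rw [hdT]
    ext t
    simp only [Set.mem_image, Set.mem_Ico, Set.mem_Ioc]
    constructor
    · rintro ⟨y, ⟨h1, h2⟩, rfl⟩
      constructor
      · rw [hddef]
        apply Real.exp_lt_exp.2
        nlinarith
      · rw [show u y = Real.exp (-(ε * y)) from rfl]
        apply Real.exp_le_exp.2
        nlinarith
    · rintro ⟨h1, h2⟩
      have ht0 : 0 < t := lt_trans (Real.exp_pos _) h1
      refine ⟨-Real.log t / ε, ⟨?_, ?_⟩, ?_⟩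
      · rw [le_div_iff₀ hε0, neg_mul]
        have := (Real.log_le_iff_le_exp ht0).2 h2
        nlinarith
      · rw [div_lt_iff₀ hε0]
        have := (Real.lt_log_iff_exp_lt ht0).2 (by rw [hddef] at h1; exact h1)
        nlinarith
      · show Real.exp (-(ε * (-Real.log t / ε))) = t
        rw [show -(ε * (-Real.log t / ε)) = Real.log t by field_simp]
        exact Real.exp_log ht0
  -- measurability of representatives
  have hψm : Measurable ⇑ψ := (Lp.stronglyMeasurable ψ).measurable
  have hfm : Measurable ⇑f := (Lp.stronglyMeasurable f).measurable
  have hf_sq_int : Integrable (fun x : ℝ => ‖f x‖ ^ 2) := by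
    rw [← memLp_two_iff_integrable_sq_norm (Lp.aestronglyMeasurable f)]
    exact Lp.memLp f
  -- summability and bounds from hχsum
  have hχsum' : ∀ᵐ x : ℝ ∂volume,
      Summable (fun k : ℤ => ‖ψ (x + k * q₀)‖ ^ 2) ∧
      (∑' k : ℤ, ‖ψ (x + k * q₀)‖ ^ 2) = χ := by
    filter_upwards [hχsum] with x hx
    refine ⟨?_, hx⟩
    by_contra hs
    rw [tsum_eq_zero_of_not_summable hs] at hx
    exact hχ.ne' hx.symm
  have hψ_boundn : ∀ n : ℤ, ∀ᵐ x : ℝ ∂volume, ‖ψ (x + n * q₀)‖ ^ 2 ≤ χ := by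
    intro n
    filter_upwards [hχsum'] with x hx
    rw [← hx.2]
    exact Summable.le_tsum hx.1 n (fun j _ => by positivity)
  have hψ_bound0 : ∀ᵐ y : ℝ ∂volume, ‖ψ y‖ ^ 2 ≤ χ := by
    filter_upwards [hψ_boundn 0] with x hx
    simpa using hx
  -- integrability of the products
  have hterm_meas : ∀ n : ℤ, Measurable fun x : ℝ => ‖ψ (x + n * q₀)‖ ^ 2 * ‖f x‖ ^ 2 := by
    intro n
    exact (((hψm.comp (measurable_add_const ((n : ℝ) * q₀))).norm.pow measurable_const).mul
      ((hfm.norm.pow measurable_const)))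
  have hterm_int : ∀ n : ℤ, Integrable (fun x : ℝ => ‖ψ (x + n * q₀)‖ ^ 2 * ‖f x‖ ^ 2) := by
    intro n
    apply Integrable.mono' (hf_sq_int.const_mul χ) (hterm_meas n).aestronglyMeasurable
    filter_upwards [hψ_boundn n] with x hx
    rw [Real.norm_eq_abs, abs_of_nonneg (by positivity)]
    exact mul_le_mul_of_nonneg_right hx (by positivity)
  have hterm_nonneg : ∀ n : ℤ, 0 ≤ ∫ x : ℝ, ‖ψ (x + n * q₀)‖ ^ 2 * ‖f x‖ ^ 2 :=
    fun n => integral_nonneg fun x => by positivity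
  -- translated product integrability (in y variable)
  have hQ_int : ∀ n : ℤ, Integrable (fun y : ℝ => ‖ψ y‖ ^ 2 * ‖f (y - n * q₀)‖ ^ 2) := by
    intro n
    apply Integrable.mono' ((hf_sq_int.comp_sub_right ((n : ℝ) * q₀)).const_mul χ)
      ((hψm.norm.pow measurable_const).mul
        ((hfm.comp (measurable_sub_const ((n : ℝ) * q₀))).norm.pow
          measurable_const)).aestronglyMeasurable
    filter_upwards [hψ_bound0] with y hy
    rw [Real.norm_eq_abs, abs_of_nonneg (mul_nonneg (sq_nonneg _) (sq_nonneg _))]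
    exact mul_le_mul_of_nonneg_right hy (by positivity)
  -- ae facts for support
  have hL' : ∀ᵐ y : ℝ ∂volume, y ≠ L := by
    have h0 : (volume : Measure ℝ) {L} = 0 := Real.volume_singleton
    filter_upwards [measure_eq_zero_iff_ae_notMem.1 h0] with y hy
    simpa using hy
  have hIco : ∀ y : ℝ, y ≠ L → y ∉ Set.Ico (-L) L → L < |y| := by
    intro y hne hy
    simp only [Set.mem_Ico, not_and_or, not_le, not_lt] at hy
    rcases hy with h | h
    · rw [abs_of_neg (by linarith)]; linarith
    · rw [abs_of_pos (by linarith)]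
      exact lt_of_le_of_ne h (Ne.symm hne)
  -- THE KEY PER-n IDENTITY
  have key : ∀ n : ℤ, (∑' m : ℤ, ‖(inner ℂ (ψe ε n m) f : ℂ)‖ ^ 2)
      = T / ε * ∫ x : ℝ, ‖ψ (x + n * q₀)‖ ^ 2 * ‖f x‖ ^ 2 := by
    intro n
    set P : ℝ → ℂ := fun y =>
      (Real.exp (-(ε * y / 2)) : ℂ) * ((starRingEnd ℂ) (ψ y) * f (y - n * q₀)) with hPdef
    set g : ℝ → ℂ := (Set.Ico (-L) L).indicator P with hgdef
    have hP_meas : Measurable P := by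
      apply Measurable.mul
      · exact Complex.measurable_ofReal.comp (by fun_prop)
      · exact (Complex.conjCLE.continuous.measurable.comp hψm).mul
          (hfm.comp (measurable_sub_const _))
    have hg_meas : Measurable g := hP_meas.indicator measurableSet_Ico
    set H : ℝ → ℂ := fun t => ((ε : ℂ) * (t : ℂ))⁻¹ * g (-Real.log t / ε) with hHdef
    have hH_meas : Measurable H := by
      apply Measurable.mul
      · exact (measurable_const.mul Complex.measurable_ofReal).inv
      · exact hg_meas.comp ((Real.measurable_log.neg).div_const ε)
    have hfour : ∀ (m : ℤ) (x : ℝ),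
        (fourier m ((u (x + n * q₀) : ℝ) : AddCircle T) : ℂ)
          = Complex.exp (-Complex.I *
              ((b₀ - A / ε) * β ε n m * Real.exp (-(ε * x)) : ℝ)) := by
      intro m x
      rw [fourier_coe_apply]
      have hreal : 2 * Real.pi * (m : ℝ) * u (x + n * q₀) / T
          = -((b₀ - A / ε) * β ε n m * Real.exp (-(ε * x))) := by
        rw [hβ]
        have hsplit : u (x + n * q₀) = Real.exp (-(ε * x)) * Real.exp (-(ε * n * q₀)) := by
          simp only [hudef]
          rw [← Real.exp_add]; congr 1; ring
        rw [hsplit, hTdef]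
        have h1 : (b₀ - A / ε) * (-Real.exp (-(ε * ↑n * q₀)) * Real.pi * ↑m / ((b₀ - A / ε) * c))
            = -Real.exp (-(ε * ↑n * q₀)) * Real.pi * ↑m / c := by
          have hb'' : b₀ * ε - A ≠ 0 := by
            intro h
            apply hb'
            rw [sub_eq_zero] at h ⊢
            field_simp
            linarith [h]
          field_simp
          all_goals ring
        rw [h1]
        field_simp
      have hcast := congrArg Complex.ofReal hreal
      push_cast at hcast ⊢
      congr 1
      linear_combination Complex.I * hcast
    have hpt : ∀ (m : ℤ) (x : ℝ),
        (starRingEnd ℂ) (Complex.exp (Complex.I * Complex.ofReal ((a₀ + A / ε) * γ ε n m)) *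
          Complex.exp (Complex.I *
            Complex.ofReal ((b₀ - A / ε) * β ε n m * Real.exp (-(ε * x)))) *
          Complex.ofReal (Real.exp (-(ε * (x + n * q₀) / 2))) *
          ψ (x + n * q₀)) * f x
        = Complex.exp (-Complex.I * ((a₀ + A / ε) * γ ε n m : ℝ)) *
          ((fourier m ((u (x + n * q₀) : ℝ) : AddCircle T) : ℂ) * P (x + n * q₀)) := by
      intro m x
      rw [hfour m x, hPdef]
      simp only [map_mul, ← Complex.exp_conj, Complex.conj_I, Complex.conj_ofReal]
      rw [add_sub_cancel_right]
      ring
    have hIP : ∀ m : ℤ, ‖(inner ℂ (ψe ε n m) f : ℂ)‖ ^ 2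
        = ‖∫ t in Set.Ioc d (d + T), (fourier m (t : AddCircle T) : ℂ) * H t‖ ^ 2 := by
      intro m
      have hA1 : (inner ℂ (ψe ε n m) f : ℂ) = ∫ x : ℝ, (starRingEnd ℂ) ((ψe ε n m) x) * f x := by
        rw [MeasureTheory.L2.inner_def]
        simp only [RCLike.inner_apply']
      have hA2 : (∫ x : ℝ, (starRingEnd ℂ) ((ψe ε n m) x) * f x)
          = ∫ x : ℝ, Complex.exp (-Complex.I * ((a₀ + A / ε) * γ ε n m : ℝ)) *
              ((fourier m ((u (x + n * q₀) : ℝ) : AddCircle T) : ℂ) * P (x + n * q₀)) := by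
        apply integral_congr_ae
        filter_upwards [hψe ε ⟨hε0, hε1⟩ n m] with x hx
        simp only [hx]
        exact hpt m x
      have hA3 : (∫ x : ℝ, Complex.exp (-Complex.I * ((a₀ + A / ε) * γ ε n m : ℝ)) *
            ((fourier m ((u (x + n * q₀) : ℝ) : AddCircle T) : ℂ) * P (x + n * q₀)))
          = Complex.exp (-Complex.I * ((a₀ + A / ε) * γ ε n m : ℝ)) *
            ∫ y : ℝ, (fourier m ((u y : ℝ) : AddCircle T) : ℂ) * P y := by
        rw [integral_const_mul]
        congr 1
        exact integral_add_right_eq_self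
          (fun y => (fourier m ((u y : ℝ) : AddCircle T) : ℂ) * P y) ((n : ℝ) * q₀)
      have hB : (∫ y : ℝ, (fourier m ((u y : ℝ) : AddCircle T) : ℂ) * P y)
          = ∫ y : ℝ, (fourier m ((u y : ℝ) : AddCircle T) : ℂ) * g y := by
        apply integral_congr_ae
        filter_upwards [hsupp, hL'] with y hy1 hy2
        by_cases hy : y ∈ Set.Ico (-L) L
        · rw [hgdef, Set.indicator_of_mem hy]
        · rw [hgdef, Set.indicator_of_notMem hy]
          have hψ0 : ψ y = 0 := hy1 (hIco y hy2 hy)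
          rw [hPdef]
          simp only [hψ0]
          simp
      have hC : (∫ y : ℝ, (fourier m ((u y : ℝ) : AddCircle T) : ℂ) * g y)
          = ∫ y in Set.Ico (-L) L, (fourier m ((u y : ℝ) : AddCircle T) : ℂ) * P y := by
        rw [← integral_indicator measurableSet_Ico]
        congr 1
        funext y
        rw [hgdef]
        by_cases hy : y ∈ Set.Ico (-L) L
        · rw [Set.indicator_of_mem hy, Set.indicator_of_mem hy]
        · rw [Set.indicator_of_notMem hy, Set.indicator_of_notMem hy, mul_zero]
      have hD := integral_image_eq_integral_abs_deriv_smul measurableSet_Ico hu_deriv hu_inj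
        (fun t => (fourier m (t : AddCircle T) : ℂ) * H t)
      rw [hu_image] at hD
      have hD2 : (∫ y in Set.Ico (-L) L,
            |(-(ε * u y))| • ((fourier m ((u y : ℝ) : AddCircle T) : ℂ) * H (u y)))
          = ∫ y in Set.Ico (-L) L, (fourier m ((u y : ℝ) : AddCircle T) : ℂ) * P y := by
        apply setIntegral_congr_fun measurableSet_Ico
        intro y hy
        beta_reduce
        have hy0 : (0:ℝ) < ε * u y := by positivity
        have hlog : -Real.log (u y) / ε = y := by
          simp only [hudef]
          rw [Real.log_exp]
          field_simp
        rw [abs_neg, abs_of_pos hy0, hHdef]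
        simp only []
        rw [hlog, hgdef, Set.indicator_of_mem hy]
        rw [Complex.real_smul]
        have hε' : (ε : ℂ) ≠ 0 := Complex.ofReal_ne_zero.2 hε0.ne'
        have huy : ((u y : ℝ) : ℂ) ≠ 0 := Complex.ofReal_ne_zero.2 (hupos y).ne'
        push_cast
        field_simp
        all_goals ring
      rw [hA1, hA2, hA3, hB, hC, hD, hD2, norm_mul]
      have hE1 : ‖Complex.exp (-Complex.I * ((a₀ + A / ε) * γ ε n m : ℝ))‖ = 1 := by
        rw [Complex.norm_exp]
        simp
      rw [hE1, one_mul]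
    have hHsq : ∀ y ∈ Set.Ico (-L) L,
        |(-(ε * u y))| • ‖H (u y)‖ ^ 2 = ε⁻¹ * (‖ψ y‖ ^ 2 * ‖f (y - n * q₀)‖ ^ 2) := by
      intro y hy
      have hy0 : (0:ℝ) < ε * u y := by positivity
      have hlog : -Real.log (u y) / ε = y := by
        simp only [hudef]
        rw [Real.log_exp]
        field_simp
      rw [abs_neg, abs_of_pos hy0, hHdef]
      simp only []
      rw [hlog, hgdef, Set.indicator_of_mem hy, hPdef]
      simp only []
      have h1 : ‖((ε : ℂ) * ((u y : ℝ) : ℂ))⁻¹‖ = (ε * u y)⁻¹ := by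
        rw [norm_inv, norm_mul, Complex.norm_real, Complex.norm_real, Real.norm_eq_abs,
          Real.norm_eq_abs, abs_of_pos hε0, abs_of_pos (hupos y)]
      have h2 : ‖((Real.exp (-(ε * y / 2)) : ℝ) : ℂ)‖ = Real.exp (-(ε * y / 2)) := by
        rw [Complex.norm_real, Real.norm_eq_abs, Real.abs_exp]
      have h3 : ‖(starRingEnd ℂ) (ψ y)‖ = ‖ψ y‖ := RCLike.norm_conj _
      have hsq : Real.exp (-(ε * y / 2)) ^ 2 = u y := by
        simp only [hudef]
        rw [sq, ← Real.exp_add]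
        congr 1
        ring
      rw [norm_mul, h1, norm_mul, h2, norm_mul, h3, smul_eq_mul]
      rw [mul_pow, mul_pow, mul_pow, hsq]
      have hu0 : u y ≠ 0 := (hupos y).ne'
      field_simp
    have hHint : IntegrableOn (fun t => ‖H t‖ ^ 2) (Set.Ioc d (d + T)) := by
      rw [← hu_image, integrableOn_image_iff_integrableOn_abs_deriv_smul measurableSet_Ico
        hu_deriv hu_inj]
      apply (((hQ_int n).const_mul ε⁻¹).integrableOn).congr_fun ?_ measurableSet_Ico
      intro y hy
      exact (hHsq y hy).symm
    have hpar := parseval_aux T d H hH_meas hHint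
    have hD3 := integral_image_eq_integral_abs_deriv_smul measurableSet_Ico hu_deriv hu_inj
      (fun t => ‖H t‖ ^ 2)
    rw [hu_image] at hD3
    have hD4 : (∫ y in Set.Ico (-L) L, |(-(ε * u y))| • ‖H (u y)‖ ^ 2)
        = ∫ y in Set.Ico (-L) L, ε⁻¹ * (‖ψ y‖ ^ 2 * ‖f (y - n * q₀)‖ ^ 2) :=
      setIntegral_congr_fun measurableSet_Ico hHsq
    have hD5 : (∫ y in Set.Ico (-L) L, ε⁻¹ * (‖ψ y‖ ^ 2 * ‖f (y - n * q₀)‖ ^ 2))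
        = ε⁻¹ * ∫ y in Set.Ico (-L) L, ‖ψ y‖ ^ 2 * ‖f (y - n * q₀)‖ ^ 2 :=
      integral_const_mul _ _
    have hD6 : (∫ y in Set.Ico (-L) L, ‖ψ y‖ ^ 2 * ‖f (y - n * q₀)‖ ^ 2)
        = ∫ y : ℝ, ‖ψ y‖ ^ 2 * ‖f (y - n * q₀)‖ ^ 2 := by
      rw [← integral_indicator measurableSet_Ico]
      apply integral_congr_ae
      filter_upwards [hsupp, hL'] with y hy1 hy2
      by_cases hy : y ∈ Set.Ico (-L) L
      · rw [Set.indicator_of_mem hy]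
      · rw [Set.indicator_of_notMem hy, hy1 (hIco y hy2 hy)]
        simp
    have hD7 : (∫ y : ℝ, ‖ψ y‖ ^ 2 * ‖f (y - n * q₀)‖ ^ 2)
        = ∫ x : ℝ, ‖ψ (x + n * q₀)‖ ^ 2 * ‖f x‖ ^ 2 := by
      rw [← integral_add_right_eq_self
        (fun y : ℝ => ‖ψ y‖ ^ 2 * ‖f (y - n * q₀)‖ ^ 2) ((n : ℝ) * q₀)]
      congr 1
      funext x
      simp only [add_sub_cancel_right]
    calc (∑' m : ℤ, ‖(inner ℂ (ψe ε n m) f : ℂ)‖ ^ 2)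
        = ∑' m : ℤ, ‖∫ t in Set.Ioc d (d + T), (fourier m (t : AddCircle T) : ℂ) * H t‖ ^ 2 :=
          tsum_congr hIP
      _ = T * ∫ t in Set.Ioc d (d + T), ‖H t‖ ^ 2 := hpar
      _ = T / ε * ∫ x : ℝ, ‖ψ (x + n * q₀)‖ ^ 2 * ‖f x‖ ^ 2 := by
          rw [hD3, hD4, hD5, hD6, hD7]
          ring
  -- TONELLI STEP
  have tonelli : (∑' n : ℤ, ∫ x : ℝ, ‖ψ (x + n * q₀)‖ ^ 2 * ‖f x‖ ^ 2)
      = χ * ∫ x : ℝ, ‖f x‖ ^ 2 := by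
    have hplain : ∀ n : ℤ, ∫⁻ x : ℝ, ENNReal.ofReal (‖ψ (x + n * q₀)‖ ^ 2 * ‖f x‖ ^ 2)
        = ENNReal.ofReal (∫ x : ℝ, ‖ψ (x + n * q₀)‖ ^ 2 * ‖f x‖ ^ 2) := fun n =>
      (ofReal_integral_eq_lintegral_ofReal (hterm_int n)
        (Filter.Eventually.of_forall fun x => by positivity)).symm
    have hswap : ∫⁻ x : ℝ, ∑' n : ℤ, ENNReal.ofReal (‖ψ (x + n * q₀)‖ ^ 2 * ‖f x‖ ^ 2)
        = ∑' n : ℤ, ∫⁻ x : ℝ, ENNReal.ofReal (‖ψ (x + n * q₀)‖ ^ 2 * ‖f x‖ ^ 2) :=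
      lintegral_tsum fun n => ((hterm_meas n).ennreal_ofReal).aemeasurable
    have hae : ∀ᵐ x : ℝ ∂volume, (∑' n : ℤ, ENNReal.ofReal (‖ψ (x + n * q₀)‖ ^ 2 * ‖f x‖ ^ 2))
        = ENNReal.ofReal (χ * ‖f x‖ ^ 2) := by
      filter_upwards [hχsum'] with x hx
      calc (∑' n : ℤ, ENNReal.ofReal (‖ψ (x + n * q₀)‖ ^ 2 * ‖f x‖ ^ 2))
          = ∑' n : ℤ, ENNReal.ofReal (‖ψ (x + n * q₀)‖ ^ 2) * ENNReal.ofReal (‖f x‖ ^ 2) := by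
            exact tsum_congr fun n => ENNReal.ofReal_mul (by positivity)
        _ = (∑' n : ℤ, ENNReal.ofReal (‖ψ (x + n * q₀)‖ ^ 2)) * ENNReal.ofReal (‖f x‖ ^ 2) :=
            ENNReal.tsum_mul_right
        _ = ENNReal.ofReal χ * ENNReal.ofReal (‖f x‖ ^ 2) := by
            rw [← ENNReal.ofReal_tsum_of_nonneg (fun n => by positivity) hx.1, hx.2]
        _ = ENNReal.ofReal (χ * ‖f x‖ ^ 2) := (ENNReal.ofReal_mul hχ.le).symm
    have hrhs : ∫⁻ x : ℝ, ENNReal.ofReal (χ * ‖f x‖ ^ 2)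
        = ENNReal.ofReal (χ * ∫ x : ℝ, ‖f x‖ ^ 2) := by
      rw [← (ofReal_integral_eq_lintegral_ofReal (hf_sq_int.const_mul χ)
        (Filter.Eventually.of_forall fun x => by positivity))]
      rw [integral_const_mul]
    have hmain : (∑' n : ℤ, ENNReal.ofReal (∫ x : ℝ, ‖ψ (x + n * q₀)‖ ^ 2 * ‖f x‖ ^ 2))
        = ENNReal.ofReal (χ * ∫ x : ℝ, ‖f x‖ ^ 2) := by
      rw [← hrhs, ← lintegral_congr_ae hae, hswap]
      exact tsum_congr fun n => (hplain n).symm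
    have := congrArg ENNReal.toReal hmain
    rw [ENNReal.tsum_toReal_eq (fun n => ENNReal.ofReal_ne_top)] at this
    have hint0 : 0 ≤ ∫ x : ℝ, ‖f x‖ ^ 2 := integral_nonneg fun x => by positivity
    rw [ENNReal.toReal_ofReal (mul_nonneg hχ.le hint0)] at this
    rw [← this]
    exact tsum_congr fun n => (ENNReal.toReal_ofReal (hterm_nonneg n)).symm
  -- norm of f
  have hnorm : ‖f‖ ^ 2 = ∫ x : ℝ, ‖f x‖ ^ 2 := by
    have h1 : (inner ℂ f f : ℂ) = RCLike.ofReal (K := ℂ) (∫ x : ℝ, ‖f x‖ ^ 2) := by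
      rw [MeasureTheory.L2.inner_def, ← integral_ofReal (𝕜 := ℂ)]
      apply integral_congr_ae
      apply Filter.Eventually.of_forall
      intro x
      simp only [RCLike.inner_apply', RCLike.conj_mul]
      norm_cast
    have h2 : ‖f‖ ^ 2 = RCLike.re (inner ℂ f f : ℂ) := norm_sq_eq_re_inner (𝕜 := ℂ) f
    rw [h2, h1, RCLike.ofReal_re]
  -- summability of the inner sums
  calc (∑' n : ℤ, ∑' m : ℤ, ‖(inner ℂ (ψe ε n m) f : ℂ)‖ ^ 2)
      = ∑' n : ℤ, T / ε * ∫ x : ℝ, ‖ψ (x + n * q₀)‖ ^ 2 * ‖f x‖ ^ 2 := tsum_congr key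
    _ = T / ε * ∑' n : ℤ, ∫ x : ℝ, ‖ψ (x + n * q₀)‖ ^ 2 * ‖f x‖ ^ 2 := tsum_mul_left
    _ = T / ε * (χ * ∫ x : ℝ, ‖f x‖ ^ 2) := by rw [tonelli]
    _ = 2 * χ * c / ε * ‖f‖ ^ 2 := by rw [hnorm, hTdef]; ring
end

section
/- For every n, m ∈ ℤ, as ε → 0⁺ the frame vectors ψ^{ε}_{(n,m)} converge to ψ^{A,B}_{(n,m)} in L²(ℝ); that is, lim_{ε→0⁺} ‖ψ^{ε}_{(n,m)} − ψ^{A,B}_{(n,m)}‖_{L²(ℝ)} = 0, and moreover ψ^{ε}_{(n,m)}(x) → ψ^{A,B}_{(n,m)}(x) for every x ∈ ℝ (for the given pointwise representatives). -/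
open MeasureTheory Filter Topology

lemma exp_slope_aux : Tendsto (fun t : ℝ => (Real.exp t - 1) / t) (𝓝[≠] (0:ℝ)) (𝓝 1) := by
  have h := Real.hasDerivAt_exp 0
  rw [hasDerivAt_iff_tendsto_slope] at h
  simpa [slope_fun_def, Real.exp_zero, div_eq_inv_mul] using h

lemma sinh_slope_aux : Tendsto (fun s : ℝ => Real.sinh s / s) (𝓝[≠] (0:ℝ)) (𝓝 1) := by
  have h := Real.hasDerivAt_sinh 0
  rw [hasDerivAt_iff_tendsto_slope] at h
  simpa [slope_fun_def, Real.sinh_zero, Real.cosh_zero, div_eq_inv_mul] using h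

lemma exp_quad_aux : Tendsto (fun t : ℝ => (Real.exp t - 1 - t) / t ^ 2) (𝓝[≠] (0:ℝ)) (𝓝 (1/2)) := by
  have h1 : ∀ᶠ t in 𝓝[≠] (0:ℝ), ‖(Real.exp t - 1 - t) / t ^ 2 - 1/2‖ ≤ (2/9) * |t| := by
    have hball : ∀ᶠ t in 𝓝 (0:ℝ), |t| ≤ 1 := by
      filter_upwards [Icc_mem_nhds (show (-1:ℝ) < 0 by norm_num) (show (0:ℝ) < 1 by norm_num)]
        with t ht
      exact abs_le.2 ht
    filter_upwards [hball.filter_mono nhdsWithin_le_nhds, self_mem_nhdsWithin] with t htle ht0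
    have ht0' : t ≠ 0 := ht0
    have ht2 : (0:ℝ) < t ^ 2 := by positivity
    have hb := Real.exp_bound htle (n := 3) (by norm_num)
    have hsum : ∑ m ∈ Finset.range 3, t ^ m / m.factorial = 1 + t + t ^ 2 / 2 := by
      simp [Finset.sum_range_succ, Nat.factorial]
    rw [hsum] at hb
    have hkey : (Real.exp t - 1 - t) / t ^ 2 - 1/2 = (Real.exp t - (1 + t + t ^ 2 / 2)) / t ^ 2 := by
      field_simp
      ring
    rw [Real.norm_eq_abs, hkey, abs_div, abs_of_pos ht2]
    rw [div_le_iff₀ ht2]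
    refine hb.trans ?_
    have habs : |t| ^ 3 = |t| * t ^ 2 := by
      rw [← sq_abs]; ring
    rw [habs]
    have h9 : ((Nat.succ 3 : ℕ) : ℝ) / ((Nat.factorial 3 : ℕ) * ((3:ℕ):ℝ)) = 2/9 := by
      norm_num [Nat.factorial]
    rw [h9]
    ring_nf
    exact le_rfl
  have h2 : Tendsto (fun t : ℝ => (2/9) * |t|) (𝓝[≠] (0:ℝ)) (𝓝 0) := by
    have : Tendsto (fun t : ℝ => (2/9) * |t|) (𝓝 (0:ℝ)) (𝓝 ((2/9) * |0|)) :=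
      (continuous_const.mul continuous_abs).tendsto 0
    simpa using this.mono_left nhdsWithin_le_nhds
  have h3 := squeeze_zero_norm' h1 h2
  have := h3.add (tendsto_const_nhds (x := (1/2:ℝ)))
  simpa using this

lemma alg_aux1 (a b s e1 u E p mm ε : ℝ) (hε : ε ≠ 0) (hb : b ≠ 0) (hs : s ≠ 0)
    (h1 : 1 - e1 ≠ 0) :
    -(ε * e1 * p * mm) / s * ((a * (u / (1 - e1)) + b) / (ε * b)) +
      -(ε * e1 * p * mm) / s * ((E - 1) / ε) =
    a * (-e1 * p * mm / (b * s) * u / (1 - e1)) + b * (-e1 * p * mm / (b * s)) * E := by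
  field_simp
  ring

lemma alg_aux0 (a b s e1 E p mm ε : ℝ) (hε : ε ≠ 0) (hb : b ≠ 0) (hs : s ≠ 0) :
    -(ε * e1 * p * mm) / s * ((a * 1 + b) / (ε * b)) +
      -(ε * e1 * p * mm) / s * ((E - 1) / ε) =
    a * (-e1 * p * mm / (b * s)) + b * (-e1 * p * mm / (b * s)) * E := by
  field_simp
  ring

lemma norm_exp_I_mul_real (r : ℝ) : ‖Complex.exp (Complex.I * (r:ℂ))‖ = 1 := by
  rw [Complex.norm_exp]
  simp

lemma norm_formula (f : Lp ℂ 2 (volume : Measure ℝ)) :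
    ‖f‖ = Real.sqrt (∫ x : ℝ, ‖f x‖ ^ 2) := by
  rw [Lp.norm_def,
    MemLp.eLpNorm_eq_integral_rpow_norm two_ne_zero ENNReal.ofNat_ne_top (Lp.memLp f)]
  rw [ENNReal.toReal_ofReal (Real.rpow_nonneg
    (integral_nonneg fun x => Real.rpow_nonneg (norm_nonneg _) _) _)]
  rw [Real.sqrt_eq_rpow]
  norm_num [Real.rpow_natCast]

set_option maxHeartbeats 1000000 in
lemma phase_limit_aux (A B L q₀ p₀ a₀ b₀ : ℝ) (n m : ℤ)
    (hA : A ≠ 0) (hL : 0 < L) (hq₀ : q₀ ≠ 0)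
    (hp₀ : p₀ = Real.pi / (A * L)) (hab : a₀ + b₀ = B)
    (hb : ∀ ε ∈ Set.Ioc (0:ℝ) 1, b₀ - A / ε ≠ 0)
    (β γ : ℝ → ℤ → ℤ → ℝ)
    (hβ : ∀ (ε : ℝ) (n m : ℤ), β ε n m =
      -Real.exp (-(ε * n * q₀)) * Real.pi * m / ((b₀ - A / ε) * Real.sinh (ε * L)))
    (hγ : ∀ (ε : ℝ) (n m : ℤ), n ≠ 0 → γ ε n m =
      β ε n m * (ε * n * q₀) / (1 - Real.exp (-(ε * n * q₀))))
    (hγ₀ : ∀ (ε : ℝ) (m : ℤ), γ ε 0 m = β ε 0 m)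
    (x : ℝ) :
    Tendsto (fun ε : ℝ => (a₀ + A / ε) * γ ε n m +
        (b₀ - A / ε) * β ε n m * Real.exp (-(ε * x)))
      (𝓝[>] (0:ℝ))
      (𝓝 (A * m * n * q₀ * p₀ / 2 + B * m * p₀ + Real.pi * m * x / L)) := by
  have hmono : 𝓝[>] (0:ℝ) ≤ 𝓝[≠] (0:ℝ) :=
    nhdsWithin_mono 0 (fun y hy => ne_of_gt hy)
  set c : ℝ → ℝ := fun ε => if n = 0 then 1 else (ε * n * q₀) / (1 - Real.exp (-(ε * n * q₀)))
    with hc_def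
  set T : ℝ → ℝ := fun ε => -(ε * Real.exp (-(ε * n * q₀)) * Real.pi * m) / Real.sinh (ε * L)
    with hT_def
  have h_sinh : Tendsto (fun ε : ℝ => ε * L / Real.sinh (ε * L)) (𝓝[>] (0:ℝ)) (𝓝 1) := by
    have hεL : Tendsto (fun ε : ℝ => ε * L) (𝓝[>] (0:ℝ)) (𝓝[≠] (0:ℝ)) := by
      rw [tendsto_nhdsWithin_iff]
      constructor
      · have h0 : Tendsto (fun ε : ℝ => ε * L) (𝓝 0) (𝓝 (0 * L)) :=
          (continuous_id.mul continuous_const).tendsto 0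
        rw [zero_mul] at h0
        exact h0.mono_left nhdsWithin_le_nhds
      · filter_upwards [self_mem_nhdsWithin] with ε hε
        exact (mul_pos hε hL).ne'
    have := (sinh_slope_aux.comp hεL).inv₀ one_ne_zero
    simpa [Function.comp, inv_div] using this
  have hexpu : Tendsto (fun ε : ℝ => Real.exp (-(ε * n * q₀))) (𝓝[>] (0:ℝ)) (𝓝 1) := by
    have hcont : Continuous fun ε : ℝ => Real.exp (-(ε * n * q₀)) := by fun_prop
    simpa using (hcont.tendsto 0).mono_left nhdsWithin_le_nhds
  have hT : Tendsto T (𝓝[>] (0:ℝ)) (𝓝 (-(Real.pi * m) / L)) := by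
    have heq : ∀ ε : ℝ, T ε =
        -(Real.pi * m) * Real.exp (-(ε * n * q₀)) * (ε * L / Real.sinh (ε * L)) / L := by
      intro ε
      rw [hT_def]
      rcases eq_or_ne (Real.sinh (ε * L)) 0 with hs | hs
      · simp [hs]
      · field_simp
    have h2 := ((hexpu.const_mul (-(Real.pi * m))).mul h_sinh).div_const L
    have h3 := h2.congr (fun ε => (heq ε).symm)
    simpa using h3
  have hc : Tendsto c (𝓝[>] (0:ℝ)) (𝓝 1) := by
    by_cases hn : n = 0
    · simpa [hc_def, hn] using tendsto_const_nhds
    · have hu : Tendsto (fun ε : ℝ => -(ε * n * q₀)) (𝓝[>] (0:ℝ)) (𝓝[≠] (0:ℝ)) := by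
        rw [tendsto_nhdsWithin_iff]
        constructor
        · have hcont : Continuous fun ε : ℝ => -(ε * (n:ℝ) * q₀) := by fun_prop
          simpa using (hcont.tendsto 0).mono_left nhdsWithin_le_nhds
        · filter_upwards [self_mem_nhdsWithin] with ε hε
          exact neg_ne_zero.2 (mul_ne_zero (mul_ne_zero (ne_of_gt hε) (Int.cast_ne_zero.2 hn)) hq₀)
      have h1 := (exp_slope_aux.comp hu).inv₀ one_ne_zero
      have h2 : Tendsto (fun ε : ℝ => -(ε * (n:ℝ) * q₀) / (Real.exp (-(ε * n * q₀)) - 1))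
          (𝓝[>] (0:ℝ)) (𝓝 1) := by
        simpa [Function.comp, inv_div] using h1
      refine h2.congr fun ε => ?_
      simp only [hc_def, if_neg hn]
      rw [show Real.exp (-(ε * (n:ℝ) * q₀)) - 1 = -(1 - Real.exp (-(ε * n * q₀))) by ring]
      rw [neg_div_neg_eq]
  have hAc : Tendsto (fun ε : ℝ => A / ε * (c ε - 1)) (𝓝[>] (0:ℝ)) (𝓝 (A * n * q₀ / 2)) := by
    by_cases hn : n = 0
    · simpa [hc_def, hn] using tendsto_const_nhds
    · have hu : Tendsto (fun ε : ℝ => -(ε * n * q₀)) (𝓝[>] (0:ℝ)) (𝓝[≠] (0:ℝ)) := by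
        rw [tendsto_nhdsWithin_iff]
        constructor
        · have hcont : Continuous fun ε : ℝ => -(ε * (n:ℝ) * q₀) := by fun_prop
          simpa using (hcont.tendsto 0).mono_left nhdsWithin_le_nhds
        · filter_upwards [self_mem_nhdsWithin] with ε hε
          exact neg_ne_zero.2 (mul_ne_zero (mul_ne_zero (ne_of_gt hε) (Int.cast_ne_zero.2 hn)) hq₀)
      have hq2 := exp_quad_aux.comp hu
      have h2 := (hq2.const_mul (A * (n * q₀))).mul hc
      have hval : A * ((n:ℝ) * q₀) * (1/2) * 1 = A * n * q₀ / 2 := by ring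
      rw [← hval]
      refine h2.congr' ?_
      filter_upwards [self_mem_nhdsWithin] with ε hε
      have hε0 : (ε:ℝ) ≠ 0 := ne_of_gt hε
      have hu0 : ε * (n:ℝ) * q₀ ≠ 0 :=
        mul_ne_zero (mul_ne_zero hε0 (Int.cast_ne_zero.2 hn)) hq₀
      have h1e : 1 - Real.exp (-(ε * (n:ℝ) * q₀)) ≠ 0 := by
        refine sub_ne_zero.2 fun h => hu0 ?_
        have h2' := (Real.exp_eq_one_iff _).1 h.symm
        linarith [neg_eq_zero.1 h2']
      simp only [Function.comp, hc_def, if_neg hn]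
      field_simp
      have h1e' : 1 - Real.exp (-((n:ℝ) * q₀ * ε)) ≠ 0 := by
        rwa [show (n:ℝ) * q₀ * ε = ε * n * q₀ by ring]
      field_simp
      ring
  have hnum : Tendsto (fun ε : ℝ => (a₀ + A / ε) * c ε + (b₀ - A / ε)) (𝓝[>] (0:ℝ))
      (𝓝 (B + A * n * q₀ / 2)) := by
    have h1 := ((hc.const_mul a₀).add_const b₀).add hAc
    have hval : a₀ * 1 + b₀ + A * (n:ℝ) * q₀ / 2 = B + A * n * q₀ / 2 := by
      rw [← hab]; ring
    rw [← hval]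
    exact h1.congr fun ε => by ring
  have hden : Tendsto (fun ε : ℝ => ε * (b₀ - A / ε)) (𝓝[>] (0:ℝ)) (𝓝 (-A)) := by
    have h1 : Tendsto (fun ε : ℝ => ε * b₀ - A) (𝓝[>] (0:ℝ)) (𝓝 (-A)) := by
      have hcont : Continuous fun ε : ℝ => ε * b₀ - A := by fun_prop
      simpa using (hcont.tendsto 0).mono_left nhdsWithin_le_nhds
    refine h1.congr' ?_
    filter_upwards [self_mem_nhdsWithin] with ε hε
    have hε' : (ε:ℝ) ≠ 0 := ne_of_gt hε
    rw [mul_sub, mul_comm ε (A / ε), div_mul_cancel₀ A hε']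
  have hfrac := hnum.div hden (neg_ne_zero.2 hA)
  have hx : Tendsto (fun ε : ℝ => (Real.exp (-(ε * x)) - 1) / ε) (𝓝[>] (0:ℝ)) (𝓝 (-x)) := by
    have hd : HasDerivAt (fun ε : ℝ => Real.exp (-(ε * x))) (-x) 0 := by
      have h1 : HasDerivAt (fun ε : ℝ => -(ε * x)) (-(1 * x)) 0 :=
        ((hasDerivAt_id 0).mul_const x).neg
      have := h1.exp
      simpa using this
    rw [hasDerivAt_iff_tendsto_slope] at hd
    have := hd.mono_left hmono
    simpa [slope_fun_def, div_eq_inv_mul] using this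
  have hmain := (hT.mul hfrac).add (hT.mul hx)
  have hval : -(Real.pi * m) / L * ((B + A * (n:ℝ) * q₀ / 2) / -A) + -(Real.pi * m) / L * -x
      = A * m * n * q₀ * p₀ / 2 + B * m * p₀ + Real.pi * m * x / L := by
    rw [hp₀]
    field_simp
    ring
  rw [← hval]
  refine hmain.congr' ?_
  filter_upwards [Ioc_mem_nhdsGT zero_lt_one] with ε hε
  obtain ⟨hε0, hε1⟩ := hε
  have hbne := hb ε ⟨hε0, hε1⟩
  have hsinh : Real.sinh (ε * L) ≠ 0 := ne_of_gt (Real.sinh_pos_iff.2 (mul_pos hε0 hL))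
  have hε0' : (ε:ℝ) ≠ 0 := ne_of_gt hε0
  by_cases hn : n = 0
  · subst hn
    rw [hγ₀, hβ]
    simp only [hc_def, hT_def, Pi.div_apply]
    simp only [if_true]
    exact alg_aux0 (a₀ + A / ε) (b₀ - A / ε) (Real.sinh (ε * L))
      (Real.exp (-(ε * ((0:ℤ):ℝ) * q₀))) (Real.exp (-(ε * x))) Real.pi (m:ℝ) ε
      hε0' hbne hsinh
  · have hu0 : ε * (n:ℝ) * q₀ ≠ 0 :=
      mul_ne_zero (mul_ne_zero hε0' (Int.cast_ne_zero.2 hn)) hq₀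
    have h1e : 1 - Real.exp (-(ε * (n:ℝ) * q₀)) ≠ 0 := by
      refine sub_ne_zero.2 fun h => hu0 ?_
      have h2 := (Real.exp_eq_one_iff _).1 h.symm
      linarith [neg_eq_zero.1 h2]
    rw [hγ _ _ _ hn, hβ]
    simp only [hc_def, hT_def, Pi.div_apply]
    rw [if_neg hn]
    exact alg_aux1 (a₀ + A / ε) (b₀ - A / ε) (Real.sinh (ε * L))
      (Real.exp (-(ε * (n:ℝ) * q₀))) (ε * (n:ℝ) * q₀) (Real.exp (-(ε * x))) Real.pi (m:ℝ) ε
      hε0' hbne hsinh h1e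
theorem contraction_of_frame_vectors
    (A B L q₀ p₀ χ : ℝ)
    (hA : A ≠ 0) (hL : 0 < L) (hq₀ : q₀ ≠ 0) (hχ : 0 < χ)
    (hp₀ : p₀ = Real.pi / (A * L))
    (hq₀p₀ : |q₀ * p₀| < 2 * Real.pi)
    (ψ : Lp ℂ 2 (volume : Measure ℝ)) (hψ : ψ ≠ 0)
    (hsupp : ∀ᵐ x : ℝ ∂volume, L < |x| → ψ x = 0)
    (hχsum : ∀ᵐ x : ℝ ∂volume, ∑' n : ℤ, ‖ψ (x + n * q₀)‖ ^ 2 = χ)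
    (ψAB : ℤ → ℤ → Lp ℂ 2 (volume : Measure ℝ))
    (hψAB : ∀ n m : ℤ, ⇑(ψAB n m) =ᵐ[volume] fun x : ℝ =>
      Complex.exp (Complex.I * Complex.ofReal (A * m * n * q₀ * p₀ / 2)) *
      Complex.exp (Complex.I * Complex.ofReal (B * m * p₀)) *
      Complex.exp (Complex.I * Complex.ofReal (Real.pi * m * x / L)) *
      ψ (x + n * q₀))
    (a₀ b₀ : ℝ) (hab : a₀ + b₀ = B)
    (hb : ∀ ε ∈ Set.Ioc (0:ℝ) 1, b₀ - A / ε ≠ 0)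
    (β γ : ℝ → ℤ → ℤ → ℝ)
    (hβ : ∀ (ε : ℝ) (n m : ℤ), β ε n m =
      -Real.exp (-(ε * n * q₀)) * Real.pi * m / ((b₀ - A / ε) * Real.sinh (ε * L)))
    (hγ : ∀ (ε : ℝ) (n m : ℤ), n ≠ 0 → γ ε n m =
      β ε n m * (ε * n * q₀) / (1 - Real.exp (-(ε * n * q₀))))
    (hγ₀ : ∀ (ε : ℝ) (m : ℤ), γ ε 0 m = β ε 0 m)
    (ψe : ℝ → ℤ → ℤ → Lp ℂ 2 (volume : Measure ℝ))
    (hψe : ∀ ε ∈ Set.Ioc (0:ℝ) 1, ∀ n m : ℤ, ⇑(ψe ε n m) =ᵐ[volume] fun x : ℝ =>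
      Complex.exp (Complex.I * Complex.ofReal ((a₀ + A / ε) * γ ε n m)) *
      Complex.exp (Complex.I * Complex.ofReal ((b₀ - A / ε) * β ε n m * Real.exp (-(ε * x)))) *
      Complex.ofReal (Real.exp (-(ε * (x + n * q₀) / 2))) *
      ψ (x + n * q₀))
    (n m : ℤ) :
    Filter.Tendsto (fun ε : ℝ => ‖ψe ε n m - ψAB n m‖) (𝓝[>] (0:ℝ)) (𝓝 0) ∧
    ∀ x : ℝ, Filter.Tendsto (fun ε : ℝ =>
        Complex.exp (Complex.I * Complex.ofReal ((a₀ + A / ε) * γ ε n m)) *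
        Complex.exp (Complex.I * Complex.ofReal ((b₀ - A / ε) * β ε n m * Real.exp (-(ε * x)))) *
        Complex.ofReal (Real.exp (-(ε * (x + n * q₀) / 2))) *
        ψ (x + n * q₀))
      (𝓝[>] (0:ℝ))
      (𝓝 (Complex.exp (Complex.I * Complex.ofReal (A * m * n * q₀ * p₀ / 2)) *
        Complex.exp (Complex.I * Complex.ofReal (B * m * p₀)) *
        Complex.exp (Complex.I * Complex.ofReal (Real.pi * m * x / L)) *
        ψ (x + n * q₀))) := by
  have hsplit : ∀ p q : ℝ, Complex.exp (Complex.I * Complex.ofReal (p + q)) =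
      Complex.exp (Complex.I * Complex.ofReal p) * Complex.exp (Complex.I * Complex.ofReal q) := by
    intro p q
    rw [← Complex.exp_add]
    congr 1
    push_cast
    ring
  have hpt : ∀ x : ℝ, Filter.Tendsto (fun ε : ℝ =>
      Complex.exp (Complex.I * Complex.ofReal ((a₀ + A / ε) * γ ε n m)) *
      Complex.exp (Complex.I * Complex.ofReal ((b₀ - A / ε) * β ε n m * Real.exp (-(ε * x)))) *
      Complex.ofReal (Real.exp (-(ε * (x + n * q₀) / 2))) *
      ψ (x + n * q₀))
      (𝓝[>] (0:ℝ))
      (𝓝 (Complex.exp (Complex.I * Complex.ofReal (A * m * n * q₀ * p₀ / 2)) *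
        Complex.exp (Complex.I * Complex.ofReal (B * m * p₀)) *
        Complex.exp (Complex.I * Complex.ofReal (Real.pi * m * x / L)) *
        ψ (x + n * q₀))) := by
    intro x
    have hθ := phase_limit_aux A B L q₀ p₀ a₀ b₀ n m hA hL hq₀ hp₀ hab hb β γ hβ hγ hγ₀ x
    have hphase : Tendsto (fun ε : ℝ => Complex.exp (Complex.I *
        Complex.ofReal ((a₀ + A / ε) * γ ε n m +
          (b₀ - A / ε) * β ε n m * Real.exp (-(ε * x)))))
        (𝓝[>] (0:ℝ)) (𝓝 (Complex.exp (Complex.I *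
          Complex.ofReal (A * m * n * q₀ * p₀ / 2 + B * m * p₀ + Real.pi * m * x / L)))) := by
      have hcont : Continuous fun r : ℝ => Complex.exp (Complex.I * Complex.ofReal r) :=
        Complex.continuous_exp.comp (continuous_const.mul Complex.continuous_ofReal)
      exact (hcont.tendsto _).comp hθ
    have henv : Tendsto (fun ε : ℝ => (Complex.ofReal (Real.exp (-(ε * (x + (n:ℝ) * q₀) / 2)))))
        (𝓝[>] (0:ℝ)) (𝓝 1) := by
      have hcont : Continuous fun ε : ℝ =>
          (Complex.ofReal (Real.exp (-(ε * (x + (n:ℝ) * q₀) / 2)))) := by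
        fun_prop
      have h0 := (hcont.tendsto 0).mono_left
        (nhdsWithin_le_nhds : 𝓝[>] (0:ℝ) ≤ 𝓝 0)
      simpa using h0
    have hcomb := (hphase.mul henv).mul_const (ψ (x + (n:ℝ) * q₀))
    have htarg : Complex.exp (Complex.I *
          Complex.ofReal (A * m * n * q₀ * p₀ / 2 + B * m * p₀ + Real.pi * m * x / L)) * 1 *
          ψ (x + (n:ℝ) * q₀)
        = Complex.exp (Complex.I * Complex.ofReal (A * m * n * q₀ * p₀ / 2)) *
          Complex.exp (Complex.I * Complex.ofReal (B * m * p₀)) *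
          Complex.exp (Complex.I * Complex.ofReal (Real.pi * m * x / L)) *
          ψ (x + (n:ℝ) * q₀) := by
      rw [hsplit, hsplit, mul_one]
    rw [htarg] at hcomb
    refine hcomb.congr fun ε => ?_
    rw [hsplit]
  refine ⟨?_, hpt⟩
  rw [tendsto_iff_seq_tendsto]
  intro e he
  have hev : ∀ᶠ k in atTop, e k ∈ Set.Ioc (0:ℝ) 1 := he (Ioc_mem_nhdsGT zero_lt_one)
  have hmp : MeasurePreserving (fun x : ℝ => x + (n:ℝ) * q₀) volume volume :=
    measurePreserving_add_right volume _
  have hmem2 : MemLp (fun x : ℝ => ψ (x + (n:ℝ) * q₀)) 2 volume :=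
    (Lp.memLp ψ).comp_measurePreserving hmp
  have hgmem : MemLp (fun x : ℝ => (Real.exp (L / 2) + 1) * ‖ψ (x + (n:ℝ) * q₀)‖) 2 volume :=
    hmem2.norm.const_mul _
  have hbint : Integrable (fun x : ℝ => ((Real.exp (L / 2) + 1) * ‖ψ (x + (n:ℝ) * q₀)‖) ^ 2)
      volume := (memLp_two_iff_integrable_sq hgmem.aestronglyMeasurable).1 hgmem
  have hsupp' : ∀ᵐ x : ℝ ∂(volume : Measure ℝ),
      L < |x + (n:ℝ) * q₀| → ψ (x + (n:ℝ) * q₀) = 0 :=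
    hmp.quasiMeasurePreserving.ae hsupp
  have h_bound : ∀ᶠ k in atTop, ∀ᵐ x : ℝ ∂volume,
      ‖‖(ψe (e k) n m - ψAB n m : Lp ℂ 2 volume) x‖ ^ 2‖ ≤
        ((Real.exp (L / 2) + 1) * ‖ψ (x + (n:ℝ) * q₀)‖) ^ 2 := by
    filter_upwards [hev] with k hk
    filter_upwards [hψe (e k) hk n m, Lp.coeFn_sub (ψe (e k) n m) (ψAB n m), hψAB n m, hsupp']
      with x h1 h2 h3 h4
    rw [Real.norm_eq_abs, abs_of_nonneg (by positivity)]
    have hd : ‖(ψe (e k) n m - ψAB n m : Lp ℂ 2 volume) x‖ ≤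
        (Real.exp (L / 2) + 1) * ‖ψ (x + (n:ℝ) * q₀)‖ := by
      rw [h2, Pi.sub_apply, h1, h3]
      refine (norm_sub_le _ _).trans ?_
      simp only [norm_mul, norm_exp_I_mul_real, one_mul, Complex.norm_real, Real.norm_eq_abs,
        Real.abs_exp]
      by_cases hz : ψ (x + (n:ℝ) * q₀) = 0
      · simp [hz]
      · have hxl : |x + (n:ℝ) * q₀| ≤ L := not_lt.1 fun hlt => hz (h4 hlt)
        have hyl : -L ≤ x + (n:ℝ) * q₀ := (abs_le.1 hxl).1
        have hexp : Real.exp (-(e k * (x + (n:ℝ) * q₀) / 2)) ≤ Real.exp (L / 2) := by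
          apply Real.exp_le_exp.2
          nlinarith [hk.1, hk.2, mul_nonneg (sub_nonneg.2 hk.2) hL.le,
            mul_nonneg hk.1.le (by linarith : (0:ℝ) ≤ x + (n:ℝ) * q₀ + L)]
        have hψn : (0:ℝ) ≤ ‖ψ (x + (n:ℝ) * q₀)‖ := norm_nonneg _
        nlinarith [mul_le_mul_of_nonneg_right hexp hψn]
    exact pow_le_pow_left₀ (norm_nonneg _) hd 2
  have h_lim : ∀ᵐ x : ℝ ∂volume, Tendsto
      (fun k => ‖(ψe (e k) n m - ψAB n m : Lp ℂ 2 volume) x‖ ^ 2) atTop (𝓝 0) := by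
    have hae1 : ∀ᵐ x : ℝ ∂volume, ∀ k : ℕ, e k ∈ Set.Ioc (0:ℝ) 1 →
        (ψe (e k) n m) x =
          Complex.exp (Complex.I * Complex.ofReal ((a₀ + A / e k) * γ (e k) n m)) *
          Complex.exp (Complex.I * Complex.ofReal
            ((b₀ - A / e k) * β (e k) n m * Real.exp (-(e k * x)))) *
          Complex.ofReal (Real.exp (-(e k * (x + (n:ℝ) * q₀) / 2))) *
          ψ (x + (n:ℝ) * q₀) := by
      rw [ae_all_iff]
      intro k
      by_cases hk : e k ∈ Set.Ioc (0:ℝ) 1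
      · filter_upwards [hψe (e k) hk n m] with x hx _
        exact hx
      · filter_upwards with x hk'
        exact absurd hk' hk
    have hae2 : ∀ᵐ x : ℝ ∂volume, ∀ k : ℕ,
        (ψe (e k) n m - ψAB n m : Lp ℂ 2 volume) x = (ψe (e k) n m) x - (ψAB n m) x :=
      ae_all_iff.2 fun k => Lp.coeFn_sub _ _
    filter_upwards [hae1, hae2, hψAB n m] with x h1 h2 h3
    have hF := (hpt x).comp he
    have h0 : Tendsto (fun k =>
        ‖(Complex.exp (Complex.I * Complex.ofReal ((a₀ + A / e k) * γ (e k) n m)) *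
          Complex.exp (Complex.I * Complex.ofReal
            ((b₀ - A / e k) * β (e k) n m * Real.exp (-(e k * x)))) *
          Complex.ofReal (Real.exp (-(e k * (x + (n:ℝ) * q₀) / 2))) *
          ψ (x + (n:ℝ) * q₀)) -
          (Complex.exp (Complex.I * Complex.ofReal (A * m * n * q₀ * p₀ / 2)) *
          Complex.exp (Complex.I * Complex.ofReal (B * m * p₀)) *
          Complex.exp (Complex.I * Complex.ofReal (Real.pi * m * x / L)) *
          ψ (x + (n:ℝ) * q₀))‖ ^ 2) atTop (𝓝 0) := by
      have h4 := hF.sub_const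
        (Complex.exp (Complex.I * Complex.ofReal (A * m * n * q₀ * p₀ / 2)) *
          Complex.exp (Complex.I * Complex.ofReal (B * m * p₀)) *
          Complex.exp (Complex.I * Complex.ofReal (Real.pi * m * x / L)) *
          ψ (x + (n:ℝ) * q₀))
      have h5 := h4.norm.pow 2
      simpa using h5
    refine h0.congr' ?_
    filter_upwards [hev] with k hk
    rw [h2 k, h1 k hk, h3]
  have hInt : Tendsto (fun k => ∫ x : ℝ, ‖(ψe (e k) n m - ψAB n m : Lp ℂ 2 volume) x‖ ^ 2)
      atTop (𝓝 0) := by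
    have := tendsto_integral_filter_of_dominated_convergence (μ := volume)
      (F := fun k => fun x : ℝ => ‖(ψe (e k) n m - ψAB n m : Lp ℂ 2 volume) x‖ ^ 2)
      (f := fun _ : ℝ => (0:ℝ))
      (fun x : ℝ => ((Real.exp (L / 2) + 1) * ‖ψ (x + (n:ℝ) * q₀)‖) ^ 2)
      (Eventually.of_forall fun k =>
        ((Lp.aestronglyMeasurable _).norm.aemeasurable.pow_const 2).aestronglyMeasurable)
      h_bound hbint h_lim
    simpa using this
  have hfinal := (Real.continuous_sqrt.tendsto 0).comp hInt
  have h6 := hfinal.congr (fun k => (norm_formula (ψe (e k) n m - ψAB n m)).symm)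
  simpa [Function.comp_def] using h6
end

section
/- For every f ∈ L²(ℝ) and every n, m ∈ ℤ, the frame coefficients converge: lim_{ε→0⁺} ⟨ψ^{ε}_{(n,m)}, f⟩ = ⟨ψ^{A,B}_{(n,m)}, f⟩. -/
open MeasureTheory Filter Topology

lemma aux_slope_exp (y : ℝ) :
    Tendsto (fun ε : ℝ => (Real.exp (-(ε * y)) - 1) / ε) (𝓝[≠] (0:ℝ)) (𝓝 (-y)) := by
  have hd : HasDerivAt (fun ε : ℝ => Real.exp (-(ε * y))) (-y) 0 := by
    have h1 : HasDerivAt (fun ε : ℝ => -(ε * y)) (-y) (0:ℝ) := (hasDerivAt_mul_const y).neg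
    simpa using h1.exp
  have := hasDerivAt_iff_tendsto_slope.mp hd
  refine this.congr fun ε => ?_
  simp [slope_def_field]

lemma aux_slope_sinh {L : ℝ} (hL : 0 < L) :
    Tendsto (fun ε : ℝ => ε / Real.sinh (ε * L)) (𝓝[>] (0:ℝ)) (𝓝 L⁻¹) := by
  have hd : HasDerivAt (fun ε : ℝ => Real.sinh (ε * L)) L 0 := by
    have h1 : HasDerivAt (fun ε : ℝ => ε * L) L (0:ℝ) := hasDerivAt_mul_const L
    simpa using h1.sinh
  have h2 : Tendsto (fun ε : ℝ => Real.sinh (ε * L) / ε) (𝓝[≠] (0:ℝ)) (𝓝 L) := by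
    have := hasDerivAt_iff_tendsto_slope.mp hd
    refine this.congr fun ε => ?_
    simp [slope_def_field]
  have h3 := (h2.mono_left (nhdsWithin_mono 0 (fun y hy => ne_of_gt hy))).inv₀ (ne_of_gt hL)
  refine h3.congr fun ε => ?_
  rw [inv_div]

lemma aux_one_sub_exp :
    Tendsto (fun u : ℝ => (1 - Real.exp (-u)) / u) (𝓝[≠] (0:ℝ)) (𝓝 1) := by
  have h2 := (aux_slope_exp 1).neg
  simp only [mul_one, neg_neg] at h2
  exact h2.congr fun u => by rw [← neg_div, neg_sub]

lemma aux_half :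
    Tendsto (fun u : ℝ => (u - 1 + Real.exp (-u)) / u ^ 2) (𝓝[≠] (0:ℝ)) (𝓝 (1/2)) := by
  have hmem : ∀ᶠ u in 𝓝[≠] (0:ℝ), u ≠ 0 := eventually_mem_nhdsWithin
  apply HasDerivAt.lhopital_zero_nhdsNE
    (f' := fun u => 1 - Real.exp (-u)) (g' := fun u => 2 * u)
  · filter_upwards with u
    have h1 : HasDerivAt (fun u : ℝ => u - 1) 1 u := (hasDerivAt_id u).sub_const 1
    have h2 : HasDerivAt (fun u : ℝ => Real.exp (-u)) (Real.exp (-u) * (-1)) u :=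
      ((hasDerivAt_id u).neg).exp
    have : HasDerivAt (fun u : ℝ => u - 1 + Real.exp (-u)) (1 + Real.exp (-u) * (-1)) u :=
      h1.add h2
    convert this using 1
    ring
  · filter_upwards with u
    simpa using hasDerivAt_pow 2 u
  · filter_upwards [hmem] with u hu
    simpa using hu
  · have : Tendsto (fun u : ℝ => u - 1 + Real.exp (-u)) (𝓝 (0:ℝ)) (𝓝 0) := by
      have hc : Continuous fun u : ℝ => u - 1 + Real.exp (-u) := by continuity
      simpa using hc.tendsto 0
    exact this.mono_left nhdsWithin_le_nhds
  · have hc : Continuous fun u : ℝ => u ^ 2 := by continuity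
    have := hc.tendsto 0
    simp only [ne_eq, zero_pow, OfNat.ofNat_ne_zero, not_false_eq_true] at this
    simpa using this.mono_left nhdsWithin_le_nhds
  · have h2 := aux_one_sub_exp.div_const 2
    refine h2.congr fun u => ?_
    rw [div_div, mul_comm]

lemma phase_tendsto (A B L q₀ p₀ a₀ b₀ : ℝ)
    (hA : A ≠ 0) (hL : 0 < L) (hq₀ : q₀ ≠ 0)
    (hp₀ : p₀ = Real.pi / (A * L)) (hab : a₀ + b₀ = B)
    (hb : ∀ ε ∈ Set.Ioc (0:ℝ) 1, b₀ - A / ε ≠ 0)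
    (β γ : ℝ → ℤ → ℤ → ℝ)
    (hβ : ∀ (ε : ℝ) (n m : ℤ), β ε n m =
      -Real.exp (-(ε * n * q₀)) * Real.pi * m / ((b₀ - A / ε) * Real.sinh (ε * L)))
    (hγ : ∀ (ε : ℝ) (n m : ℤ), n ≠ 0 → γ ε n m =
      β ε n m * (ε * n * q₀) / (1 - Real.exp (-(ε * n * q₀))))
    (hγ₀ : ∀ (ε : ℝ) (m : ℤ), γ ε 0 m = β ε 0 m)
    (n m : ℤ) (x : ℝ) :
    Tendsto (fun ε : ℝ =>
        (a₀ + A / ε) * γ ε n m + (b₀ - A / ε) * β ε n m * Real.exp (-(ε * x)))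
      (𝓝[>] (0:ℝ))
      (𝓝 (A * m * n * q₀ * p₀ / 2 + B * m * p₀ + Real.pi * m * x / L)) := by
  classical
  set s : ℝ := (n : ℝ) * q₀ with hs
  obtain ⟨K, hK⟩ : ∃ K : ℝ → ℝ, K = fun ε =>
      -Real.exp (-(ε * s)) * Real.pi * m / Real.sinh (ε * L) := ⟨_, rfl⟩
  obtain ⟨G, hG⟩ : ∃ G : ℝ → ℝ, G = fun ε =>
      if n = 0 then (1:ℝ) else ε * s / (1 - Real.exp (-(ε * s))) := ⟨_, rfl⟩
  have hIoc : ∀ᶠ ε in 𝓝[>] (0:ℝ), ε ∈ Set.Ioc (0:ℝ) 1 :=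
    Ioc_mem_nhdsGT_of_mem ⟨le_refl 0, zero_lt_one⟩
  have hpos : ∀ᶠ ε in 𝓝[>] (0:ℝ), 0 < ε := eventually_mem_nhdsWithin
  have hne : 𝓝[>] (0:ℝ) ≤ 𝓝[≠] (0:ℝ) := nhdsWithin_mono 0 (fun y hy => ne_of_gt hy)
  have hsub : 𝓝[>] (0:ℝ) ≤ 𝓝 (0:ℝ) := nhdsWithin_le_nhds
  have hLne : L ≠ 0 := ne_of_gt hL
  have h4 : Tendsto (fun ε : ℝ => -Real.exp (-(ε * s)) * Real.pi * m) (𝓝[>] (0:ℝ))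
      (𝓝 (-Real.pi * m)) := by
    have hc : Continuous fun ε : ℝ => -Real.exp (-(ε * s)) * Real.pi * (m:ℝ) := by fun_prop
    have h' := (hc.tendsto 0).mono_left hsub
    simpa using h'
  -- limit of G
  have hG1 : Tendsto G (𝓝[>] (0:ℝ)) (𝓝 1) := by
    by_cases hn : n = 0
    · simp only [hG, hn, if_true]
      exact tendsto_const_nhds
    · have hsne : s ≠ 0 := mul_ne_zero (Int.cast_ne_zero.mpr hn) hq₀
      have hmap : Tendsto (fun ε : ℝ => ε * s) (𝓝[>] (0:ℝ)) (𝓝[≠] (0:ℝ)) := by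
        rw [tendsto_nhdsWithin_iff]
        constructor
        · have h' : Tendsto (fun ε : ℝ => ε * s) (𝓝 0) (𝓝 0) := by
            have := (continuous_mul_right s).tendsto (0:ℝ); rwa [zero_mul] at this
          exact h'.mono_left hsub
        · filter_upwards [hpos] with ε hε
          simp [mul_ne_zero (ne_of_gt hε) hsne]
      have h3 := (aux_one_sub_exp.comp hmap).inv₀ one_ne_zero
      simp only [inv_one] at h3
      refine h3.congr fun ε => ?_
      simp only [Function.comp_apply, inv_div, hG, if_neg hn]
  -- limit of K / c
  have hKc : Tendsto (fun ε : ℝ => K ε / (b₀ - A / ε)) (𝓝[>] (0:ℝ))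
      (𝓝 (Real.pi * m / (A * L))) := by
    have heq2 : ∀ᶠ ε in 𝓝[>] (0:ℝ), (-Real.exp (-(ε * s)) * Real.pi * m) *
        (ε / Real.sinh (ε * L)) * (ε * b₀ - A)⁻¹ = K ε / (b₀ - A / ε) := by
      filter_upwards [hpos] with ε hε
      have hε' : ε ≠ 0 := ne_of_gt hε
      have hcc : b₀ - A / ε = (ε * b₀ - A) / ε := by
        rw [eq_div_iff hε']
        field_simp
        try ring
      rw [hK]
      simp only
      rw [hcc, div_div_eq_mul_div]
      ring
    have h5 : Tendsto (fun ε : ℝ => (ε * b₀ - A)⁻¹) (𝓝[>] (0:ℝ)) (𝓝 (-A)⁻¹) := by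
      have hc : Continuous fun ε : ℝ => ε * b₀ - A := by fun_prop
      have h6 := (hc.tendsto 0).mono_left hsub
      simp only [zero_mul, zero_sub] at h6
      exact h6.inv₀ (neg_ne_zero.mpr hA)
    have h7 := (h4.mul (aux_slope_sinh hL)).mul h5
    rw [show Real.pi * (m:ℝ) / (A * L) = -Real.pi * m * L⁻¹ * (-A)⁻¹ by
      rw [inv_neg, div_eq_mul_inv, mul_inv]; ring]
    exact Tendsto.congr' heq2 h7
  -- limit of K * (exp(-εx) - 1)
  have hKe : Tendsto (fun ε : ℝ => K ε * (Real.exp (-(ε * x)) - 1)) (𝓝[>] (0:ℝ))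
      (𝓝 (Real.pi * m * x / L)) := by
    have heq3 : ∀ᶠ ε in 𝓝[>] (0:ℝ), (-Real.exp (-(ε * s)) * Real.pi * m) *
        ((Real.exp (-(ε * x)) - 1) / ε) * (ε / Real.sinh (ε * L))
        = K ε * (Real.exp (-(ε * x)) - 1) := by
      filter_upwards [hpos] with ε hε
      have hε' : ε ≠ 0 := ne_of_gt hε
      have hsinh : Real.sinh (ε * L) ≠ 0 := ne_of_gt (Real.sinh_pos_iff.mpr (mul_pos hε hL))
      rw [hK]
      simp only
      field_simp
      try ring
    have h7 := (h4.mul ((aux_slope_exp x).mono_left hne)).mul (aux_slope_sinh hL)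
    rw [show Real.pi * (m:ℝ) * x / L = -Real.pi * m * -x * L⁻¹ by
      rw [div_eq_mul_inv]; ring]
    exact Tendsto.congr' heq3 h7
  -- limit of K * (G - 1)
  have hKG : Tendsto (fun ε : ℝ => K ε * (G ε - 1)) (𝓝[>] (0:ℝ))
      (𝓝 (-(Real.pi * m * s / (2 * L)))) := by
    by_cases hn : n = 0
    · have hs0 : s = 0 := by simp [hs, hn]
      have hz : (fun ε : ℝ => K ε * (G ε - 1)) = fun _ => (0:ℝ) := by
        funext ε; simp [hG, hn]
      rw [hz, hs0]
      norm_num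
    · have hsne : s ≠ 0 := mul_ne_zero (Int.cast_ne_zero.mpr hn) hq₀
      have hmap : Tendsto (fun ε : ℝ => ε * s) (𝓝[>] (0:ℝ)) (𝓝[≠] (0:ℝ)) := by
        rw [tendsto_nhdsWithin_iff]
        constructor
        · have h' : Tendsto (fun ε : ℝ => ε * s) (𝓝 0) (𝓝 0) := by
            have := (continuous_mul_right s).tendsto (0:ℝ); rwa [zero_mul] at this
          exact h'.mono_left hsub
        · filter_upwards [hpos] with ε hε
          simp [mul_ne_zero (ne_of_gt hε) hsne]
      have hGlim : Tendsto (fun ε : ℝ => ε * s / (1 - Real.exp (-(ε * s)))) (𝓝[>] (0:ℝ))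
          (𝓝 1) := by
        have h3 := (aux_one_sub_exp.comp hmap).inv₀ one_ne_zero
        simp only [inv_one] at h3
        refine h3.congr fun ε => ?_
        simp [Function.comp_apply, inv_div]
      have h9 : Tendsto (fun ε : ℝ => (ε * s - 1 + Real.exp (-(ε * s))) / (ε * s) ^ 2)
          (𝓝[>] (0:ℝ)) (𝓝 (1/2)) := aux_half.comp hmap
      have heq4 : ∀ᶠ ε in 𝓝[>] (0:ℝ), (-Real.exp (-(ε * s)) * Real.pi * m) *
          ((ε * s - 1 + Real.exp (-(ε * s))) / (ε * s) ^ 2) *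
          (ε * s / (1 - Real.exp (-(ε * s)))) * (s * (ε / Real.sinh (ε * L)))
          = K ε * (G ε - 1) := by
        filter_upwards [hpos] with ε hε
        have hε' : ε ≠ 0 := ne_of_gt hε
        have hu : ε * s ≠ 0 := mul_ne_zero hε' hsne
        have hsinh : Real.sinh (ε * L) ≠ 0 := ne_of_gt (Real.sinh_pos_iff.mpr (mul_pos hε hL))
        have hden : 1 - Real.exp (-(ε * s)) ≠ 0 := by
          intro h
          have h1 : Real.exp (-(ε * s)) = 1 := by linarith
          rw [Real.exp_eq_one_iff] at h1
          exact hu (by linarith [neg_eq_zero.mp h1])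
        rw [hK, hG]
        simp only [if_neg hn]
        field_simp
        try ring
      have h8 : Tendsto (fun ε : ℝ => s * (ε / Real.sinh (ε * L))) (𝓝[>] (0:ℝ))
          (𝓝 (s * L⁻¹)) := tendsto_const_nhds.mul (aux_slope_sinh hL)
      have h7 := ((h4.mul h9).mul hGlim).mul h8
      rw [show -(Real.pi * (m:ℝ) * s / (2 * L)) = -Real.pi * m * (1/2) * 1 * (s * L⁻¹) by
        rw [div_eq_mul_inv, mul_inv]; ring]
      exact Tendsto.congr' heq4 h7
  -- main eventual equality
  have hmain : ∀ᶠ ε in 𝓝[>] (0:ℝ),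
      B * (G ε * (K ε / (b₀ - A / ε))) + (K ε * (Real.exp (-(ε * x)) - 1) - K ε * (G ε - 1))
      = (a₀ + A / ε) * γ ε n m + (b₀ - A / ε) * β ε n m * Real.exp (-(ε * x)) := by
    filter_upwards [hIoc] with ε hε
    obtain ⟨hε0, hε1⟩ := hε
    have hε' : ε ≠ 0 := ne_of_gt hε0
    have hc := hb ε ⟨hε0, hε1⟩
    have hβ' : β ε n m = K ε / (b₀ - A / ε) := by
      rw [hβ, hK]
      simp only
      rw [div_div, mul_comm (Real.sinh (ε * L)), hs]
      ring_nf
    have hγ' : γ ε n m = β ε n m * G ε := by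
      by_cases hn : n = 0
      · subst hn
        simp [hγ₀, hG]
      · rw [hγ ε n m hn, hG]
        simp only [if_neg hn, hs]
        rw [mul_div_assoc]
        ring_nf
    have ha : a₀ + A / ε = B - (b₀ - A / ε) := by rw [← hab]; ring
    rw [hγ', hβ', ha]
    have hcK : (b₀ - A / ε) * (K ε / (b₀ - A / ε)) = K ε := by
      rw [mul_comm]; exact div_mul_cancel₀ _ hc
    linear_combination (G ε - Real.exp (-(ε * x))) * hcK
  have h7 : Tendsto (fun ε : ℝ => B * (G ε * (K ε / (b₀ - A / ε)))
      + (K ε * (Real.exp (-(ε * x)) - 1) - K ε * (G ε - 1))) (𝓝[>] (0:ℝ))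
      (𝓝 (B * (1 * (Real.pi * (m:ℝ) / (A * L)))
        + (Real.pi * (m:ℝ) * x / L - -(Real.pi * (m:ℝ) * s / (2 * L))))) :=
    (tendsto_const_nhds.mul (hG1.mul hKc)).add (hKe.sub hKG)
  have hval : A * (m:ℝ) * (n:ℝ) * q₀ * p₀ / 2 + B * (m:ℝ) * p₀ + Real.pi * (m:ℝ) * x / L
      = B * (1 * (Real.pi * (m:ℝ) / (A * L)))
        + (Real.pi * (m:ℝ) * x / L - -(Real.pi * (m:ℝ) * s / (2 * L))) := by
    rw [hp₀, hs]
    field_simp [hA, hLne]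
    ring
  rw [hval]
  exact Tendsto.congr' hmain h7
theorem contraction_of_frame_coefficients
    (A B L q₀ p₀ χ : ℝ)
    (hA : A ≠ 0) (hL : 0 < L) (hq₀ : q₀ ≠ 0) (hχ : 0 < χ)
    (hp₀ : p₀ = Real.pi / (A * L))
    (hq₀p₀ : |q₀ * p₀| < 2 * Real.pi)
    (ψ : Lp ℂ 2 (volume : Measure ℝ)) (hψ : ψ ≠ 0)
    (hsupp : ∀ᵐ x : ℝ ∂volume, L < |x| → ψ x = 0)
    (hχsum : ∀ᵐ x : ℝ ∂volume, ∑' n : ℤ, ‖ψ (x + n * q₀)‖ ^ 2 = χ)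
    (ψAB : ℤ → ℤ → Lp ℂ 2 (volume : Measure ℝ))
    (hψAB : ∀ n m : ℤ, ⇑(ψAB n m) =ᵐ[volume] fun x : ℝ =>
      Complex.exp (Complex.I * Complex.ofReal (A * m * n * q₀ * p₀ / 2)) *
      Complex.exp (Complex.I * Complex.ofReal (B * m * p₀)) *
      Complex.exp (Complex.I * Complex.ofReal (Real.pi * m * x / L)) *
      ψ (x + n * q₀))
    (a₀ b₀ : ℝ) (hab : a₀ + b₀ = B)
    (hb : ∀ ε ∈ Set.Ioc (0:ℝ) 1, b₀ - A / ε ≠ 0)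
    (β γ : ℝ → ℤ → ℤ → ℝ)
    (hβ : ∀ (ε : ℝ) (n m : ℤ), β ε n m =
      -Real.exp (-(ε * n * q₀)) * Real.pi * m / ((b₀ - A / ε) * Real.sinh (ε * L)))
    (hγ : ∀ (ε : ℝ) (n m : ℤ), n ≠ 0 → γ ε n m =
      β ε n m * (ε * n * q₀) / (1 - Real.exp (-(ε * n * q₀))))
    (hγ₀ : ∀ (ε : ℝ) (m : ℤ), γ ε 0 m = β ε 0 m)
    (ψe : ℝ → ℤ → ℤ → Lp ℂ 2 (volume : Measure ℝ))
    (hψe : ∀ ε ∈ Set.Ioc (0:ℝ) 1, ∀ n m : ℤ, ⇑(ψe ε n m) =ᵐ[volume] fun x : ℝ =>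
      Complex.exp (Complex.I * Complex.ofReal ((a₀ + A / ε) * γ ε n m)) *
      Complex.exp (Complex.I * Complex.ofReal ((b₀ - A / ε) * β ε n m * Real.exp (-(ε * x)))) *
      Complex.ofReal (Real.exp (-(ε * (x + n * q₀) / 2))) *
      ψ (x + n * q₀))
    (f : Lp ℂ 2 (volume : Measure ℝ)) (n m : ℤ) :
    Filter.Tendsto (fun ε : ℝ => (inner ℂ (ψe ε n m) f : ℂ)) (𝓝[>] (0:ℝ))
      (𝓝 (inner ℂ (ψAB n m) f : ℂ)) := by
  classical
  have hmp : MeasurePreserving (fun x : ℝ => x + (n:ℝ) * q₀) volume volume :=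
    measurePreserving_add_right volume ((n:ℝ) * q₀)
  have hψm : AEStronglyMeasurable (fun x : ℝ => ψ (x + (n:ℝ) * q₀)) volume :=
    (Lp.aestronglyMeasurable ψ).comp_measurePreserving hmp
  have hψ2 : MemLp (fun x : ℝ => ψ (x + (n:ℝ) * q₀)) 2 volume :=
    (Lp.memLp ψ).comp_measurePreserving hmp
  have hsuppT : ∀ᵐ x : ℝ ∂volume, L < |x + (n:ℝ) * q₀| → ψ (x + (n:ℝ) * q₀) = 0 :=
    hmp.quasiMeasurePreserving.tendsto_ae.eventually hsupp
  have hIoc : Set.Ioc (0:ℝ) 1 ∈ 𝓝[>] (0:ℝ) := Ioc_mem_nhdsGT_of_mem ⟨le_refl 0, zero_lt_one⟩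
  -- express the inner products as integrals
  have hinner : ∀ᶠ ε in 𝓝[>] (0:ℝ), (inner ℂ (ψe ε n m) f : ℂ)
      = ∫ x : ℝ, (starRingEnd ℂ)
          (Complex.exp (Complex.I * Complex.ofReal ((a₀ + A / ε) * γ ε n m)) *
           Complex.exp (Complex.I * Complex.ofReal
             ((b₀ - A / ε) * β ε n m * Real.exp (-(ε * x)))) *
           Complex.ofReal (Real.exp (-(ε * (x + n * q₀) / 2))) *
           ψ (x + n * q₀)) * f x ∂volume := by
    filter_upwards [hIoc] with ε hε
    rw [MeasureTheory.L2.inner_def]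
    refine integral_congr_ae ?_
    filter_upwards [hψe ε hε n m] with x hx
    rw [RCLike.inner_apply, hx]; exact mul_comm _ _
  have hinner2 : (inner ℂ (ψAB n m) f : ℂ)
      = ∫ x : ℝ, (starRingEnd ℂ)
          (Complex.exp (Complex.I * Complex.ofReal (A * m * n * q₀ * p₀ / 2)) *
           Complex.exp (Complex.I * Complex.ofReal (B * m * p₀)) *
           Complex.exp (Complex.I * Complex.ofReal (Real.pi * m * x / L)) *
           ψ (x + n * q₀)) * f x ∂volume := by
    rw [MeasureTheory.L2.inner_def]
    refine integral_congr_ae ?_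
    filter_upwards [hψAB n m] with x hx
    rw [RCLike.inner_apply, hx]; exact mul_comm _ _
  rw [hinner2]
  refine Tendsto.congr' (EventuallyEq.symm hinner) ?_
  -- dominated convergence
  have hnormexp : ∀ r : ℝ, ‖Complex.exp (Complex.I * Complex.ofReal r)‖ = 1 := by
    intro r
    rw [Complex.norm_exp]
    simp
  refine tendsto_integral_filter_of_dominated_convergence
      (fun x : ℝ => Real.exp (L / 2) * (‖ψ (x + (n:ℝ) * q₀)‖ * ‖f x‖)) ?_ ?_ ?_ ?_
  · -- measurability
    filter_upwards [hIoc] with ε hε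
    refine AEStronglyMeasurable.mul ?_ (Lp.aestronglyMeasurable f)
    refine Continuous.comp_aestronglyMeasurable continuous_star ?_
    exact (Continuous.aestronglyMeasurable (by fun_prop)).mul hψm
  · -- bound
    filter_upwards [hIoc] with ε hε
    filter_upwards [hsuppT] with x hx
    have hn1 : ‖(starRingEnd ℂ)
          (Complex.exp (Complex.I * Complex.ofReal ((a₀ + A / ε) * γ ε n m)) *
           Complex.exp (Complex.I * Complex.ofReal
             ((b₀ - A / ε) * β ε n m * Real.exp (-(ε * x)))) *
           Complex.ofReal (Real.exp (-(ε * (x + n * q₀) / 2))) *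
           ψ (x + n * q₀)) * f x‖
        = Real.exp (-(ε * (x + (n:ℝ) * q₀) / 2)) * (‖ψ (x + (n:ℝ) * q₀)‖ * ‖f x‖) := by
      simp only [norm_mul, RCLike.norm_conj, hnormexp, Complex.norm_real, Real.norm_eq_abs,
        Real.abs_exp, one_mul]
      ring
    rw [hn1]
    by_cases hz : ψ (x + (n:ℝ) * q₀) = 0
    · simp only [hz, norm_zero, zero_mul, mul_zero]
      exact le_refl 0
    · have hxL : |x + (n:ℝ) * q₀| ≤ L := not_lt.1 fun h => hz (hx h)
      have h1 : -(x + (n:ℝ) * q₀) ≤ L := (neg_le_abs _).trans hxL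
      have h2 : ε * -(x + (n:ℝ) * q₀) ≤ ε * L := mul_le_mul_of_nonneg_left h1 hε.1.le
      have h3 : ε * L ≤ 1 * L := mul_le_mul_of_nonneg_right hε.2 hL.le
      have hampb : Real.exp (-(ε * (x + (n:ℝ) * q₀) / 2)) ≤ Real.exp (L / 2) :=
        Real.exp_le_exp.mpr (by nlinarith)
      exact mul_le_mul_of_nonneg_right hampb (by positivity)
  · -- integrability of the bound
    have hfn : MemLp (fun x : ℝ => ‖f x‖) 2 volume := (Lp.memLp f).norm
    have hg : MemLp (fun x : ℝ => ‖ψ (x + (n:ℝ) * q₀)‖) 2 volume := hψ2.norm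
    have h1 : MemLp ((fun x : ℝ => ‖ψ (x + (n:ℝ) * q₀)‖) • fun x : ℝ => ‖f x‖) 1 volume :=
      hfn.smul hg (hpqr := ⟨by norm_num [ENNReal.inv_two_add_inv_two]⟩)
    have h2 := memLp_one_iff_integrable.mp h1
    have h3 : Integrable (fun x : ℝ => ‖ψ (x + (n:ℝ) * q₀)‖ * ‖f x‖) volume := by
      simpa [smul_eq_mul, Pi.mul_def] using h2
    exact h3.const_mul _
  · -- pointwise convergence
    refine Filter.Eventually.of_forall fun x => ?_
    have hph := phase_tendsto A B L q₀ p₀ a₀ b₀ hA hL hq₀ hp₀ hab hb β γ hβ hγ hγ₀ n m x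
    have hamp : Tendsto (fun ε : ℝ => Real.exp (-(ε * (x + (n:ℝ) * q₀) / 2)))
        (𝓝[>] (0:ℝ)) (𝓝 1) := by
      have hc : Continuous fun ε : ℝ => Real.exp (-(ε * (x + (n:ℝ) * q₀) / 2)) := by fun_prop
      have h' := (hc.tendsto 0).mono_left (nhdsWithin_le_nhds (s := Set.Ioi (0:ℝ)))
      simpa using h'
    have hre : Tendsto (fun ε : ℝ => (((a₀ + A / ε) * γ ε n m
          + (b₀ - A / ε) * β ε n m * Real.exp (-(ε * x)) : ℝ) : ℂ)) (𝓝[>] (0:ℝ))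
        (𝓝 ((A * m * n * q₀ * p₀ / 2 + B * m * p₀ + Real.pi * m * x / L : ℝ) : ℂ)) :=
      (Complex.continuous_ofReal.tendsto _).comp hph
    have hexp : Tendsto (fun ε : ℝ => Complex.exp (Complex.I * (((a₀ + A / ε) * γ ε n m
          + (b₀ - A / ε) * β ε n m * Real.exp (-(ε * x)) : ℝ) : ℂ))) (𝓝[>] (0:ℝ))
        (𝓝 (Complex.exp (Complex.I *
          ((A * m * n * q₀ * p₀ / 2 + B * m * p₀ + Real.pi * m * x / L : ℝ) : ℂ)))) :=
      ((Complex.continuous_exp.comp (continuous_const.mul continuous_id)).tendsto _).comp hre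
    have hampc : Tendsto (fun ε : ℝ => ((Real.exp (-(ε * (x + (n:ℝ) * q₀) / 2)) : ℝ) : ℂ))
        (𝓝[>] (0:ℝ)) (𝓝 (((1:ℝ) : ℂ))) := (Complex.continuous_ofReal.tendsto _).comp hamp
    have h2 := (((hexp.mul hampc).mul_const (ψ (x + (n:ℝ) * q₀))).star).mul_const (f x)
    have hval : star (Complex.exp (Complex.I *
          ((A * m * n * q₀ * p₀ / 2 + B * m * p₀ + Real.pi * m * x / L : ℝ) : ℂ)) *
          ((1:ℝ) : ℂ) * ψ (x + (n:ℝ) * q₀)) * f x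
        = (starRingEnd ℂ) (Complex.exp (Complex.I * Complex.ofReal (A * m * n * q₀ * p₀ / 2)) *
           Complex.exp (Complex.I * Complex.ofReal (B * m * p₀)) *
           Complex.exp (Complex.I * Complex.ofReal (Real.pi * m * x / L)) *
           ψ (x + n * q₀)) * f x := by
      rw [starRingEnd_apply, Complex.ofReal_add, Complex.ofReal_add, mul_add, mul_add,
        Complex.exp_add, Complex.exp_add, Complex.ofReal_one, mul_one]
    rw [← hval]
    refine h2.congr fun ε => ?_
    rw [starRingEnd_apply, Complex.ofReal_add, mul_add, Complex.exp_add]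
end

section
/- For every f ∈ L²(ℝ) and all integers N₁ ≤ N₂ and M₁ ≤ M₂, the truncated frame expansions contract: lim_{ε→0⁺} ∑_{n=N₁}^{N₂} ∑_{m=M₁}^{M₂} (ε/(2·χ·sinh(ε·L)))·⟨ψ^{ε}_{(n,m)}, f⟩·ψ^{ε}_{(n,m)} = ∑_{n=N₁}^{N₂} ∑_{m=M₁}^{M₂} (1/(2·χ·L))·⟨ψ^{A,B}_{(n,m)}, f⟩·ψ^{A,B}_{(n,m)}, the limit holding in the norm of L²(ℝ). -/
open MeasureTheory Filter Topology

section Helpers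

private lemma lim_slope' (c : ℝ) :
    Filter.Tendsto (fun ε : ℝ => (1 - Real.exp (-(ε * c))) / ε) (𝓝[>] 0) (𝓝 c) := by
  have h : HasDerivAt (fun ε : ℝ => 1 - Real.exp (-(ε * c))) c 0 := by
    have : HasDerivAt (fun ε : ℝ => -(ε * c)) (-c) 0 := by
      simpa using ((hasDerivAt_id (0:ℝ)).mul_const c).fun_neg
    simpa using (this.exp.const_sub 1)
  have h2 := hasDerivAt_iff_tendsto_slope.mp h
  refine (h2.mono_left (nhdsWithin_mono _ ?_)).congr ?_
  · intro x hx; exact ne_of_gt hx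
  · intro x
    simp [slope_def_field]

private lemma lim_sinh' (L : ℝ) :
    Filter.Tendsto (fun ε : ℝ => Real.sinh (ε * L) / ε) (𝓝[>] 0) (𝓝 L) := by
  have h : HasDerivAt (fun ε : ℝ => Real.sinh (ε * L)) L 0 := by
    have h1 : HasDerivAt (fun ε : ℝ => ε * L) L 0 := by
      simpa using (hasDerivAt_id (0:ℝ)).mul_const L
    simpa [Function.comp_def] using (Real.hasDerivAt_sinh (0 * L)).comp 0 h1
  have h2 := hasDerivAt_iff_tendsto_slope.mp h
  refine (h2.mono_left (nhdsWithin_mono _ ?_)).congr ?_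
  · intro x hx; exact ne_of_gt hx
  · intro x
    simp [slope_def_field]

private lemma lim_exp2' :
    Filter.Tendsto (fun t : ℝ => (Real.exp (-t) - 1 + t) / t ^ 2) (𝓝[≠] 0) (𝓝 (1 / 2)) := by
  rw [Metric.tendsto_nhdsWithin_nhds]
  intro δ hδ
  refine ⟨min 1 (δ * (9/2)), by positivity, fun {t} ht hlt => ?_⟩
  have ht0 : t ≠ 0 := ht
  have ht2 : (0:ℝ) < t^2 := by positivity
  have h1 : |t| ≤ 1 := by
    have := hlt.trans_le (min_le_left _ _); simpa [Real.dist_eq] using this.le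
  have h2 : |(-t)| ≤ 1 := by simpa using h1
  have hb := Real.exp_bound h2 (by norm_num : (0:ℕ) < 3)
  have hsum : (∑ i ∈ Finset.range 3, (-t) ^ i / (i.factorial : ℝ)) = 1 - t + t^2/2 := by
    simp [Finset.sum_range_succ]
    ring
  rw [hsum] at hb
  have hb2 : |Real.exp (-t) - (1 - t + t^2/2)| ≤ |t|^3 * (2/9) := by
    refine hb.trans (le_of_eq ?_)
    simp [Nat.factorial]
    norm_num
  rw [Real.dist_eq]
  have heq : (Real.exp (-t) - 1 + t) / t ^ 2 - 1/2
      = (Real.exp (-t) - (1 - t + t^2/2)) / t^2 := by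
    field_simp
    ring
  rw [heq, abs_div, abs_of_nonneg (sq_nonneg t)]
  have hlt2 : |t| < δ * (9/2) := by
    have := hlt.trans_le (min_le_right _ _); simpa [Real.dist_eq] using this
  have key : |Real.exp (-t) - (1 - t + t^2/2)| / t^2 ≤ |t| * (2/9) := by
    rw [div_le_iff₀ ht2]
    refine hb2.trans (le_of_eq ?_)
    rw [show |t|^3 = |t| * |t|^2 by ring, sq_abs]
    ring
  refine key.trans_lt ?_
  nlinarith [abs_nonneg t]

private lemma lim_expc' (c : ℝ) :
    Filter.Tendsto (fun ε : ℝ => Real.exp (-(ε * c))) (𝓝[>] 0) (𝓝 1) := by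
  have : Continuous (fun ε : ℝ => Real.exp (-(ε * c))) := by continuity
  have h := this.tendsto 0
  simpa using h.mono_left nhdsWithin_le_nhds

private lemma lim_invsinh' {L : ℝ} (hL : 0 < L) :
    Filter.Tendsto (fun ε : ℝ => ε / Real.sinh (ε * L)) (𝓝[>] 0) (𝓝 (1 / L)) := by
  have h := (lim_sinh' L).inv₀ (ne_of_gt hL)
  simpa [inv_div] using h

private lemma lim_G' {c : ℝ} (hc : c ≠ 0) :
    Filter.Tendsto (fun ε : ℝ => (Real.exp (-(ε * c)) - 1 + ε * c) / ε ^ 2) (𝓝[>] 0)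
      (𝓝 (c ^ 2 / 2)) := by
  have hmap : Filter.Tendsto (fun ε : ℝ => ε * c) (𝓝[>] 0) (𝓝[≠] 0) := by
    refine tendsto_nhdsWithin_of_tendsto_nhds_of_eventually_within _ ?_ ?_
    · have h0 : Filter.Tendsto (fun ε : ℝ => ε * c) (𝓝 0) (𝓝 (0 * c)) :=
        (continuous_id.mul continuous_const).tendsto 0
      simpa using h0.mono_left nhdsWithin_le_nhds
    · filter_upwards [self_mem_nhdsWithin] with ε (hε : 0 < ε)
      exact mul_ne_zero (ne_of_gt hε) hc
  have h := (lim_exp2'.comp hmap).const_mul (c ^ 2)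
  have h2 : Filter.Tendsto (fun ε : ℝ => (Real.exp (-(ε * c)) - 1 + ε * c) / ε ^ 2) (𝓝[>] 0)
      (𝓝 (c ^ 2 * (1 / 2))) := by
    refine h.congr' ?_
    filter_upwards [self_mem_nhdsWithin] with ε (hε : 0 < ε)
    have hε0 : ε ≠ 0 := ne_of_gt hε
    show c ^ 2 * ((Real.exp (-(ε * c)) - 1 + ε * c) / (ε * c) ^ 2)
        = (Real.exp (-(ε * c)) - 1 + ε * c) / ε ^ 2
    field_simp
  simpa [mul_comm, mul_one_div, div_eq_mul_inv] using h2

private lemma theta_lim_ne' (A a₀ b₀ L c x m : ℝ) (hA : A ≠ 0) (hL : 0 < L) (hc : c ≠ 0)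
    (hb : ∀ ε ∈ Set.Ioc (0:ℝ) 1, b₀ - A / ε ≠ 0) :
    Filter.Tendsto (fun ε : ℝ =>
      (a₀ + A / ε) * ((-Real.exp (-(ε * c)) * Real.pi * m / ((b₀ - A / ε) * Real.sinh (ε * L)))
          * (ε * c) / (1 - Real.exp (-(ε * c))))
      + (b₀ - A / ε) * (-Real.exp (-(ε * c)) * Real.pi * m / ((b₀ - A / ε) * Real.sinh (ε * L)))
          * Real.exp (-(ε * x)))
      (𝓝[>] 0) (𝓝 ((Real.pi * m / (A * L)) * ((a₀ + b₀) + A * c / 2 + A * x))) := by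
  set E : ℝ → ℝ := fun ε => (1 - Real.exp (-(ε * c))) / ε with hE
  set F : ℝ → ℝ := fun ε => (1 - Real.exp (-(ε * x))) / ε with hF
  set G : ℝ → ℝ := fun ε => (Real.exp (-(ε * c)) - 1 + ε * c) / ε ^ 2 with hG
  have hdenom : Filter.Tendsto (fun ε : ℝ => (ε * b₀ - A) * E ε) (𝓝[>] 0)
      (𝓝 ((0 * b₀ - A) * c)) := by
    refine Filter.Tendsto.mul ?_ (lim_slope' c)
    refine Filter.Tendsto.sub_const ?_ A
    exact ((tendsto_id.mul_const b₀).mono_left nhdsWithin_le_nhds)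
  have hnum : Filter.Tendsto
      (fun ε : ℝ => a₀ * c + b₀ * E ε * Real.exp (-(ε * x)) + A * (G ε + E ε * F ε))
      (𝓝[>] 0) (𝓝 (a₀ * c + b₀ * c * 1 + A * (c ^ 2 / 2 + c * x))) := by
    refine Filter.Tendsto.add (Filter.Tendsto.add tendsto_const_nhds
      (((lim_slope' c).const_mul b₀).mul (lim_expc' x))) ?_
    exact (Filter.Tendsto.add (lim_G' hc) ((lim_slope' c).mul (lim_slope' x))).const_mul A
  have hΦ : Filter.Tendsto (fun ε : ℝ =>
      (-(Real.pi * m) * Real.exp (-(ε * c))) * (ε / Real.sinh (ε * L)) *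
        ((a₀ * c + b₀ * E ε * Real.exp (-(ε * x)) + A * (G ε + E ε * F ε)) / ((ε * b₀ - A) * E ε)))
      (𝓝[>] 0)
      (𝓝 ((-(Real.pi * m) * 1) * (1 / L) *
        ((a₀ * c + b₀ * c * 1 + A * (c ^ 2 / 2 + c * x)) / ((0 * b₀ - A) * c)))) := by
    refine Filter.Tendsto.mul (Filter.Tendsto.mul ((lim_expc' c).const_mul _) (lim_invsinh' hL)) ?_
    refine hnum.div hdenom ?_
    rw [zero_mul, zero_sub]
    exact mul_ne_zero (neg_ne_zero.mpr hA) hc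
  have hval : (-(Real.pi * m) * 1) * (1 / L) *
        ((a₀ * c + b₀ * c * 1 + A * (c ^ 2 / 2 + c * x)) / ((0 * b₀ - A) * c))
      = (Real.pi * m / (A * L)) * ((a₀ + b₀) + A * c / 2 + A * x) := by
    rw [zero_mul, zero_sub]
    field_simp
    ring
  rw [← hval]
  refine hΦ.congr' ?_
  filter_upwards [Ioc_mem_nhdsGT_of_mem (by norm_num : (0:ℝ) ∈ Set.Ico (0:ℝ) 1)] with ε hε
  have hε0 : (0:ℝ) < ε := hε.1
  have hε0' : ε ≠ 0 := ne_of_gt hε0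
  have hs : Real.sinh (ε * L) ≠ 0 := ne_of_gt (Real.sinh_pos_iff.mpr (by positivity))
  have hbε : b₀ - A / ε ≠ 0 := hb ε hε
  have he1 : 1 - Real.exp (-(ε * c)) ≠ 0 := by
    intro h
    have h4 : Real.exp (-(ε * c)) = 1 := by linarith
    rw [Real.exp_eq_one_iff] at h4
    exact (mul_ne_zero hε0' hc) (by linarith)
  have hEne : E ε ≠ 0 := div_ne_zero he1 hε0'
  have hb2 : ε * b₀ - A ≠ 0 := by
    have h3 : ε * b₀ - A = ε * (b₀ - A / ε) := by field_simp
    rw [h3]; exact mul_ne_zero hε0' hbε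
  have hbre : b₀ - A / ε = (ε * b₀ - A) / ε := by field_simp
  simp only [hE, hF, hG, hbre]
  field_simp
  ring

private lemma theta_lim_zero' (A a₀ b₀ L x m : ℝ) (hA : A ≠ 0) (hL : 0 < L)
    (hb : ∀ ε ∈ Set.Ioc (0:ℝ) 1, b₀ - A / ε ≠ 0) :
    Filter.Tendsto (fun ε : ℝ =>
      (a₀ + A / ε) * (-(Real.pi * m) / ((b₀ - A / ε) * Real.sinh (ε * L)))
      + (b₀ - A / ε) * (-(Real.pi * m) / ((b₀ - A / ε) * Real.sinh (ε * L)))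
          * Real.exp (-(ε * x)))
      (𝓝[>] 0) (𝓝 ((Real.pi * m / (A * L)) * ((a₀ + b₀) + A * x))) := by
  have hF := lim_slope' x
  have hΦ : Filter.Tendsto (fun ε : ℝ =>
      (-(Real.pi * m)) * (ε / Real.sinh (ε * L)) *
        ((a₀ + b₀ * Real.exp (-(ε * x)) + A * ((1 - Real.exp (-(ε * x))) / ε)) / (ε * b₀ - A)))
      (𝓝[>] 0)
      (𝓝 ((-(Real.pi * m)) * (1 / L) * ((a₀ + b₀ * 1 + A * x) / (0 * b₀ - A)))) := by
    refine Filter.Tendsto.mul (tendsto_const_nhds.mul (lim_invsinh' hL)) ?_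
    refine Filter.Tendsto.div ?_ ?_ ?_
    · exact Filter.Tendsto.add (tendsto_const_nhds.add ((lim_expc' x).const_mul b₀))
        (hF.const_mul A)
    · exact Filter.Tendsto.sub_const ((tendsto_id.mul_const b₀).mono_left nhdsWithin_le_nhds) A
    · rw [zero_mul, zero_sub]; exact neg_ne_zero.mpr hA
  have hval : (-(Real.pi * m)) * (1 / L) * ((a₀ + b₀ * 1 + A * x) / (0 * b₀ - A))
      = (Real.pi * m / (A * L)) * ((a₀ + b₀) + A * x) := by
    rw [zero_mul, zero_sub]
    field_simp
  rw [← hval]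
  refine hΦ.congr' ?_
  filter_upwards [Ioc_mem_nhdsGT_of_mem (by norm_num : (0:ℝ) ∈ Set.Ico (0:ℝ) 1)] with ε hε
  have hε0 : (0:ℝ) < ε := hε.1
  have hε0' : ε ≠ 0 := ne_of_gt hε0
  have hs : Real.sinh (ε * L) ≠ 0 := ne_of_gt (Real.sinh_pos_iff.mpr (by positivity))
  have hbε : b₀ - A / ε ≠ 0 := hb ε hε
  have hb2 : ε * b₀ - A ≠ 0 := by
    have h3 : ε * b₀ - A = ε * (b₀ - A / ε) := by field_simp
    rw [h3]; exact mul_ne_zero hε0' hbε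
  have hbre : b₀ - A / ε = (ε * b₀ - A) / ε := by field_simp
  rw [hbre]
  field_simp
  ring

private lemma norm_sq_L2' (u : Lp ℂ 2 (volume : Measure ℝ)) :
    ‖u‖ ^ 2 = ∫ x : ℝ, ‖u x‖ ^ 2 := by
  have h1 : (‖u‖ : ℝ) ^ 2 = RCLike.re (inner ℂ u u : ℂ) := (inner_self_eq_norm_sq u).symm
  rw [h1, MeasureTheory.L2.inner_def]
  rw [← integral_re (MeasureTheory.L2.integrable_inner u u)]
  congr 1
  ext x
  exact inner_self_eq_norm_sq (u x)

private lemma tendsto_Lp_two' {ι : Type*} {l : Filter ι} [l.IsCountablyGenerated]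
    (g : ℝ → ℂ) (G : ι → ℝ → ℂ)
    (h : Lp ℂ 2 (volume : Measure ℝ)) (H : ι → Lp ℂ 2 (volume : Measure ℝ))
    (hg : ⇑h =ᵐ[volume] g) (hG : ∀ᶠ i in l, ⇑(H i) =ᵐ[volume] G i)
    (bound : ℝ → ℝ) (hbound : Integrable bound volume)
    (hb : ∀ᶠ i in l, ∀ᵐ x ∂(volume : Measure ℝ), ‖G i x - g x‖ ^ 2 ≤ bound x)
    (hlim : ∀ᵐ x ∂(volume : Measure ℝ), Filter.Tendsto (fun i => G i x) l (𝓝 (g x))) :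
    Filter.Tendsto H l (𝓝 h) := by
  have hgm : AEStronglyMeasurable g volume :=
    (aestronglyMeasurable_congr hg).mp (Lp.aestronglyMeasurable h)
  have hint : Filter.Tendsto (fun i => ∫ x, ‖G i x - g x‖ ^ 2) l (𝓝 (∫ _x : ℝ, (0:ℝ))) := by
    refine tendsto_integral_filter_of_dominated_convergence bound ?_ ?_ hbound ?_
    · filter_upwards [hG] with i hGi
      have hGm : AEStronglyMeasurable (G i) volume :=
        (aestronglyMeasurable_congr hGi).mp (Lp.aestronglyMeasurable (H i))
      exact ((hGm.sub hgm).norm.aemeasurable.pow_const 2).aestronglyMeasurable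
    · filter_upwards [hb] with i hbi
      filter_upwards [hbi] with x hx
      simpa [abs_of_nonneg (sq_nonneg ‖G i x - g x‖)] using hx
    · filter_upwards [hlim] with x hx
      have h2 : Filter.Tendsto (fun i => G i x - g x) l (𝓝 (g x - g x)) :=
        hx.sub (tendsto_const_nhds (x := g x))
      have h3 := (h2.norm).pow 2
      simpa using h3
  rw [integral_zero] at hint
  have hnorm2 : ∀ᶠ i in l, ‖H i - h‖ ^ 2 = ∫ x, ‖G i x - g x‖ ^ 2 := by
    filter_upwards [hG] with i hGi
    rw [norm_sq_L2']
    refine integral_congr_ae ?_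
    filter_upwards [Lp.coeFn_sub (H i) h, hGi, hg] with x h1 h2 h3
    rw [h1, Pi.sub_apply, h2, h3]
  have hsq : Filter.Tendsto (fun i => ‖H i - h‖ ^ 2) l (𝓝 0) :=
    hint.congr' (hnorm2.mono fun i hi => hi.symm)
  have hnrm : Filter.Tendsto (fun i => ‖H i - h‖) l (𝓝 0) := by
    have hs := (Real.continuous_sqrt.tendsto 0).comp hsq
    simp only [Function.comp_def, Real.sqrt_zero] at hs
    refine hs.congr fun i => ?_
    rw [Real.sqrt_sq (norm_nonneg _)]
  exact tendsto_iff_norm_sub_tendsto_zero.mpr hnrm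

end Helpers

theorem contraction_of_truncated_frame_expansions
    (A B L q₀ p₀ χ : ℝ)
    (hA : A ≠ 0) (hL : 0 < L) (hq₀ : q₀ ≠ 0) (hχ : 0 < χ)
    (hp₀ : p₀ = Real.pi / (A * L))
    (hq₀p₀ : |q₀ * p₀| < 2 * Real.pi)
    (ψ : Lp ℂ 2 (volume : Measure ℝ)) (hψ : ψ ≠ 0)
    (hsupp : ∀ᵐ x : ℝ ∂volume, L < |x| → ψ x = 0)
    (hχsum : ∀ᵐ x : ℝ ∂volume, ∑' n : ℤ, ‖ψ (x + n * q₀)‖ ^ 2 = χ)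
    (ψAB : ℤ → ℤ → Lp ℂ 2 (volume : Measure ℝ))
    (hψAB : ∀ n m : ℤ, ⇑(ψAB n m) =ᵐ[volume] fun x : ℝ =>
      Complex.exp (Complex.I * Complex.ofReal (A * m * n * q₀ * p₀ / 2)) *
      Complex.exp (Complex.I * Complex.ofReal (B * m * p₀)) *
      Complex.exp (Complex.I * Complex.ofReal (Real.pi * m * x / L)) *
      ψ (x + n * q₀))
    (a₀ b₀ : ℝ) (hab : a₀ + b₀ = B)
    (hb : ∀ ε ∈ Set.Ioc (0:ℝ) 1, b₀ - A / ε ≠ 0)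
    (β γ : ℝ → ℤ → ℤ → ℝ)
    (hβ : ∀ (ε : ℝ) (n m : ℤ), β ε n m =
      -Real.exp (-(ε * n * q₀)) * Real.pi * m / ((b₀ - A / ε) * Real.sinh (ε * L)))
    (hγ : ∀ (ε : ℝ) (n m : ℤ), n ≠ 0 → γ ε n m =
      β ε n m * (ε * n * q₀) / (1 - Real.exp (-(ε * n * q₀))))
    (hγ₀ : ∀ (ε : ℝ) (m : ℤ), γ ε 0 m = β ε 0 m)
    (ψe : ℝ → ℤ → ℤ → Lp ℂ 2 (volume : Measure ℝ))
    (hψe : ∀ ε ∈ Set.Ioc (0:ℝ) 1, ∀ n m : ℤ, ⇑(ψe ε n m) =ᵐ[volume] fun x : ℝ =>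
      Complex.exp (Complex.I * Complex.ofReal ((a₀ + A / ε) * γ ε n m)) *
      Complex.exp (Complex.I * Complex.ofReal ((b₀ - A / ε) * β ε n m * Real.exp (-(ε * x)))) *
      Complex.ofReal (Real.exp (-(ε * (x + n * q₀) / 2))) *
      ψ (x + n * q₀))
    (f : Lp ℂ 2 (volume : Measure ℝ)) (N₁ N₂ M₁ M₂ : ℤ) (hN : N₁ ≤ N₂) (hM : M₁ ≤ M₂) :
    Filter.Tendsto (fun ε : ℝ =>
        ∑ n ∈ Finset.Icc N₁ N₂, ∑ m ∈ Finset.Icc M₁ M₂,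
          (Complex.ofReal (ε / (2 * χ * Real.sinh (ε * L)))) •
            ((inner ℂ (ψe ε n m) f : ℂ) • ψe ε n m))
      (𝓝[>] (0:ℝ))
      (𝓝 (∑ n ∈ Finset.Icc N₁ N₂, ∑ m ∈ Finset.Icc M₁ M₂,
          (Complex.ofReal (1 / (2 * χ * L))) •
            ((inner ℂ (ψAB n m) f : ℂ) • ψAB n m))) := by
  have hL' : L ≠ 0 := ne_of_gt hL
  have hχ' : χ ≠ 0 := ne_of_gt hχ
  -- the scalar limit
  have hscal : Filter.Tendsto (fun ε : ℝ => (Complex.ofReal (ε / (2 * χ * Real.sinh (ε * L)))))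
      (𝓝[>] (0:ℝ)) (𝓝 (Complex.ofReal (1 / (2 * χ * L)))) := by
    have h2 := (lim_invsinh' hL).mul_const (1 / (2 * χ))
    have h1 : Filter.Tendsto (fun ε : ℝ => ε / (2 * χ * Real.sinh (ε * L))) (𝓝[>] (0:ℝ))
        (𝓝 (1 / (2 * χ * L))) := by
      have hval : (1 : ℝ) / L * (1 / (2 * χ)) = 1 / (2 * χ * L) := by
        rw [div_mul_div_comm, one_mul, mul_comm L (2 * χ)]
      rw [← hval]
      refine h2.congr fun ε => ?_
      rw [div_mul_div_comm, mul_one, mul_comm (Real.sinh (ε * L)) (2 * χ)]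
    exact (Complex.continuous_ofReal.tendsto _).comp h1
  -- the Lp convergence for each pair (n, m)
  have key : ∀ n m : ℤ, Filter.Tendsto (fun ε => ψe ε n m) (𝓝[>] (0:ℝ)) (𝓝 (ψAB n m)) := by
    intro n m
    -- the phase limit
    have hθ : ∀ x : ℝ, Filter.Tendsto
        (fun ε : ℝ => (a₀ + A / ε) * γ ε n m + (b₀ - A / ε) * β ε n m * Real.exp (-(ε * x)))
        (𝓝[>] (0:ℝ))
        (𝓝 (A * (m:ℝ) * (n:ℝ) * q₀ * p₀ / 2 + B * (m:ℝ) * p₀ + Real.pi * (m:ℝ) * x / L)) := by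
      intro x
      have hval : A * (m:ℝ) * (n:ℝ) * q₀ * p₀ / 2 + B * (m:ℝ) * p₀ + Real.pi * (m:ℝ) * x / L
          = (Real.pi * (m:ℝ) / (A * L)) * ((a₀ + b₀) + A * ((n:ℝ) * q₀) / 2 + A * x) := by
        rw [hab, hp₀]
        field_simp
        ring
      rw [hval]
      rcases eq_or_ne n 0 with rfl | hn
      · have h0 := theta_lim_zero' A a₀ b₀ L x (m:ℝ) hA hL hb
        have hv2 : (Real.pi * (m:ℝ) / (A * L)) * ((a₀ + b₀) + A * (((0:ℤ):ℝ) * q₀) / 2 + A * x)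
            = (Real.pi * (m:ℝ) / (A * L)) * ((a₀ + b₀) + A * x) := by
          push_cast; ring
        rw [hv2]
        refine h0.congr fun ε => ?_
        rw [hγ₀ ε m, hβ ε 0 m]
        norm_num
      · have hc : ((n:ℝ)) * q₀ ≠ 0 := mul_ne_zero (Int.cast_ne_zero.mpr hn) hq₀
        have h1 := theta_lim_ne' A a₀ b₀ L ((n:ℝ) * q₀) x (m:ℝ) hA hL hc hb
        refine h1.congr fun ε => ?_
        rw [hγ ε n m hn, hβ ε n m]
        ring_nf
    -- pointwise convergence of the representatives
    have hpt : ∀ x : ℝ, Filter.Tendsto (fun ε : ℝ =>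
        Complex.exp (Complex.I * Complex.ofReal ((a₀ + A / ε) * γ ε n m)) *
        Complex.exp (Complex.I *
          Complex.ofReal ((b₀ - A / ε) * β ε n m * Real.exp (-(ε * x)))) *
        Complex.ofReal (Real.exp (-(ε * (x + n * q₀) / 2))) * ψ (x + n * q₀))
        (𝓝[>] (0:ℝ)) (𝓝 (
        Complex.exp (Complex.I * Complex.ofReal (A * m * n * q₀ * p₀ / 2)) *
        Complex.exp (Complex.I * Complex.ofReal (B * m * p₀)) *
        Complex.exp (Complex.I * Complex.ofReal (Real.pi * m * x / L)) *
        ψ (x + n * q₀))) := by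
      intro x
      set θlim : ℝ := A * (m:ℝ) * (n:ℝ) * q₀ * p₀ / 2 + B * (m:ℝ) * p₀ + Real.pi * (m:ℝ) * x / L
        with hθlim
      have hexp : Filter.Tendsto (fun ε : ℝ => Complex.exp (Complex.I *
          Complex.ofReal ((a₀ + A / ε) * γ ε n m
            + (b₀ - A / ε) * β ε n m * Real.exp (-(ε * x)))))
          (𝓝[>] (0:ℝ)) (𝓝 (Complex.exp (Complex.I * Complex.ofReal θlim))) := by
        refine (Complex.continuous_exp.tendsto _).comp ?_
        exact tendsto_const_nhds.mul ((Complex.continuous_ofReal.tendsto _).comp (hθ x))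
      have hamp : Filter.Tendsto
          (fun ε : ℝ => (Complex.ofReal (Real.exp (-(ε * (x + n * q₀) / 2)))))
          (𝓝[>] (0:ℝ)) (𝓝 1) := by
        have hcont : Continuous (fun ε : ℝ => Real.exp (-(ε * (x + n * q₀) / 2))) :=
          Real.continuous_exp.comp (((continuous_id.mul continuous_const).div_const 2).neg)
        have h5 : Filter.Tendsto (fun ε : ℝ => Real.exp (-(ε * (x + n * q₀) / 2)))
            (𝓝[>] (0:ℝ)) (𝓝 1) := by
          have h7 := (hcont.tendsto 0).mono_left (nhdsWithin_le_nhds (s := Set.Ioi (0:ℝ)))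
          simpa using h7
        have h6 := (Complex.continuous_ofReal.tendsto 1).comp h5
        rw [Complex.ofReal_one] at h6
        exact h6
      have hmul := (hexp.mul hamp).mul_const (ψ (x + n * q₀))
      have hfun : ∀ ε : ℝ,
          Complex.exp (Complex.I * Complex.ofReal ((a₀ + A / ε) * γ ε n m
            + (b₀ - A / ε) * β ε n m * Real.exp (-(ε * x)))) *
          Complex.ofReal (Real.exp (-(ε * (x + n * q₀) / 2))) * ψ (x + n * q₀)
          = Complex.exp (Complex.I * Complex.ofReal ((a₀ + A / ε) * γ ε n m)) *
            Complex.exp (Complex.I *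
              Complex.ofReal ((b₀ - A / ε) * β ε n m * Real.exp (-(ε * x)))) *
            Complex.ofReal (Real.exp (-(ε * (x + n * q₀) / 2))) * ψ (x + n * q₀) := by
        intro ε
        rw [Complex.ofReal_add, mul_add, Complex.exp_add]
      have hlimval : Complex.exp (Complex.I * Complex.ofReal θlim) * 1 * ψ (x + n * q₀)
          = Complex.exp (Complex.I * Complex.ofReal (A * m * n * q₀ * p₀ / 2)) *
            Complex.exp (Complex.I * Complex.ofReal (B * m * p₀)) *
            Complex.exp (Complex.I * Complex.ofReal (Real.pi * m * x / L)) *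
            ψ (x + n * q₀) := by
        rw [mul_one, hθlim, Complex.ofReal_add, Complex.ofReal_add, mul_add, mul_add,
          Complex.exp_add, Complex.exp_add]
      rw [← hlimval]
      exact (hmul.congr fun ε => hfun ε)
    -- domination
    have hsupp' : ∀ᵐ x : ℝ ∂volume, (L < |x + (n:ℝ) * q₀| → ψ (x + (n:ℝ) * q₀) = 0) :=
      (measurePreserving_add_right volume ((n:ℝ) * q₀)).quasiMeasurePreserving.ae hsupp
    have hintb : Integrable (fun x : ℝ =>
        (Real.exp (L / 2) + 1) ^ 2 * ‖ψ (x + (n:ℝ) * q₀)‖ ^ 2) volume := by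
      have h3 := (Lp.memLp ψ).integrable_norm_rpow two_ne_zero ENNReal.ofNat_ne_top
      have h2 : Integrable (fun x : ℝ => ‖ψ x‖ ^ 2) volume := by
        refine h3.congr (Filter.Eventually.of_forall fun x => ?_)
        have h22 : (ENNReal.toReal 2) = ((2:ℕ):ℝ) := by norm_num
        simp only [h22, Real.rpow_natCast]
      exact (h2.comp_add_right ((n:ℝ) * q₀)).const_mul _
    refine tendsto_Lp_two' _ _ (ψAB n m) (fun ε => ψe ε n m) (hψAB n m) ?_ _ hintb ?_
      (Filter.Eventually.of_forall hpt)
    · filter_upwards [Ioc_mem_nhdsGT_of_mem (by norm_num : (0:ℝ) ∈ Set.Ico (0:ℝ) 1)] with ε hε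
      exact hψe ε hε n m
    · filter_upwards [Ioc_mem_nhdsGT_of_mem (by norm_num : (0:ℝ) ∈ Set.Ico (0:ℝ) 1)] with ε hε
      filter_upwards [hsupp'] with x hx
      have hexp1 : ∀ r : ℝ, ‖Complex.exp (Complex.I * Complex.ofReal r)‖ = 1 := by
        intro r
        rw [mul_comm]
        exact Complex.norm_exp_ofReal_mul_I r
      by_cases hcase : L < |x + (n:ℝ) * q₀|
      · rw [hx hcase]
        simp
      · push_neg at hcase
        have hbd1 : Real.exp (-(ε * (x + (n:ℝ) * q₀) / 2)) ≤ Real.exp (L / 2) := by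
          refine Real.exp_le_exp.mpr ?_
          have h7 : -(x + (n:ℝ) * q₀) ≤ L := (neg_le_abs _).trans hcase
          have h8 : (0:ℝ) < ε := hε.1
          have h9 : ε ≤ 1 := hε.2
          nlinarith [abs_nonneg (x + (n:ℝ) * q₀), neg_abs_le (x + (n:ℝ) * q₀)]
        have hG : ‖Complex.exp (Complex.I * Complex.ofReal ((a₀ + A / ε) * γ ε n m)) *
            Complex.exp (Complex.I *
              Complex.ofReal ((b₀ - A / ε) * β ε n m * Real.exp (-(ε * x)))) *
            Complex.ofReal (Real.exp (-(ε * (x + (n:ℝ) * q₀) / 2))) * ψ (x + (n:ℝ) * q₀)‖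
            ≤ Real.exp (L / 2) * ‖ψ (x + (n:ℝ) * q₀)‖ := by
          rw [norm_mul, norm_mul, norm_mul, hexp1, hexp1, one_mul, one_mul,
            Complex.norm_real, Real.norm_eq_abs,
            abs_of_nonneg (Real.exp_nonneg _)]
          exact mul_le_mul_of_nonneg_right hbd1 (norm_nonneg _)
        have hg : ‖Complex.exp (Complex.I * Complex.ofReal (A * m * n * q₀ * p₀ / 2)) *
            Complex.exp (Complex.I * Complex.ofReal (B * m * p₀)) *
            Complex.exp (Complex.I * Complex.ofReal (Real.pi * m * x / L)) *
            ψ (x + (n:ℝ) * q₀)‖ = ‖ψ (x + (n:ℝ) * q₀)‖ := by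
          rw [norm_mul, norm_mul, norm_mul, hexp1, hexp1, hexp1]
          ring
        have hdiff : ‖(Complex.exp (Complex.I * Complex.ofReal ((a₀ + A / ε) * γ ε n m)) *
            Complex.exp (Complex.I *
              Complex.ofReal ((b₀ - A / ε) * β ε n m * Real.exp (-(ε * x)))) *
            Complex.ofReal (Real.exp (-(ε * (x + (n:ℝ) * q₀) / 2))) * ψ (x + (n:ℝ) * q₀))
            - (Complex.exp (Complex.I * Complex.ofReal (A * m * n * q₀ * p₀ / 2)) *
            Complex.exp (Complex.I * Complex.ofReal (B * m * p₀)) *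
            Complex.exp (Complex.I * Complex.ofReal (Real.pi * m * x / L)) *
            ψ (x + (n:ℝ) * q₀))‖ ≤ (Real.exp (L / 2) + 1) * ‖ψ (x + (n:ℝ) * q₀)‖ := by
          refine (norm_sub_le _ _).trans ?_
          rw [hg]
          nlinarith [norm_nonneg (ψ (x + (n:ℝ) * q₀))]
        calc ‖_ - _‖ ^ 2 ≤ ((Real.exp (L / 2) + 1) * ‖ψ (x + (n:ℝ) * q₀)‖) ^ 2 := by
              exact pow_le_pow_left₀ (norm_nonneg _) hdiff 2
          _ = (Real.exp (L / 2) + 1) ^ 2 * ‖ψ (x + (n:ℝ) * q₀)‖ ^ 2 := by ring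
  -- assembling
  refine tendsto_finset_sum _ fun n _ => tendsto_finset_sum _ fun m _ => ?_
  exact hscal.smul (((key n m).inner tendsto_const_nhds).smul (key n m))
end

section
/- The maps P_ε realize a contraction of the extended affine group to the Heisenberg group: for all g, h ∈ ℝ³, lim_{ε→0⁺} P_ε⁻¹(P_ε(g) ∘ P_ε(h)) = g ∘₀ h, the limit taken componentwise in ℝ³. -/
open MeasureTheory Filter Topology

/-- The Heisenberg group product on `ℝ³`. -/
noncomputable def mulH (g h : ℝ × ℝ × ℝ) : ℝ × ℝ × ℝ :=
  (g.1 + h.1, g.2.1 + h.2.1 + g.1 * h.2.2, g.2.2 + h.2.2)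

/-- The extended affine group product (on the chart `ℝ³ ⊇ (0,∞) × ℝ × ℝ`). -/
noncomputable def mulEA (g h : ℝ × ℝ × ℝ) : ℝ × ℝ × ℝ :=
  (g.1 * h.1, g.1 * h.2.1 + g.2.1, g.2.2 + h.2.2)

/-- The contraction maps `P_ε : H → EA`. -/
noncomputable def Pmap (ε : ℝ) (g : ℝ × ℝ × ℝ) : ℝ × ℝ × ℝ :=
  if g.1 = 0 then (1, g.2.2, g.2.2 + ε * g.2.1)
  else (Real.exp (-(ε * g.1)), g.2.2 * (Real.exp (-(ε * g.1)) - 1) / (-(ε * g.1)),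
    g.2.2 + ε * (g.2.1 - g.1 * g.2.2 / 2))

/-- The inverse maps `P_ε⁻¹ : EA → H`. -/
noncomputable def Pinv (ε : ℝ) (g : ℝ × ℝ × ℝ) : ℝ × ℝ × ℝ :=
  if g.1 = 1 then (0, (g.2.2 - g.2.1) / ε, g.2.1)
  else (-(Real.log g.1) / ε,
    (g.2.2 - g.2.1 * Real.log g.1 / (g.1 - 1) - g.2.1 * (Real.log g.1) ^ 2 / (2 * (g.1 - 1))) / ε,
    g.2.1 * Real.log g.1 / (g.1 - 1))

noncomputable def phi (t : ℝ) : ℝ := if t = 0 then 1 else (Real.exp (-t) - 1) / (-t)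
noncomputable def del (t : ℝ) : ℝ := if t = 0 then 1/2 else (t - 1 + Real.exp (-t)) / t^2
noncomputable def kap (t : ℝ) : ℝ := (1/2 - del t) / phi t

lemma phi_pos (t : ℝ) : 0 < phi t := by
  unfold phi
  split_ifs with h
  · norm_num
  · rcases lt_or_gt_of_ne h with h1 | h1
    · apply div_pos
      · have : (1:ℝ) < Real.exp (-t) := by
          rw [show (1:ℝ) = Real.exp 0 by simp]
          exact Real.exp_lt_exp.mpr (by linarith)
        linarith
      · linarith
    · apply div_pos_of_neg_of_neg
      · have : Real.exp (-t) < 1 := Real.exp_lt_one_iff.mpr (by linarith)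
        linarith
      · linarith

lemma phi_ne (t : ℝ) : phi t ≠ 0 := (phi_pos t).ne'

lemma mul_phi (t : ℝ) : t * phi t = 1 - Real.exp (-t) := by
  unfold phi
  split_ifs with h
  · simp [h]
  · have h' : -t ≠ 0 := neg_ne_zero.mpr h
    field_simp
    ring

lemma mul_del (t : ℝ) : t * del t = 1 - phi t := by
  unfold del phi
  split_ifs with h
  · simp [h]
  · have h' : -t ≠ 0 := neg_ne_zero.mpr h
    field_simp
    ring

lemma phi_near {t : ℝ} (ht : |t| ≤ 1) : |phi t - 1| ≤ 3/4 * |t| := by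
  unfold phi
  split_ifs with h
  · simp
  · have h2 : |(-t)| ≤ 1 := by rwa [abs_neg]
    have hb := Real.exp_bound h2 (n := 2) (by norm_num)
    have hb2 : |Real.exp (-t) - (1 + -t)| ≤ 3/4 * t^2 := by
      have e1 : ∑ m ∈ Finset.range 2, (-t) ^ m / (m.factorial : ℝ) = 1 + -t := by
        simp [Finset.sum_range_succ]
      rw [e1] at hb
      calc |Real.exp (-t) - (1 + -t)| ≤ |(-t)|^2 * ((2+1 : ℕ) / ((2:ℕ).factorial * (2:ℕ))) := hb
        _ = 3/4 * t^2 := by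
            rw [abs_neg, sq_abs]
            norm_num
            ring
    have key : (Real.exp (-t) - 1) / (-t) - 1 = (Real.exp (-t) - (1 + -t)) / (-t) := by
      rw [div_sub' (neg_ne_zero.mpr h)]
      ring_nf
    rw [key, abs_div, abs_neg, div_le_iff₀ (by positivity)]
    calc |Real.exp (-t) - (1 + -t)| ≤ 3/4 * t^2 := hb2
      _ = 3/4 * |t| * |t| := by rw [← sq_abs]; ring
lemma del_near {t : ℝ} (ht : |t| ≤ 1) : |del t - 1/2| ≤ 2/9 * |t| := by
  unfold del
  split_ifs with h
  · simp
  · have h2 : |(-t)| ≤ 1 := by rwa [abs_neg]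
    have hb := Real.exp_bound h2 (n := 3) (by norm_num)
    have hb2 : |Real.exp (-t) - (1 + -t + t^2/2)| ≤ 2/9 * |t|^3 := by
      have e1 : ∑ m ∈ Finset.range 3, (-t) ^ m / (m.factorial : ℝ) = 1 + -t + t^2/2 := by
        simp [Finset.sum_range_succ]
      rw [e1] at hb
      calc |Real.exp (-t) - (1 + -t + t^2/2)|
          ≤ |(-t)|^3 * ((3+1 : ℕ) / ((3:ℕ).factorial * (3:ℕ))) := hb
        _ = 2/9 * |t|^3 := by
            rw [abs_neg]
            norm_num [Nat.factorial]
            ring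
    have key : (t - 1 + Real.exp (-t)) / t^2 - 1/2
        = (Real.exp (-t) - (1 + -t + t^2/2)) / t^2 := by
      have h2' : t^2 ≠ 0 := pow_ne_zero 2 h
      field_simp
      ring
    rw [key, abs_div, abs_pow, sq_abs, div_le_iff₀ (by positivity)]
    calc |Real.exp (-t) - (1 + -t + t^2/2)| ≤ 2/9 * |t|^3 := hb2
      _ = 2/9 * |t| * t^2 := by rw [show |t|^3 = |t| * |t|^2 by ring, sq_abs]; ring

lemma tendsto_phi : Filter.Tendsto phi (nhds 0) (nhds 1) := by
  rw [← tendsto_sub_nhds_zero_iff]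
  apply squeeze_zero_norm' (a := fun t : ℝ => 3/4 * |t|)
  · filter_upwards [Metric.ball_mem_nhds (0:ℝ) one_pos] with t ht
    rw [Metric.mem_ball, Real.dist_eq, sub_zero] at ht
    exact phi_near ht.le
  · have : Filter.Tendsto (fun t : ℝ => |t|) (nhds 0) (nhds 0) := by
      simpa using (continuous_abs.tendsto (0:ℝ))
    simpa using this.const_mul (3/4 : ℝ)

lemma tendsto_del : Filter.Tendsto del (nhds 0) (nhds (1/2)) := by
  rw [← tendsto_sub_nhds_zero_iff]
  apply squeeze_zero_norm' (a := fun t : ℝ => 2/9 * |t|)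
  · filter_upwards [Metric.ball_mem_nhds (0:ℝ) one_pos] with t ht
    rw [Metric.mem_ball, Real.dist_eq, sub_zero] at ht
    exact del_near ht.le
  · have : Filter.Tendsto (fun t : ℝ => |t|) (nhds 0) (nhds 0) := by
      simpa using (continuous_abs.tendsto (0:ℝ))
    simpa using this.const_mul (2/9 : ℝ)

lemma tendsto_kap : Filter.Tendsto kap (nhds 0) (nhds 0) := by
  unfold kap
  have h := (Filter.Tendsto.div ((tendsto_const_nhds (x := (1:ℝ)/2)).sub tendsto_del)
    tendsto_phi one_ne_zero)
  have h2 : ((1:ℝ)/2 - 1/2) / 1 = 0 := by norm_num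
  rw [h2] at h
  exact h
lemma phi_zero : phi 0 = 1 := by simp [phi]
lemma del_zero : del 0 = 1/2 := by simp [del]
lemma kap_zero : kap 0 = 0 := by simp [kap, del_zero, phi_zero]

lemma pmap_eq {ε : ℝ} (hε : ε ≠ 0) (g : ℝ × ℝ × ℝ) :
    Pmap ε g = (Real.exp (-(ε * g.1)), g.2.2 * phi (ε * g.1),
      g.2.2 + ε * (g.2.1 - g.1 * g.2.2 / 2)) := by
  unfold Pmap phi
  rcases eq_or_ne g.1 0 with h | h
  · simp [h]
  · have h2 : ε * g.1 ≠ 0 := mul_ne_zero hε h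
    rw [if_neg h, if_neg h2]
    simp [mul_div_assoc]
lemma key_eq {ε : ℝ} (hε : 0 < ε) (x y z x' y' z' : ℝ) :
    Pinv ε (mulEA (Pmap ε (x, y, z)) (Pmap ε (x', y', z'))) =
    (x + x',
     (y + y' - x * z / 2 - x' * z' / 2)
       + z' * (x * phi (ε * x) + Real.exp (-(ε * x)) * (x' * del (ε * x')))
       + z * (x * del (ε * x))
       + (Real.exp (-(ε * x)) * (z' * phi (ε * x')) + z * phi (ε * x))
           * ((x + x') * kap (ε * (x + x'))),
     (Real.exp (-(ε * x)) * (z' * phi (ε * x')) + z * phi (ε * x)) / phi (ε * (x + x'))) := by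
  have hε' : ε ≠ 0 := hε.ne'
  have p1 := mul_phi (ε * x)
  have d1 := mul_del (ε * x)
  have d2 := mul_del (ε * x')
  have eP1 : phi (ε * x) = 1 - ε * x * del (ε * x) := by linear_combination d1
  have eP2 : phi (ε * x') = 1 - ε * x' * del (ε * x') := by linear_combination d2
  have eE1 : Real.exp (-(ε * x)) = 1 - ε * x * (1 - ε * x * del (ε * x)) := by
    linear_combination p1 - ε * x * d1
  rw [pmap_eq hε', pmap_eq hε']
  simp only [mulEA]
  have hE : Real.exp (-(ε * x)) * Real.exp (-(ε * x')) = Real.exp (-(ε * (x + x'))) := by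
    rw [← Real.exp_add]; ring_nf
  unfold Pinv
  simp only [hE]
  rcases eq_or_ne (x + x') 0 with h0 | h0
  · rw [h0]
    simp only [mul_zero, neg_zero, Real.exp_zero, if_pos, phi_zero, kap_zero, mul_zero,
      zero_mul, add_zero, div_one, Prod.mk.injEq]
    refine ⟨trivial, ?_, trivial⟩
    rw [div_eq_iff hε', eE1, eP1, eP2]
    ring
  · have hu : ε * (x + x') ≠ 0 := mul_ne_zero hε' h0
    have hA : Real.exp (-(ε * (x + x'))) ≠ 1 := by
      intro hcon
      have := congrArg Real.log hcon
      rw [Real.log_exp, Real.log_one] at this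
      exact hu (by linarith)
    have hP := phi_ne (ε * (x + x'))
    have d3 := mul_del (ε * (x + x'))
    have eP3 : phi (ε * (x + x')) = 1 - ε * (x + x') * del (ε * (x + x')) := by
      linear_combination d3
    have hP' : 1 - ε * (x + x') * del (ε * (x + x')) ≠ 0 := eP3 ▸ hP
    have hA1 : Real.exp (-(ε * (x + x'))) - 1 = -(ε * (x + x') * phi (ε * (x + x'))) := by
      linear_combination mul_phi (ε * (x + x'))
    rw [if_neg hA, Real.log_exp, hA1]
    simp only [Prod.mk.injEq]
    refine ⟨by field_simp, ?_, ?_⟩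
    · rw [div_eq_iff hε']
      unfold kap
      rw [eE1, eP1, eP2, eP3]
      field_simp
      ring
    · rw [eE1, eP1, eP2, eP3]
      field_simp
theorem contraction_of_extended_affine_to_heisenberg (g h : ℝ × ℝ × ℝ) :
    Filter.Tendsto (fun ε : ℝ => Pinv ε (mulEA (Pmap ε g) (Pmap ε h)))
      (𝓝[>] (0:ℝ)) (𝓝 (mulH g h)) := by
  obtain ⟨x, y, z⟩ := g
  obtain ⟨x', y', z'⟩ := h
  set l := 𝓝[>] (0:ℝ) with hl
  have hcong : ∀ ε ∈ Set.Ioi (0:ℝ),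
      (x + x',
       (y + y' - x * z / 2 - x' * z' / 2)
         + z' * (x * phi (ε * x) + Real.exp (-(ε * x)) * (x' * del (ε * x')))
         + z * (x * del (ε * x))
         + (Real.exp (-(ε * x)) * (z' * phi (ε * x')) + z * phi (ε * x))
             * ((x + x') * kap (ε * (x + x'))),
       (Real.exp (-(ε * x)) * (z' * phi (ε * x')) + z * phi (ε * x)) / phi (ε * (x + x')))
      = Pinv ε (mulEA (Pmap ε (x, y, z)) (Pmap ε (x', y', z'))) :=
    fun ε hε => (key_eq hε x y z x' y' z').symm
  apply Filter.Tendsto.congr' (Filter.eventuallyEq_of_mem self_mem_nhdsWithin hcong)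
  have h0 : Filter.Tendsto (fun ε : ℝ => ε) l (𝓝 0) :=
    tendsto_id.mono_left nhdsWithin_le_nhds
  have m : ∀ a : ℝ, Filter.Tendsto (fun ε : ℝ => ε * a) l (𝓝 0) := fun a => by
    simpa using h0.mul_const a
  have hphi : ∀ a : ℝ, Filter.Tendsto (fun ε : ℝ => phi (ε * a)) l (𝓝 1) :=
    fun a => tendsto_phi.comp (m a)
  have hdel : ∀ a : ℝ, Filter.Tendsto (fun ε : ℝ => del (ε * a)) l (𝓝 (1/2)) :=
    fun a => tendsto_del.comp (m a)
  have hkap : ∀ a : ℝ, Filter.Tendsto (fun ε : ℝ => kap (ε * a)) l (𝓝 0) :=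
    fun a => tendsto_kap.comp (m a)
  have hexp : ∀ a : ℝ, Filter.Tendsto (fun ε : ℝ => Real.exp (-(ε * a))) l (𝓝 1) := fun a => by
    have hm : Filter.Tendsto (fun ε : ℝ => -(ε * a)) l (𝓝 0) := by simpa using (m a).neg
    simpa [Function.comp_def] using (Real.continuous_exp.tendsto 0).comp hm
  have H1 : Filter.Tendsto (fun _ : ℝ => x + x') l (𝓝 (x + x')) := tendsto_const_nhds
  have HB : Filter.Tendsto
      (fun ε : ℝ => Real.exp (-(ε * x)) * (z' * phi (ε * x')) + z * phi (ε * x)) l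
      (𝓝 (1 * (z' * 1) + z * 1)) :=
    ((hexp x).mul (tendsto_const_nhds.mul (hphi x'))).add (tendsto_const_nhds.mul (hphi x))
  have H2 : Filter.Tendsto
      (fun ε : ℝ =>
        (y + y' - x * z / 2 - x' * z' / 2)
         + z' * (x * phi (ε * x) + Real.exp (-(ε * x)) * (x' * del (ε * x')))
         + z * (x * del (ε * x))
         + (Real.exp (-(ε * x)) * (z' * phi (ε * x')) + z * phi (ε * x))
             * ((x + x') * kap (ε * (x + x')))) l
      (𝓝 ((y + y' - x * z / 2 - x' * z' / 2)
         + z' * (x * 1 + 1 * (x' * (1/2))) + z * (x * (1/2))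
         + (1 * (z' * 1) + z * 1) * ((x + x') * 0))) := by
    refine Filter.Tendsto.add (Filter.Tendsto.add (Filter.Tendsto.add tendsto_const_nhds ?_) ?_) ?_
    · exact tendsto_const_nhds.mul ((tendsto_const_nhds.mul (hphi x)).add
        ((hexp x).mul (tendsto_const_nhds.mul (hdel x'))))
    · exact tendsto_const_nhds.mul (tendsto_const_nhds.mul (hdel x))
    · exact HB.mul (tendsto_const_nhds.mul (hkap (x + x')))
  have H3 : Filter.Tendsto
      (fun ε : ℝ =>
        (Real.exp (-(ε * x)) * (z' * phi (ε * x')) + z * phi (ε * x)) / phi (ε * (x + x'))) l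
      (𝓝 ((1 * (z' * 1) + z * 1) / 1)) := HB.div (hphi (x + x')) one_ne_zero
  have hfin := H1.prodMk_nhds (H2.prodMk_nhds H3)
  have hval : mulH (x, y, z) (x', y', z')
      = (x + x',
         (y + y' - x * z / 2 - x' * z' / 2)
           + z' * (x * 1 + 1 * (x' * (1/2))) + z * (x * (1/2))
           + (1 * (z' * 1) + z * 1) * ((x + x') * 0),
         (1 * (z' * 1) + z * 1) / 1) := by
    simp only [mulH, Prod.mk.injEq]
    refine ⟨trivial, by ring, by ring⟩
  rw [hval]
  exact hfin
end

section
/- (Pointwise contraction of representations.) For every function f : ℝ → ℂ, every x ∈ ℝ and every (c, v₁, v₂) ∈ ℝ³, lim_{ε→0⁺} exp(i·a(ε)·(v₂ + ε·(v₁ − c·v₂/2)))·exp(i·b(ε)·v₂·D_ε(c)·exp(−ε·x))·f(c + x) = exp(i·(B·v₂ + A·(v₁ + v₂·x)))·f(c + x). -/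
open MeasureTheory Filter Topology

lemma tendsto_exp_sub_one_div :
    Filter.Tendsto (fun t : ℝ => (Real.exp t - 1) / t) (𝓝[≠] (0:ℝ)) (𝓝 1) := by
  have h := (Real.hasDerivAt_exp 0)
  rw [hasDerivAt_iff_tendsto_slope] at h
  simpa [slope_fun_def, Real.exp_zero, div_eq_inv_mul] using h

lemma tendsto_quad :
    Filter.Tendsto (fun t : ℝ => (Real.exp t - 1 - t) / t ^ 2) (𝓝[≠] (0:ℝ)) (𝓝 (1/2)) := by
  apply HasDerivAt.lhopital_zero_nhdsNE (f' := fun t => Real.exp t - 1) (g' := fun t => 2 * t)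
  · filter_upwards with t
    simpa using ((Real.hasDerivAt_exp t).sub_const 1).fun_sub (hasDerivAt_id' t)
  · filter_upwards with t
    simpa using hasDerivAt_pow 2 t
  · filter_upwards [self_mem_nhdsWithin] with t (ht : t ≠ 0)
    simpa using ht
  · have : Filter.Tendsto (fun t : ℝ => Real.exp t - 1 - t) (𝓝 (0:ℝ)) (𝓝 0) := by
      have := (Real.continuous_exp.tendsto 0).sub_const 1
      simpa using this.sub (tendsto_id (α := ℝ))
    exact this.mono_left nhdsWithin_le_nhds
  · have : Filter.Tendsto (fun t : ℝ => t ^ 2) (𝓝 (0:ℝ)) (𝓝 0) := by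
      simpa using (continuous_pow 2).tendsto (0:ℝ)
    exact this.mono_left nhdsWithin_le_nhds
  · have h2 : Filter.Tendsto (fun t : ℝ => (Real.exp t - 1) / t * (1/2)) (𝓝[≠] (0:ℝ))
        (𝓝 (1/2)) := by
      simpa using tendsto_exp_sub_one_div.mul_const (1/2 : ℝ)
    refine h2.congr' ?_
    filter_upwards [self_mem_nhdsWithin] with t (ht : t ≠ 0)
    rw [div_mul_div_comm, mul_one, mul_comm t 2]

/-- `D_ε(c) = (exp(−εc) − 1)/(−εc)` for `c ≠ 0`, `D_ε(0) = 1`. -/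
noncomputable def Dfun (ε c : ℝ) : ℝ :=
  if c = 0 then 1 else (Real.exp (-(ε * c)) - 1) / (-(ε * c))

lemma tendsto_neg_mul_ne (c : ℝ) (hc : c ≠ 0) :
    Filter.Tendsto (fun ε : ℝ => -(ε * c)) (𝓝[>] (0:ℝ)) (𝓝[≠] (0:ℝ)) := by
  rw [tendsto_nhdsWithin_iff]
  constructor
  · have : Filter.Tendsto (fun ε : ℝ => -(ε * c)) (𝓝 (0:ℝ)) (𝓝 (-(0 * c))) :=
      (Filter.tendsto_id.mul_const c).neg
    simpa using this.mono_left nhdsWithin_le_nhds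
  · filter_upwards [self_mem_nhdsWithin] with ε (hε : 0 < ε)
    simp [Set.mem_compl_iff, hε.ne', hc]

lemma tendsto_Dfun (c : ℝ) :
    Filter.Tendsto (fun ε : ℝ => Dfun ε c) (𝓝[>] (0:ℝ)) (𝓝 1) := by
  by_cases hc : c = 0
  · simp [Dfun, hc]
  · have := tendsto_exp_sub_one_div.comp (tendsto_neg_mul_ne c hc)
    refine this.congr fun ε => ?_
    simp [Dfun, hc, Function.comp]

lemma tendsto_one_sub_Dfun_div (c : ℝ) :
    Filter.Tendsto (fun ε : ℝ => (1 - Dfun ε c) / ε) (𝓝[>] (0:ℝ)) (𝓝 (c/2)) := by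
  by_cases hc : c = 0
  · simpa [Dfun, hc] using tendsto_const_nhds (α := ℝ) (f := 𝓝[>] (0:ℝ)) (a := (0:ℝ))
  · have h := (tendsto_quad.comp (tendsto_neg_mul_ne c hc)).const_mul c
    have h2 : c * (1/2) = c/2 := by ring
    rw [h2] at h
    refine h.congr' ?_
    filter_upwards [self_mem_nhdsWithin] with ε (hε : 0 < ε)
    simp only [Function.comp, Dfun, hc, if_false]
    field_simp
    ring

lemma tendsto_one_sub_exp_div (x : ℝ) :
    Filter.Tendsto (fun ε : ℝ => (1 - Real.exp (-(ε * x))) / ε) (𝓝[>] (0:ℝ)) (𝓝 x) := by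
  have hd : HasDerivAt (fun ε : ℝ => Real.exp (-(ε * x))) (-x) 0 := by
    have h1 : HasDerivAt (fun ε : ℝ => -(ε * x)) (-x) 0 := by
      simpa using ((hasDerivAt_id (0:ℝ)).mul_const x).fun_neg
    simpa using h1.exp
  rw [hasDerivAt_iff_tendsto_slope] at hd
  have h := (hd.mono_left (nhdsWithin_mono _ (fun ε (hε : ε ∈ Set.Ioi 0) =>
    (ne_of_gt hε : ε ≠ 0)))).neg
  rw [neg_neg] at h
  refine h.congr' ?_
  filter_upwards [self_mem_nhdsWithin] with ε (hε : 0 < ε)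
  simp [slope_fun_def, div_eq_inv_mul]
  ring

theorem pointwise_contraction_of_representations
    (A B a₀ b₀ : ℝ) (hA : A ≠ 0) (hab : a₀ + b₀ = B)
    (f : ℝ → ℂ) (x c v₁ v₂ : ℝ) :
    Filter.Tendsto (fun ε : ℝ =>
        Complex.exp (Complex.I * Complex.ofReal ((a₀ + A / ε) * (v₂ + ε * (v₁ - c * v₂ / 2)))) *
        Complex.exp (Complex.I * Complex.ofReal ((b₀ - A / ε) * v₂ * Dfun ε c * Real.exp (-(ε * x)))) *
        f (c + x))
      (𝓝[>] (0:ℝ))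
      (𝓝 (Complex.exp (Complex.I * Complex.ofReal (B * v₂ + A * (v₁ + v₂ * x))) * f (c + x))) := by
  set u : ℝ := v₁ - c * v₂ / 2 with hu
  -- the combined real exponent
  set g : ℝ → ℝ := fun ε =>
    (a₀ + A / ε) * (v₂ + ε * u) + (b₀ - A / ε) * v₂ * Dfun ε c * Real.exp (-(ε * x)) with hg
  have hid : Filter.Tendsto (fun ε : ℝ => ε) (𝓝[>] (0:ℝ)) (𝓝 0) :=
    Filter.tendsto_id.mono_right nhdsWithin_le_nhds
  have hexp : Filter.Tendsto (fun ε : ℝ => Real.exp (-(ε * x))) (𝓝[>] (0:ℝ)) (𝓝 1) := by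
    have : Filter.Tendsto (fun ε : ℝ => Real.exp (-(ε * x))) (𝓝 (0:ℝ)) (𝓝 (Real.exp (-(0*x)))) :=
      (Real.continuous_exp.comp ((continuous_id.mul continuous_const).neg)).tendsto 0
    simpa using this.mono_left nhdsWithin_le_nhds
  -- limit of the decomposed exponent
  have hdec : Filter.Tendsto (fun ε : ℝ =>
      a₀ * (v₂ + ε * u) + A * u + b₀ * v₂ * Dfun ε c * Real.exp (-(ε * x)) +
        A * v₂ * ((1 - Real.exp (-(ε * x))) / ε +
          Real.exp (-(ε * x)) * ((1 - Dfun ε c) / ε)))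
      (𝓝[>] (0:ℝ))
      (𝓝 (a₀ * (v₂ + 0 * u) + A * u + b₀ * v₂ * 1 * 1 + A * v₂ * (x + 1 * (c / 2)))) := by
    refine (((Filter.Tendsto.add ?_ tendsto_const_nhds).add ?_).add ?_)
    · exact (tendsto_const_nhds.add (hid.mul_const u)).const_mul a₀
    · exact ((tendsto_const_nhds.mul (tendsto_Dfun c)).mul hexp)
    · exact (((tendsto_one_sub_exp_div x).add
        (hexp.mul (tendsto_one_sub_Dfun_div c)))).const_mul (A * v₂)
  have hgL : Filter.Tendsto g (𝓝[>] (0:ℝ)) (𝓝 (B * v₂ + A * (v₁ + v₂ * x))) := by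
    have heq : a₀ * (v₂ + 0 * u) + A * u + b₀ * v₂ * 1 * 1 + A * v₂ * (x + 1 * (c / 2))
        = B * v₂ + A * (v₁ + v₂ * x) := by
      rw [hu]; linear_combination v₂ * hab
    rw [heq] at hdec
    refine hdec.congr' ?_
    filter_upwards [self_mem_nhdsWithin] with ε (hε : 0 < ε)
    rw [hg]
    field_simp
    ring
  -- pass to the complex exponential
  have hcont : Continuous fun r : ℝ => Complex.exp (Complex.I * (r : ℂ)) :=
    Complex.continuous_exp.comp (continuous_const.mul Complex.continuous_ofReal)
  have hfin := ((hcont.tendsto _).comp hgL).mul_const (f (c + x))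
  refine hfin.congr fun ε => ?_
  simp only [Function.comp, hg]
  rw [← Complex.exp_add]
  push_cast
  ring_nf
end
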